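/- arXiv:2204.11342 — 4 statements merged into one kernel-verified Lean document; each statement's English description precedes it below -/
import Mathlib

section
/- Let γ ∈ ℝ, let p ∈ [1,∞], and take the specific forcing term f(x,t) := (1+t)^{-γ} 𝟙_{B_1(0)}(x). Then for every ν > 0 there exist c > 0 and T ≥ 2 such that for all t ≥ T the mild solution u satisfies: ‖u(·,t)‖_{L^p({x : |x| ≥ ν t^θ})} ≥ c t^{-σ(p)+1-γ} if γ < 1; ≥ c t^{-σ(p)} log t if γ = 1; and ≥ c t^{-σ(p)} if γ > 1. (This shows the decay rates of the exterior-region upper estimates are sharp.) -/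
open MeasureTheory Real Set Pointwise
open scoped ENNReal

noncomputable section

/-- Euclidean space ℝ^N. -/
abbrev Euc (N : ℕ) : Type := EuclideanSpace ℝ (Fin N)

/-- The self-similarity exponent θ := α/(2β). -/
def thetaV (α β : ℝ) : ℝ := α / (2 * β)

/-- σ* := 1 - α + Nθ. -/
def sigmaStar (N : ℕ) (α β : ℝ) : ℝ := 1 - α + (N : ℝ) * thetaV α β

/-- σ(p) := σ* - Nθ/p (with σ(∞) = σ*, since (∞ : ℝ≥0∞).toReal = 0 and x/0 = 0). -/
def sigmaP (N : ℕ) (α β : ℝ) (p : ℝ≥0∞) : ℝ :=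
  sigmaStar N α β - (N : ℝ) * thetaV α β / p.toReal

/-- p ∈ [1,∞] is subcritical: p arbitrary if N < 2β, p < ∞ if N = 2β,
and p < p_c := N/(N-2β) if N > 2β. -/
def Subcritical (N : ℕ) (β : ℝ) (p : ℝ≥0∞) : Prop :=
  ((N : ℝ) < 2 * β) ∨ ((N : ℝ) = 2 * β ∧ p ≠ ∞) ∨
    (2 * β < (N : ℝ) ∧ p < ENNReal.ofReal ((N : ℝ) / ((N : ℝ) - 2 * β)))

/-- The kernel Y(x,t) := t^{-σ*} G(x t^{-θ}). -/
def kernelY (N : ℕ) (α β : ℝ) (G : Euc N → ℝ) (x : Euc N) (t : ℝ) : ℝ :=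
  t ^ (-(sigmaStar N α β)) * G ((t ^ (-(thetaV α β))) • x)

/-- The mild solution given by Duhamel's formula:
u(x,t) = ∫₀^t ∫_{ℝ^N} Y(x-y,t-s) f(y,s) dy ds. -/
def mildSol (N : ℕ) (α β : ℝ) (G : Euc N → ℝ) (f : Euc N → ℝ → ℝ) (x : Euc N) (t : ℝ) : ℝ :=
  ∫ s in Ioo (0 : ℝ) t, ∫ y, kernelY N α β G (x - y) (t - s) * f y s

set_option maxHeartbeats 1000000 in
theorem exterior_lower_optimal
    (N : ℕ) (hN : 1 ≤ N) (α β : ℝ) (hα0 : 0 < α) (hα1 : α < 1)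
    (hβ0 : 0 < β) (hβ1 : β ≤ 1) (hNβ : (N : ℝ) ≤ 4 * β)
    (G : Euc N → ℝ) (C₁ : ℝ) (hC₁ : 0 < C₁)
    (hGcont : ContinuousOn G {(0 : Euc N)}ᶜ)
    (hGpos : ∀ ξ : Euc N, ξ ≠ 0 → 0 < G ξ)
    (hGin₁ : (N : ℝ) < 4 * β → ∀ ξ : Euc N, ξ ≠ 0 → ‖ξ‖ ≤ 1 → G ξ ≤ C₁)
    (hGin₂ : (N : ℝ) = 4 * β → ∀ ξ : Euc N, ξ ≠ 0 → ‖ξ‖ ≤ 1 →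
      G ξ ≤ C₁ * (1 + |Real.log ‖ξ‖|))
    (hGout : ∀ ξ : Euc N, 1 ≤ ‖ξ‖ → G ξ ≤ C₁ * ‖ξ‖ ^ (-((N : ℝ) + 2 * β)))
    (c₁ : ℝ) (hc₁ : 0 < c₁)
    (hGlow₁ : (N : ℝ) < 4 * β → ∀ ξ : Euc N, ξ ≠ 0 → ‖ξ‖ ≤ 1 → c₁ ≤ G ξ)
    (hGlow₂ : (N : ℝ) = 4 * β → ∀ ξ : Euc N, ξ ≠ 0 → ‖ξ‖ ≤ 1 →
      c₁ * (1 + |Real.log ‖ξ‖|) ≤ G ξ)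
    (γ : ℝ)
    (p : ℝ≥0∞) (hp1 : 1 ≤ p) :
    ∀ ν : ℝ, 0 < ν → ∃ c T : ℝ, 0 < c ∧ 2 ≤ T ∧ ∀ t : ℝ, T ≤ t →
      (γ < 1 → ENNReal.ofReal (c * t ^ (-sigmaP N α β p + 1 - γ)) ≤ eLpNorm (fun x => mildSol N α β G (fun (y : Euc N) (s : ℝ) => Set.indicator (Metric.ball (0 : Euc N) 1) (fun _ => (1 + s) ^ (-γ)) y) x t) p
          (volume.restrict {x : Euc N | ν * t ^ thetaV α β ≤ ‖x‖})) ∧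
      (γ = 1 → ENNReal.ofReal (c * t ^ (-sigmaP N α β p) * Real.log t) ≤ eLpNorm (fun x => mildSol N α β G (fun (y : Euc N) (s : ℝ) => Set.indicator (Metric.ball (0 : Euc N) 1) (fun _ => (1 + s) ^ (-γ)) y) x t) p
          (volume.restrict {x : Euc N | ν * t ^ thetaV α β ≤ ‖x‖})) ∧
      (1 < γ → ENNReal.ofReal (c * t ^ (-sigmaP N α β p)) ≤ eLpNorm (fun x => mildSol N α β G (fun (y : Euc N) (s : ℝ) => Set.indicator (Metric.ball (0 : Euc N) 1) (fun _ => (1 + s) ^ (-γ)) y) x t) p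
          (volume.restrict {x : Euc N | ν * t ^ thetaV α β ≤ ‖x‖})) := by
  intro ν hν
  -- basic exponent facts
  set θ : ℝ := thetaV α β with hθdef
  have hN1 : (1:ℝ) ≤ (N:ℝ) := by exact_mod_cast hN
  have h2β : (0:ℝ) < 2*β := by linarith
  have h4β : (1:ℝ) ≤ 4*β := le_trans hN1 hNβ
  have hθ0 : 0 < θ := div_pos hα0 h2β
  have hθ2 : θ < 2 := by
    rw [hθdef, thetaV, div_lt_iff₀ h2β]; linarith
  have h2βθ : 2*β*θ = α := by
    rw [hθdef, thetaV]; field_simp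
  set σ : ℝ := sigmaStar N α β with hσdef
  have hσeq : σ = 1 - α + (N:ℝ)*θ := by rw [hσdef, sigmaStar, hθdef]
  have hσ0 : 0 < σ := by
    rw [hσeq]; nlinarith [mul_pos (lt_of_lt_of_le zero_lt_one hN1) hθ0]
  have hσα : -σ + θ*((N:ℝ)+2*β) = 2*α - 1 := by rw [hσeq]; nlinarith [h2βθ]
  -- the index `0 : Fin N`
  have i0 : Fin N := ⟨0, hN⟩
  haveI hnt : Nontrivial (Euc N) := by
    refine ⟨EuclideanSpace.single i0 (1:ℝ), 0, fun h => ?_⟩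
    have := congrArg norm h
    rw [EuclideanSpace.norm_single, norm_zero] at this
    norm_num at this
  -- compact annulus and minimum of G
  set R : ℝ := 12*(ν+1) with hRdef
  set K : Set (Euc N) := Metric.closedBall 0 R \ Metric.ball 0 (ν/2) with hKdef
  have hKnorm : ∀ ξ ∈ K, ν/2 ≤ ‖ξ‖ ∧ ‖ξ‖ ≤ R := by
    rintro ξ ⟨h1, h2⟩
    rw [Metric.mem_closedBall, dist_zero_right] at h1
    rw [Metric.mem_ball, dist_zero_right, not_lt] at h2
    exact ⟨h2, h1⟩
  have hKsub : K ⊆ {(0 : Euc N)}ᶜ := by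
    intro ξ hξ
    have := (hKnorm ξ hξ).1
    simp only [mem_compl_iff, mem_singleton_iff]
    intro h; rw [h, norm_zero] at this; linarith
  have hKne : K.Nonempty := by
    refine ⟨EuclideanSpace.single i0 ν, ?_, ?_⟩
    · rw [Metric.mem_closedBall, dist_zero_right, EuclideanSpace.norm_single,
        Real.norm_eq_abs, abs_of_pos hν]
      rw [hRdef]; linarith
    · rw [Metric.mem_ball, dist_zero_right, EuclideanSpace.norm_single,
        Real.norm_eq_abs, abs_of_pos hν]
      intro h; linarith
  have hKcp : IsCompact K := (isCompact_closedBall _ _).diff Metric.isOpen_ball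
  obtain ⟨ξ₀, hξ₀K, hξ₀min'⟩ := hKcp.exists_isMinOn hKne (hGcont.mono hKsub)
  have hξ₀min := isMinOn_iff.mp hξ₀min'
  set m : ℝ := G ξ₀ with hmdef
  have hm0 : 0 < m := hGpos _ (hKsub hξ₀K)
  -- volume of unit ball
  set VB : ℝ≥0∞ := volume (Metric.ball (0 : Euc N) 1) with hVBdef
  have hVB0 : 0 < VB := Metric.measure_ball_pos _ _ one_pos
  have hVBtop : VB < ⊤ := measure_ball_lt_top
  set volB : ℝ := VB.toReal with hvolBdef
  have hvolB : 0 < volB := ENNReal.toReal_pos hVB0.ne' hVBtop.ne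
  -- exponents and constants
  set e : ℝ := 1 / p.toReal with hedef
  have he0 : 0 ≤ e := by positivity
  set c₂ : ℝ := (ν/2)^N * volB with hc₂def
  have hc₂0 : 0 < c₂ := by positivity
  set cγa : ℝ := min ((4:ℝ)^γ) 1 with hcγadef
  have hcγa0 : 0 < cγa := lt_min (Real.rpow_pos_of_pos (by norm_num) _) one_pos
  set c₀ : ℝ := m * volB * c₂ ^ e with hc₀def
  have hc₀0 : 0 < c₀ := by
    have := Real.rpow_pos_of_pos hc₂0 e; positivity
  set c : ℝ := c₀ * min (cγa/4) (min (1/2) ((2:ℝ)^(-γ))) with hcdef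
  have hc0 : 0 < c := by
    have h2γ : (0:ℝ) < (2:ℝ)^(-γ) := Real.rpow_pos_of_pos (by norm_num) _
    have : 0 < min (cγa/4) (min (1/2) ((2:ℝ)^(-γ))) :=
      lt_min (by linarith) (lt_min (by norm_num) h2γ)
    positivity
  refine ⟨c, max 4 ((2/ν) ^ θ⁻¹), hc0, le_trans (by norm_num) (le_max_left _ _), ?_⟩
  intro t ht
  have ht4 : (4:ℝ) ≤ t := le_trans (le_max_left _ _) ht
  have ht0 : (0:ℝ) < t := by linarith
  have ht1 : (1:ℝ) ≤ t := by linarith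
  set ρ : ℝ := t ^ θ with hρdef
  have hρ0 : 0 < ρ := Real.rpow_pos_of_pos ht0 _
  have hρ1 : 1 ≤ ρ := Real.one_le_rpow ht1 hθ0.le
  have hρν : 1 ≤ (ν/2) * ρ := by
    have h2ν : (0:ℝ) < 2/ν := by positivity
    have h1 : 2/ν ≤ ρ := by
      calc 2/ν = ((2/ν) ^ θ⁻¹) ^ θ := by
            rw [← Real.rpow_mul h2ν.le, inv_mul_cancel₀ hθ0.ne', Real.rpow_one]
          _ ≤ ρ := by
            exact Real.rpow_le_rpow (Real.rpow_nonneg h2ν.le _)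
              (le_trans (le_max_right _ _) ht) hθ0.le
    calc (1:ℝ) = (ν/2) * (2/ν) := by field_simp
      _ ≤ (ν/2) * ρ := by
        apply mul_le_mul_of_nonneg_left h1 (by positivity)

  -- the annulus A and exterior set facts
  set A : Set (Euc N) := Metric.closedBall 0 (2*ν*ρ) \ Metric.ball 0 (ν*ρ) with hAdef
  have hAm : MeasurableSet A := measurableSet_closedBall.diff measurableSet_ball
  have hAnorm : ∀ x ∈ A, ν*ρ ≤ ‖x‖ ∧ ‖x‖ ≤ 2*ν*ρ := by
    rintro x ⟨h1, h2⟩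
    rw [Metric.mem_closedBall, dist_zero_right] at h1
    rw [Metric.mem_ball, dist_zero_right, not_lt] at h2
    exact ⟨h2, h1⟩
  -- lower bound for volume of A
  set xc : Euc N := EuclideanSpace.single i0 ((3/2)*ν*ρ) with hxcdef
  have hxcnorm : ‖xc‖ = (3/2)*ν*ρ := by
    rw [hxcdef, EuclideanSpace.norm_single, Real.norm_eq_abs, abs_of_pos (by positivity)]
  have hball : Metric.ball xc ((ν/2)*ρ) ⊆ A := by
    intro z hz
    rw [Metric.mem_ball] at hz
    have hd : ‖z - xc‖ < (ν/2)*ρ := by rwa [← dist_eq_norm]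
    have habs : |‖z‖ - ‖xc‖| ≤ ‖z - xc‖ := abs_norm_sub_norm_le z xc
    rw [abs_le, hxcnorm] at habs
    constructor
    · rw [Metric.mem_closedBall, dist_zero_right]
      linarith [habs.2, hd]
    · rw [Metric.mem_ball, dist_zero_right, not_lt]
      linarith [habs.1, hd]
  have hAvol : ENNReal.ofReal (((ν/2)*ρ)^N * volB) ≤ volume A := by
    have h1 : ENNReal.ofReal (((ν/2)*ρ)^N * volB)
        = volume (Metric.ball xc ((ν/2)*ρ)) := by
      rw [Measure.addHaar_ball_of_pos volume xc (by positivity : (0:ℝ) < (ν/2)*ρ),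
        finrank_euclideanSpace_fin, ENNReal.ofReal_mul (by positivity), hvolBdef,
        ENNReal.ofReal_toReal hVBtop.ne]
    rw [h1]
    exact measure_mono hball
  -- the time integral
  set It : ℝ := ∫ s in Ioo (0:ℝ) (t/2), (1+s)^(-γ) with hItdef
  have hIt_integrable : IntegrableOn (fun s : ℝ => (1+s)^(-γ)) (Ioo 0 (t/2)) volume := by
    apply ((ContinuousOn.rpow_const ?_ ?_).integrableOn_Icc).mono_set Ioo_subset_Icc_self
    · exact (continuous_const.add continuous_id').continuousOn
    · rintro s ⟨hs0, _⟩
      exact Or.inl (by intro h; linarith)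
  have hIt0 : 0 ≤ It := by
    apply setIntegral_nonneg measurableSet_Ioo
    rintro s ⟨hs0, _⟩
    exact (Real.rpow_pos_of_pos (by linarith) _).le
  set L₀ : ℝ := m * volB * t^(-σ) with hL₀def
  have hL₀0 : 0 < L₀ := by
    have := Real.rpow_pos_of_pos ht0 (-σ); positivity
  have hL0 : 0 ≤ L₀ * It := mul_nonneg hL₀0.le hIt0
  -- the key pointwise lower bound
  have hkey : ∀ x ∈ A, L₀ * It ≤ mildSol N α β G
      (fun (y : Euc N) (s : ℝ) =>
        Set.indicator (Metric.ball (0 : Euc N) 1) (fun _ => (1 + s) ^ (-γ)) y) x t := by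
    intro x hx
    obtain ⟨hx1, hx2⟩ := hAnorm x hx
    have hνρ2 : ν*ρ = 2*((ν/2)*ρ) := by ring
    have hνρ0 : (0:ℝ) ≤ ν*ρ := by positivity
    -- distance estimates
    have hxylb : ∀ y : Euc N, y ∈ Metric.ball (0:Euc N) 1 → (ν/2)*ρ ≤ ‖x - y‖ := by
      intro y hy
      rw [Metric.mem_ball, dist_zero_right] at hy
      have h1 : ‖x‖ - ‖y‖ ≤ ‖x - y‖ := norm_sub_norm_le x y
      linarith [hρν]
    have hxyub : ∀ y : Euc N, y ∈ Metric.ball (0:Euc N) 1 → ‖x - y‖ ≤ 3*(ν+1)*ρ := by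
      intro y hy
      rw [Metric.mem_ball, dist_zero_right] at hy
      have h1 : ‖x - y‖ ≤ ‖x‖ + ‖y‖ := norm_sub_le x y
      linarith [hρ1, hνρ0]
    have hxy0 : ∀ y : Euc N, y ∈ Metric.ball (0:Euc N) 1 → x - y ≠ 0 := by
      intro y hy h
      have h1 := hxylb y hy
      rw [h, norm_zero] at h1
      linarith [hρν]
    -- the product-space integrand
    set F : ℝ × Euc N → ℝ := fun q => kernelY N α β G (x - q.2) (t - q.1) *
      Set.indicator (Metric.ball (0 : Euc N) 1) (fun _ => (1 + q.1) ^ (-γ)) q.2 with hFdef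
    set μI : Measure ℝ := volume.restrict (Ioo (0:ℝ) t) with hμIdef
    set μt : Measure (ℝ × Euc N) := μI.prod volume with hμtdef
    have hker : ∀ (s : ℝ) (y : Euc N), kernelY N α β G (x - y) (t - s)
        = (t - s)^(-σ) * G (((t - s)^(-θ)) • (x - y)) := by
      intro s y
      simp only [kernelY, hσdef, hθdef]
    have hsing : (volume : Measure (Euc N)) {x} = 0 := measure_singleton x
    have haeI : ∀ᵐ q ∂μt, q.1 ∈ Ioo (0:ℝ) t := by
      rw [MeasureTheory.ae_iff]
      have hset : {q : ℝ × Euc N | ¬ q.1 ∈ Ioo (0:ℝ) t}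
          = (Ioo (0:ℝ) t)ᶜ ×ˢ (univ : Set (Euc N)) := by
        ext q; simp [Set.mem_prod]
      rw [hset, hμtdef, Measure.prod_prod, hμIdef,
        Measure.restrict_apply measurableSet_Ioo.compl, compl_inter_self,
        measure_empty, zero_mul]
    have haeX : ∀ᵐ q ∂μt, q.2 ≠ x := by
      rw [MeasureTheory.ae_iff]
      have hset : {q : ℝ × Euc N | ¬ q.2 ≠ x}
          = (univ : Set ℝ) ×ˢ ({x} : Set (Euc N)) := by
        ext q
        simp only [mem_setOf_eq, not_not, Set.mem_prod, mem_univ,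
          mem_singleton_iff, true_and]
      rw [hset, hμtdef, Measure.prod_prod, hsing, mul_zero]
    -- measurability of F
    set Φ : ℝ × Euc N → ℝ := fun q =>
      ((t - q.1) ^ (-σ) * G (((t - q.1) ^ (-θ)) • (x - q.2))) * (1 + q.1) ^ (-γ) with hΦdef
    have hFeq : F = fun q => Φ q *
        Set.indicator (Metric.ball (0:Euc N) 1) (fun _ => (1:ℝ)) q.2 := by
      funext q
      by_cases hy : q.2 ∈ Metric.ball (0:Euc N) 1
      · rw [hFdef, hΦdef]
        simp only [Set.indicator_of_mem hy, hker]
        ring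
      · rw [hFdef, hΦdef]
        simp only [Set.indicator_of_notMem hy, mul_zero]
    set U : Set (ℝ × Euc N) :=
      (Prod.fst ⁻¹' (Ioo (0:ℝ) t)) ∩ (Prod.snd ⁻¹' ({x}ᶜ)) with hUdef
    have hUm : MeasurableSet U :=
      (measurableSet_Ioo.preimage measurable_fst).inter
        ((measurableSet_singleton x).compl.preimage measurable_snd)
    have hc1 : ContinuousOn (fun q : ℝ × Euc N => (t - q.1) ^ (-σ)) U := by
      apply ContinuousOn.rpow_const (continuous_const.sub continuous_fst).continuousOn
      rintro ⟨s, y⟩ ⟨hs, _⟩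
      exact Or.inl (show (0:ℝ) < t - s by exact sub_pos.mpr hs.2).ne'
    have hc2 : ContinuousOn (fun q : ℝ × Euc N => (1 + q.1) ^ (-γ)) U := by
      apply ContinuousOn.rpow_const (continuous_const.add continuous_fst).continuousOn
      rintro ⟨s, y⟩ ⟨hs, _⟩
      exact Or.inl (show (0:ℝ) < 1 + s by linarith [hs.1]).ne'
    have hc3 : ContinuousOn (fun q : ℝ × Euc N =>
        G (((t - q.1) ^ (-θ)) • (x - q.2))) U := by
      apply hGcont.comp
      · apply ContinuousOn.fun_smul
        · apply ContinuousOn.rpow_const (continuous_const.sub continuous_fst).continuousOn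
          rintro ⟨s, y⟩ ⟨hs, _⟩
          exact Or.inl (show (0:ℝ) < t - s by exact sub_pos.mpr hs.2).ne'
        · exact (continuous_const.sub continuous_snd).continuousOn
      · rintro ⟨s, y⟩ ⟨hs, hy⟩
        simp only [mem_compl_iff, mem_singleton_iff]
        apply smul_ne_zero
        · exact (Real.rpow_pos_of_pos (sub_pos.mpr hs.2) _).ne'
        · exact sub_ne_zero.mpr (Ne.symm hy)
    have hΦcont : ContinuousOn Φ U := (hc1.mul hc3).mul hc2
    have hUae : ∀ᵐ q ∂μt, q ∈ U := by
      filter_upwards [haeI, haeX] with q h1 h2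
      exact ⟨h1, h2⟩
    have hΦm : AEStronglyMeasurable Φ μt := by
      have h := hΦcont.aestronglyMeasurable hUm (μ := μt)
      rwa [Measure.restrict_eq_self_of_ae_mem hUae] at h
    have hindmble : Measurable
        (Set.indicator (Metric.ball (0:Euc N) 1) (fun _ => (1:ℝ))) :=
      measurable_const.indicator measurableSet_ball
    have hFm : AEStronglyMeasurable F μt := by
      rw [hFeq]
      exact hΦm.mul ((hindmble.comp measurable_snd).aestronglyMeasurable)
    -- uniform bound for F
    set B₂ : ℝ := 1 + θ * Real.log t with hB₂def
    have hB₂0 : 0 ≤ B₂ := by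
      have h1 := Real.log_nonneg ht1
      have h2 : 0 ≤ θ * Real.log t := mul_nonneg hθ0.le h1
      rw [hB₂def]; linarith
    set Cb : ℝ := C₁ * (1+t)^|γ| with hCbdef
    have hbound : ∀ q : ℝ × Euc N, q.1 ∈ Ioo (0:ℝ) t → ‖F q‖ ≤
        (Cb * ((t - q.1)^(2*α-1) + B₂)) *
          Set.indicator (Metric.ball (0:Euc N) 1) (fun _ => (1:ℝ)) q.2 := by
      rintro ⟨s, y⟩ ⟨hs0, hst⟩
      by_cases hy : y ∈ Metric.ball (0:Euc N) 1
      · have hr0 : (0:ℝ) < t - s := sub_pos.mpr hst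
        have hrt : t - s ≤ t := by linarith
        have hw1 : 1 ≤ ‖x - y‖ := le_trans hρν (hxylb y hy)
        have hw0 : (0:ℝ) < ‖x - y‖ := by linarith
        have hξ0 : ((t - s)^(-θ)) • (x - y) ≠ 0 :=
          smul_ne_zero (Real.rpow_pos_of_pos hr0 _).ne' (hxy0 y hy)
        have hξnorm : ‖((t - s)^(-θ)) • (x - y)‖ = (t - s)^(-θ) * ‖x - y‖ := by
          rw [norm_smul, Real.norm_eq_abs, abs_of_pos (Real.rpow_pos_of_pos hr0 _)]
        have hGpos' : 0 < G (((t - s)^(-θ)) • (x - y)) := hGpos _ hξ0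
        have hFval : F (s, y) =
            ((t - s)^(-σ) * G (((t - s)^(-θ)) • (x - y))) * (1+s)^(-γ) := by
          rw [hFdef]
          simp only [Set.indicator_of_mem hy, hker]
        have h1s0 : (0:ℝ) ≤ (1+s)^(-γ) := (Real.rpow_pos_of_pos (by linarith) _).le
        have h1s : (1+s)^(-γ) ≤ (1+t)^|γ| := by
          calc (1+s)^(-γ) ≤ (1+s)^|γ| :=
                Real.rpow_le_rpow_of_exponent_le (by linarith) (neg_le_abs γ)
            _ ≤ (1+t)^|γ| := Real.rpow_le_rpow (by linarith) (by linarith) (abs_nonneg γ)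
        have hcore : (t - s)^(-σ) * G (((t - s)^(-θ)) • (x - y))
            ≤ C₁ * ((t - s)^(2*α-1) + B₂) := by
          have hrσ0 : (0:ℝ) ≤ (t - s)^(-σ) := (Real.rpow_pos_of_pos hr0 _).le
          have hrexp0 : (0:ℝ) ≤ (t - s)^(2*α-1) := (Real.rpow_pos_of_pos hr0 _).le
          rcases le_or_gt 1 ‖((t - s)^(-θ)) • (x - y)‖ with hξ1 | hξ1
          · have h2 := hGout _ hξ1
            have h3 : ‖((t - s)^(-θ)) • (x - y)‖^(-((N:ℝ)+2*β))
                = (t - s)^(θ*((N:ℝ)+2*β)) * ‖x - y‖^(-((N:ℝ)+2*β)) := by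
              rw [hξnorm, Real.mul_rpow (Real.rpow_pos_of_pos hr0 _).le hw0.le,
                ← Real.rpow_mul hr0.le,
                show (-θ)*(-((N:ℝ)+2*β)) = θ*((N:ℝ)+2*β) by ring]
            have h4 : ‖x - y‖^(-((N:ℝ)+2*β)) ≤ 1 := by
              apply Real.rpow_le_one_of_one_le_of_nonpos hw1
              have hN0 : (0:ℝ) ≤ (N:ℝ) := Nat.cast_nonneg N
              linarith
            have h5 : G (((t - s)^(-θ)) • (x - y)) ≤ C₁ * (t - s)^(θ*((N:ℝ)+2*β)) := by
              rw [h3] at h2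
              calc G (((t - s)^(-θ)) • (x - y))
                  ≤ C₁ * ((t - s)^(θ*((N:ℝ)+2*β)) * ‖x - y‖^(-((N:ℝ)+2*β))) := h2
                _ ≤ C₁ * ((t - s)^(θ*((N:ℝ)+2*β)) * 1) := by
                    apply mul_le_mul_of_nonneg_left _ hC₁.le
                    exact mul_le_mul_of_nonneg_left h4 (Real.rpow_pos_of_pos hr0 _).le
                _ = C₁ * (t - s)^(θ*((N:ℝ)+2*β)) := by rw [mul_one]
            calc (t - s)^(-σ) * G (((t - s)^(-θ)) • (x - y))
                ≤ (t - s)^(-σ) * (C₁ * (t - s)^(θ*((N:ℝ)+2*β))) :=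
                  mul_le_mul_of_nonneg_left h5 hrσ0
              _ = C₁ * (t - s)^(2*α-1) := by
                  rw [show (2*α-1) = -σ + θ*((N:ℝ)+2*β) from hσα.symm,
                    Real.rpow_add hr0]
                  ring
              _ ≤ C₁ * ((t - s)^(2*α-1) + B₂) := by
                  apply mul_le_mul_of_nonneg_left _ hC₁.le
                  linarith
          · -- small similarity variable: (t-s) must be large
            have hr1 : 1 ≤ t - s := by
              by_contra hcon
              push_neg at hcon
              have h5 : 1 < (t - s)^(-θ) := by
                rw [Real.one_lt_rpow_iff_of_pos hr0]
                exact Or.inr ⟨hcon, by linarith⟩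
              have h6 : 1 < ‖((t - s)^(-θ)) • (x - y)‖ := by
                rw [hξnorm]
                exact lt_of_lt_of_le h5
                  (le_mul_of_one_le_right (by linarith) hw1)
              linarith
            have hGle : G (((t - s)^(-θ)) • (x - y))
                ≤ C₁ * (1 + |Real.log ‖((t - s)^(-θ)) • (x - y)‖|) := by
              rcases lt_or_eq_of_le hNβ with h4 | h4
              · refine le_trans (hGin₁ h4 _ hξ0 hξ1.le) ?_
                have h7 := abs_nonneg (Real.log ‖((t - s)^(-θ)) • (x - y)‖)
                calc C₁ = C₁ * 1 := (mul_one C₁).symm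
                  _ ≤ C₁ * (1 + |Real.log ‖((t - s)^(-θ)) • (x - y)‖|) :=
                    mul_le_mul_of_nonneg_left (by linarith) hC₁.le
              · exact hGin₂ h4 _ hξ0 hξ1.le
            have hξpos : 0 < ‖((t - s)^(-θ)) • (x - y)‖ := norm_pos_iff.mpr hξ0
            have hlogle : |Real.log ‖((t - s)^(-θ)) • (x - y)‖| ≤ θ * Real.log t := by
              have hlog0 : Real.log ‖((t - s)^(-θ)) • (x - y)‖ ≤ 0 :=
                Real.log_nonpos hξpos.le hξ1.le
              rw [abs_of_nonpos hlog0]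
              have hlogeq : Real.log ‖((t - s)^(-θ)) • (x - y)‖
                  = -θ * Real.log (t - s) + Real.log ‖x - y‖ := by
                rw [hξnorm, Real.log_mul (Real.rpow_pos_of_pos hr0 _).ne' hw0.ne',
                  Real.log_rpow hr0]
              have hlogw : 0 ≤ Real.log ‖x - y‖ := Real.log_nonneg hw1
              have hlogr : Real.log (t - s) ≤ Real.log t := Real.log_le_log hr0 hrt
              rw [hlogeq]
              have h9 : 0 ≤ θ * (Real.log t - Real.log (t - s)) :=
                mul_nonneg hθ0.le (sub_nonneg.mpr hlogr)
              have h9' : θ * Real.log (t - s) ≤ θ * Real.log t := by linarith [h9]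
              linarith [h9', hlogw]
            have hrσ : (t - s)^(-σ) ≤ 1 :=
              Real.rpow_le_one_of_one_le_of_nonpos hr1 (by linarith)
            have hGle2 : G (((t - s)^(-θ)) • (x - y)) ≤ C₁ * B₂ := by
              refine le_trans hGle ?_
              apply mul_le_mul_of_nonneg_left _ hC₁.le
              rw [hB₂def]
              linarith
            calc (t - s)^(-σ) * G (((t - s)^(-θ)) • (x - y))
                ≤ 1 * (C₁ * B₂) := mul_le_mul hrσ hGle2 hGpos'.le zero_le_one
              _ = C₁ * B₂ := one_mul _
              _ ≤ C₁ * ((t - s)^(2*α-1) + B₂) := by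
                  apply mul_le_mul_of_nonneg_left _ hC₁.le
                  linarith
        rw [hFval, Set.indicator_of_mem hy, mul_one, Real.norm_eq_abs, abs_of_nonneg
          (mul_nonneg (mul_nonneg (Real.rpow_pos_of_pos hr0 _).le hGpos'.le) h1s0)]
        calc ((t - s)^(-σ) * G (((t - s)^(-θ)) • (x - y))) * (1+s)^(-γ)
            ≤ (C₁ * ((t - s)^(2*α-1) + B₂)) * (1+t)^|γ| := by
              apply mul_le_mul hcore h1s h1s0
              positivity
          _ = Cb * ((t - s)^(2*α-1) + B₂) := by rw [hCbdef]; ring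
      · rw [hFdef]
        simp only [Set.indicator_of_notMem hy, mul_zero, norm_zero, le_refl]
    -- integrability of the dominating function
    have hind_int : Integrable
        (Set.indicator (Metric.ball (0:Euc N) 1) (fun _ => (1:ℝ))) volume := by
      rw [integrable_indicator_iff measurableSet_ball]
      exact integrableOn_const measure_ball_lt_top.ne
    have hg₁ : Integrable (fun s : ℝ => Cb * ((t - s)^(2*α-1) + B₂)) μI := by
      have hint : IntervalIntegrable (fun u : ℝ => u ^ (2*α-1)) volume 0 t :=
        intervalIntegral.intervalIntegrable_rpow' (by linarith)
      have hint2 : IntervalIntegrable (fun s : ℝ => (t - s) ^ (2*α-1)) volume 0 t := by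
        have h := (hint.comp_sub_left t).symm
        simpa using h
      have hioo : IntegrableOn (fun s : ℝ => (t - s) ^ (2*α-1)) (Ioo 0 t) volume :=
        (intervalIntegrable_iff_integrableOn_Ioo_of_le ht0.le).mp hint2
      have hconst : IntegrableOn (fun _ : ℝ => B₂) (Ioo 0 t) volume :=
        integrableOn_const (by rw [Real.volume_Ioo]; exact ENNReal.ofReal_lt_top.ne)
      exact (hioo.add hconst).const_mul Cb
    have hg_int : Integrable (fun q : ℝ × Euc N =>
        (Cb * ((t - q.1)^(2*α-1) + B₂)) *
          Set.indicator (Metric.ball (0:Euc N) 1) (fun _ => (1:ℝ)) q.2) μt :=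
      hg₁.mul_prod hind_int
    have hF_int : Integrable F μt := by
      apply hg_int.mono hFm
      filter_upwards [haeI] with q hq
      refine le_trans (hbound q hq) ?_
      exact le_abs_self _
    have hinner_int : Integrable (fun s => ∫ y, F (s, y)) μI :=
      hF_int.integral_prod_left
    -- the minorant
    have hgl_int : Integrable
        (Set.indicator (Ioo (0:ℝ) (t/2)) (fun s => L₀ * (1+s)^(-γ))) μI := by
      rw [integrable_indicator_iff measurableSet_Ioo, IntegrableOn, hμIdef,
        Measure.restrict_restrict measurableSet_Ioo,
        inter_eq_self_of_subset_left (Ioo_subset_Ioo_right (by linarith : t/2 ≤ t))]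
      exact hIt_integrable.const_mul L₀
    have hpt : ∀ s ∈ Ioo (0:ℝ) t,
        Set.indicator (Ioo (0:ℝ) (t/2)) (fun s' => L₀ * (1+s')^(-γ)) s
          ≤ ∫ y, F (s, y) := by
      rintro s ⟨hs0, hst⟩
      have hr0 : (0:ℝ) < t - s := sub_pos.mpr hst
      have h1s0 : (0:ℝ) ≤ (1+s)^(-γ) := (Real.rpow_pos_of_pos (by linarith) _).le
      -- measurability of F (s, ·)
      have hconts : ContinuousOn (fun y : Euc N => Φ (s, y)) ({x}ᶜ) := by
        show ContinuousOn (fun y : Euc N =>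
          ((t - s) ^ (-σ) * G (((t - s) ^ (-θ)) • (x - y))) * (1 + s) ^ (-γ)) ({x}ᶜ)
        apply ContinuousOn.mul _ continuousOn_const
        apply ContinuousOn.mul continuousOn_const
        apply hGcont.comp
        · exact ((continuous_const.sub continuous_id).const_smul
            ((t - s) ^ (-θ))).continuousOn
        · intro y hy
          simp only [mem_compl_iff, mem_singleton_iff] at hy ⊢
          exact smul_ne_zero (Real.rpow_pos_of_pos hr0 _).ne'
            (sub_ne_zero.mpr (Ne.symm hy))
      have haex : ∀ᵐ y : Euc N, y ∈ ({x}ᶜ : Set (Euc N)) := by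
        rw [MeasureTheory.ae_iff]
        simpa using hsing
      have hΦsm : AEStronglyMeasurable (fun y : Euc N => Φ (s, y)) volume := by
        have h := hconts.aestronglyMeasurable (measurableSet_singleton x).compl
          (μ := (volume : Measure (Euc N)))
        rwa [Measure.restrict_eq_self_of_ae_mem haex] at h
      have hFsm : AEStronglyMeasurable (fun y => F (s, y)) volume := by
        have heq : (fun y => F (s, y)) = fun y => Φ (s, y) *
            Set.indicator (Metric.ball (0:Euc N) 1) (fun _ => (1:ℝ)) y := by
          funext y; exact congrFun hFeq (s, y)
        rw [heq]
        exact hΦsm.mul hindmble.aestronglyMeasurable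
      have hgs : Integrable (fun y : Euc N =>
          (Cb * ((t - s)^(2*α-1) + B₂)) *
            Set.indicator (Metric.ball (0:Euc N) 1) (fun _ => (1:ℝ)) y) volume :=
        hind_int.const_mul _
      have hFs_int : Integrable (fun y => F (s, y)) volume := by
        apply hgs.mono hFsm
        apply Filter.Eventually.of_forall
        intro y
        refine le_trans (hbound (s, y) ⟨hs0, hst⟩) (le_abs_self _)
      by_cases hs2 : s ∈ Ioo (0:ℝ) (t/2)
      · rw [Set.indicator_of_mem hs2]
        have hℓ_int : Integrable (Set.indicator (Metric.ball (0:Euc N) 1)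
            (fun _ => m * t^(-σ) * (1+s)^(-γ))) volume := by
          rw [integrable_indicator_iff measurableSet_ball]
          exact integrableOn_const measure_ball_lt_top.ne
        have hle : ∀ y, Set.indicator (Metric.ball (0:Euc N) 1)
            (fun _ => m * t^(-σ) * (1+s)^(-γ)) y ≤ F (s, y) := by
          intro y
          by_cases hy : y ∈ Metric.ball (0:Euc N) 1
          · rw [Set.indicator_of_mem hy]
            have hw1 : 1 ≤ ‖x - y‖ := le_trans hρν (hxylb y hy)
            have hw0 : (0:ℝ) < ‖x - y‖ := by linarith
            have hξ0 : ((t - s)^(-θ)) • (x - y) ≠ 0 :=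
              smul_ne_zero (Real.rpow_pos_of_pos hr0 _).ne' (hxy0 y hy)
            have hξnorm : ‖((t - s)^(-θ)) • (x - y)‖ = (t - s)^(-θ) * ‖x - y‖ := by
              rw [norm_smul, Real.norm_eq_abs, abs_of_pos (Real.rpow_pos_of_pos hr0 _)]
            have hFval : F (s, y) =
                ((t - s)^(-σ) * G (((t - s)^(-θ)) • (x - y))) * (1+s)^(-γ) := by
              rw [hFdef]
              simp only [Set.indicator_of_mem hy, hker]
            -- scale bounds: t/2 < t - s ≤ t
            have hrl : t/2 < t - s := by linarith [hs2.2]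
            have hru : t - s ≤ t := by linarith
            have h2θ4 : (2:ℝ)^θ ≤ 4 := by
              have h1 : (2:ℝ)^θ ≤ (2:ℝ)^(2:ℝ) :=
                Real.rpow_le_rpow_of_exponent_le one_le_two hθ2.le
              have h2 : (2:ℝ)^(2:ℝ) = 4 := by
                rw [show (2:ℝ) = ((2:ℕ):ℝ) from by norm_num, Real.rpow_natCast]
                norm_num
              linarith
            have hinvl : t^(-θ) ≤ (t-s)^(-θ) :=
              Real.rpow_le_rpow_of_nonpos hr0 hru (by linarith)
            have hinvu : (t-s)^(-θ) ≤ (t/2)^(-θ) :=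
              Real.rpow_le_rpow_of_nonpos (by linarith) hrl.le (by linarith)
            have hhalf : (t/2)^(-θ) = t^(-θ) * 2^θ := by
              rw [div_eq_mul_inv, Real.mul_rpow ht0.le (by norm_num),
                Real.inv_rpow (by norm_num : (0:ℝ) ≤ 2),
                ← Real.rpow_neg (by norm_num : (0:ℝ) ≤ 2), neg_neg]
            have htinv : t^(-θ) = ρ⁻¹ := by rw [hρdef, Real.rpow_neg ht0.le]
            have hξl : ν/2 ≤ ‖((t - s)^(-θ)) • (x - y)‖ := by
              have hwl : (ν/2)*ρ ≤ ‖x - y‖ := hxylb y hy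
              calc ν/2 = t^(-θ) * ((ν/2)*ρ) := by
                    rw [htinv]; field_simp
                _ ≤ (t-s)^(-θ) * ‖x - y‖ := by
                    apply mul_le_mul hinvl hwl (by positivity)
                    exact (Real.rpow_pos_of_pos hr0 _).le
                _ = ‖((t - s)^(-θ)) • (x - y)‖ := hξnorm.symm
            have hξu : ‖((t - s)^(-θ)) • (x - y)‖ ≤ R := by
              calc ‖((t - s)^(-θ)) • (x - y)‖ = (t-s)^(-θ) * ‖x - y‖ := hξnorm
                _ ≤ (t/2)^(-θ) * (3*(ν+1)*ρ) := by
                    apply mul_le_mul hinvu (hxyub y hy) hw0.le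
                    exact (Real.rpow_pos_of_pos (by linarith) _).le
                _ = (2:ℝ)^θ * (3*(ν+1)) * (t^(-θ)*ρ) := by rw [hhalf]; ring
                _ = (2:ℝ)^θ * (3*(ν+1)) := by
                    rw [htinv, inv_mul_cancel₀ hρ0.ne', mul_one]
                _ ≤ R := by
                    rw [hRdef]
                    have h8 : (2:ℝ)^θ * (3*(ν+1)) ≤ 4 * (3*(ν+1)) :=
                      mul_le_mul_of_nonneg_right h2θ4 (by linarith)
                    linarith
            have hGm : m ≤ G (((t - s)^(-θ)) • (x - y)) := by
              apply hξ₀min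
              refine ⟨?_, ?_⟩
              · rw [Metric.mem_closedBall, dist_zero_right]; exact hξu
              · rw [Metric.mem_ball, dist_zero_right]; exact not_lt.mpr hξl
            have hσmono : t^(-σ) ≤ (t-s)^(-σ) :=
              Real.rpow_le_rpow_of_nonpos hr0 hru (by linarith)
            have hmain : m * t^(-σ) ≤ (t-s)^(-σ) * G (((t - s)^(-θ)) • (x - y)) := by
              calc m * t^(-σ) = t^(-σ) * m := mul_comm _ _
                _ ≤ (t-s)^(-σ) * G (((t - s)^(-θ)) • (x - y)) := by
                    apply mul_le_mul hσmono hGm hm0.le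
                    exact (Real.rpow_pos_of_pos hr0 _).le
            rw [hFval]
            exact mul_le_mul_of_nonneg_right hmain h1s0
          · rw [Set.indicator_of_notMem hy, hFdef]
            simp only [Set.indicator_of_notMem hy, mul_zero, le_refl]
        calc L₀ * (1+s)^(-γ)
            = ∫ y, Set.indicator (Metric.ball (0:Euc N) 1)
                (fun _ => m * t^(-σ) * (1+s)^(-γ)) y := by
              rw [MeasureTheory.integral_indicator measurableSet_ball,
                setIntegral_const, smul_eq_mul, measureReal_def, ← hVBdef, hL₀def, hvolBdef]
              ring
          _ ≤ ∫ y, F (s, y) := integral_mono hℓ_int hFs_int hle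
      · rw [Set.indicator_of_notMem hs2]
        apply integral_nonneg
        intro y
        show (0:ℝ) ≤ F (s, y)
        by_cases hy : y ∈ Metric.ball (0:Euc N) 1
        · have hξ0 : ((t - s)^(-θ)) • (x - y) ≠ 0 :=
            smul_ne_zero (Real.rpow_pos_of_pos hr0 _).ne' (hxy0 y hy)
          have hFval : F (s, y) =
              ((t - s)^(-σ) * G (((t - s)^(-θ)) • (x - y))) * (1+s)^(-γ) := by
            rw [hFdef]
            simp only [Set.indicator_of_mem hy, hker]
          rw [hFval]
          exact mul_nonneg (mul_nonneg (Real.rpow_pos_of_pos hr0 _).le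
            (hGpos _ hξ0).le) h1s0
        · rw [hFdef]
          simp only [Set.indicator_of_notMem hy, mul_zero, le_refl]
    -- assemble
    have hmono : ∫ s in Ioo (0:ℝ) t,
        Set.indicator (Ioo (0:ℝ) (t/2)) (fun s' => L₀ * (1+s')^(-γ)) s
          ≤ ∫ s in Ioo (0:ℝ) t, (∫ y, F (s, y)) :=
      setIntegral_mono_on hgl_int hinner_int measurableSet_Ioo hpt
    have hgl_eq : ∫ s in Ioo (0:ℝ) t,
        Set.indicator (Ioo (0:ℝ) (t/2)) (fun s' => L₀ * (1+s')^(-γ)) s = L₀ * It := by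
      rw [MeasureTheory.integral_indicator measurableSet_Ioo,
        Measure.restrict_restrict measurableSet_Ioo,
        inter_eq_self_of_subset_left (Ioo_subset_Ioo_right (by linarith : t/2 ≤ t)),
        hItdef, integral_const_mul]
    have hfinal : mildSol N α β G
        (fun (y : Euc N) (s : ℝ) =>
          Set.indicator (Metric.ball (0 : Euc N) 1) (fun _ => (1 + s) ^ (-γ)) y) x t
        = ∫ s in Ioo (0:ℝ) t, (∫ y, F (s, y)) := rfl
    rw [hfinal, ← hgl_eq]
    exact hmono
  -- the eLpNorm chain
  have hp0 : p ≠ 0 := (lt_of_lt_of_le zero_lt_one hp1).ne'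
  have hAvolpos : (0:ℝ≥0∞) < volume A :=
    lt_of_lt_of_le (ENNReal.ofReal_pos.mpr (by positivity)) hAvol
  have hμ0 : volume.restrict A ≠ 0 := by
    apply Measure.measure_univ_ne_zero.mp
    rw [Measure.restrict_apply_univ]
    exact hAvolpos.ne'
  have hρN : (ρ:ℝ)^(N:ℕ) = t^(θ*(N:ℝ)) := by
    rw [hρdef, ← Real.rpow_natCast (t^θ) N, ← Real.rpow_mul ht0.le]
  have hw : ((ν/2)*ρ)^N * volB = c₂ * t^(θ*(N:ℝ)) := by
    rw [← hρN, hc₂def]; ring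
  have hw0 : (0:ℝ) < ((ν/2)*ρ)^N * volB := by positivity
  have hwe : (((ν/2)*ρ)^N * volB)^e = c₂^e * t^(θ*(N:ℝ)*e) := by
    rw [hw, Real.mul_rpow hc₂0.le (Real.rpow_nonneg ht0.le _), ← Real.rpow_mul ht0.le]
  have hsig : sigmaP N α β p = σ - θ*(N:ℝ)*e := by
    rw [hσdef, hθdef, hedef]; simp only [sigmaP]; ring
  have hELP : ENNReal.ofReal (c₀ * t ^ (-sigmaP N α β p) * It) ≤
      eLpNorm (fun x => mildSol N α β G
        (fun (y : Euc N) (s : ℝ) =>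
          Set.indicator (Metric.ball (0 : Euc N) 1) (fun _ => (1 + s) ^ (-γ)) y) x t) p
      (volume.restrict {x : Euc N | ν * ρ ≤ ‖x‖}) := by
    have heq1 : c₀ * t ^ (-sigmaP N α β p) * It
        = (L₀ * It) * ((((ν/2)*ρ)^N * volB)^e) := by
      rw [hwe, hsig, hL₀def, hc₀def,
        show -(σ - θ*(N:ℝ)*e) = (-σ) + θ*(N:ℝ)*e by ring, Real.rpow_add ht0]
      ring
    calc ENNReal.ofReal (c₀ * t ^ (-sigmaP N α β p) * It)
        = ENNReal.ofReal (L₀ * It) * ENNReal.ofReal ((((ν/2)*ρ)^N * volB)^e) := by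
          rw [heq1, ENNReal.ofReal_mul hL0]
      _ = ENNReal.ofReal (L₀ * It) * (ENNReal.ofReal (((ν/2)*ρ)^N * volB))^e := by
          rw [ENNReal.ofReal_rpow_of_pos hw0]
      _ ≤ ENNReal.ofReal (L₀ * It) * (volume A)^e :=
          mul_le_mul_right (ENNReal.rpow_le_rpow hAvol he0) _
      _ = ‖L₀ * It‖ₑ * ((volume.restrict A) Set.univ)^(1/p.toReal) := by
          rw [Real.enorm_eq_ofReal hL0, Measure.restrict_apply_univ, hedef]
      _ = eLpNorm (fun _ : Euc N => L₀ * It) p (volume.restrict A) :=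
          (eLpNorm_const _ hp0 hμ0).symm
      _ ≤ eLpNorm (fun x => mildSol N α β G
            (fun (y : Euc N) (s : ℝ) =>
              Set.indicator (Metric.ball (0 : Euc N) 1) (fun _ => (1 + s) ^ (-γ)) y) x t) p
          (volume.restrict A) := by
          apply eLpNorm_mono_ae
          filter_upwards [ae_restrict_mem hAm] with x hx
          rw [Real.norm_eq_abs, Real.norm_eq_abs, abs_of_nonneg hL0]
          exact le_trans (hkey x hx) (le_abs_self _)
      _ ≤ _ :=
          eLpNorm_mono_measure _ (Measure.restrict_mono (fun x hx => (hAnorm x hx).1) le_rfl)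
  have hX0 : (0:ℝ) < t ^ (-sigmaP N α β p) := Real.rpow_pos_of_pos ht0 _
  refine ⟨?_, ?_, ?_⟩
  · -- case γ < 1
    intro hγ
    refine le_trans (ENNReal.ofReal_le_ofReal ?_) hELP
    have hsub : Ioo (t/4) (t/2) ⊆ Ioo 0 (t/2) := by
      rintro s ⟨hs1, hs2⟩; exact ⟨by linarith, hs2⟩
    have h1 : ∫ s in Ioo (t/4) (t/2), (1+s)^(-γ) ≤ It := by
      apply setIntegral_mono_set hIt_integrable
      · filter_upwards [ae_restrict_mem measurableSet_Ioo] with s hs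
        exact (Real.rpow_pos_of_pos (by linarith [hs.1]) _).le
      · exact HasSubset.Subset.eventuallyLE hsub
    have h2 : ∀ s ∈ Ioo (t/4) (t/2), cγa * t^(-γ) ≤ (1+s)^(-γ) := by
      rintro s ⟨hs1, hs2⟩
      have h14 : t/4 ≤ 1 + s := by linarith
      have h1t : 1 + s ≤ t := by linarith
      have h1s0 : (0:ℝ) < 1 + s := by linarith
      rcases le_or_gt γ 0 with hg | hg
      · have ha : (t/4)^(-γ) ≤ (1+s)^(-γ) :=
          Real.rpow_le_rpow (by linarith) h14 (by linarith)
        have hb : (t/4)^(-γ) = t^(-γ) * (4:ℝ)^γ := by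
          rw [div_eq_mul_inv, Real.mul_rpow ht0.le (by norm_num),
            Real.inv_rpow (by norm_num), ← Real.rpow_neg (by norm_num), neg_neg]
        have hc' : cγa ≤ (4:ℝ)^γ := min_le_left _ _
        calc cγa * t^(-γ) ≤ (4:ℝ)^γ * t^(-γ) :=
              mul_le_mul_of_nonneg_right hc' (Real.rpow_pos_of_pos ht0 _).le
          _ = (t/4)^(-γ) := by rw [hb]; ring
          _ ≤ (1+s)^(-γ) := ha
      · have ha : t^(-γ) ≤ (1+s)^(-γ) :=
          Real.rpow_le_rpow_of_nonpos h1s0 h1t (by linarith)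
        have hc' : cγa ≤ 1 := min_le_right _ _
        calc cγa * t^(-γ) ≤ 1 * t^(-γ) :=
              mul_le_mul_of_nonneg_right hc' (Real.rpow_pos_of_pos ht0 _).le
          _ = t^(-γ) := one_mul _
          _ ≤ (1+s)^(-γ) := ha
    have h3 : ∫ _ in Ioo (t/4) (t/2), (cγa * t^(-γ)) ≤ ∫ s in Ioo (t/4) (t/2), (1+s)^(-γ) := by
      apply setIntegral_mono_on
      · exact integrableOn_const (by rw [Real.volume_Ioo]; exact ENNReal.ofReal_lt_top.ne)
      · exact hIt_integrable.mono_set hsub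
      · exact measurableSet_Ioo
      · exact h2
    have h4 : ∫ _ in Ioo (t/4) (t/2), (cγa * t^(-γ)) = (t/4) * (cγa * t^(-γ)) := by
      rw [setIntegral_const, measureReal_def, Real.volume_Ioo, ENNReal.toReal_ofReal (by linarith),
        smul_eq_mul, show t/2 - t/4 = t/4 by ring]
    have hIlow : cγa/4 * t^(1-γ) ≤ It := by
      have h5 : t^(1-γ) = t * t^(-γ) := by
        rw [show (1-γ) = 1 + (-γ) by ring, Real.rpow_add ht0, Real.rpow_one]
      calc cγa/4 * t^(1-γ) = (t/4) * (cγa * t^(-γ)) := by rw [h5]; ring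
        _ ≤ It := le_trans (le_of_eq h4.symm) (le_trans h3 h1)
    have hXY : t ^ (-sigmaP N α β p + 1 - γ) = t^(-sigmaP N α β p) * t^(1-γ) := by
      rw [show -sigmaP N α β p + 1 - γ = (-sigmaP N α β p) + (1-γ) by ring, Real.rpow_add ht0]
    have hcle : c ≤ c₀ * (cγa/4) := by
      rw [hcdef]
      exact mul_le_mul_of_nonneg_left (min_le_left _ _) hc₀0.le
    have hY0 : (0:ℝ) < t^(1-γ) := Real.rpow_pos_of_pos ht0 _
    rw [hXY]
    calc c * (t^(-sigmaP N α β p) * t^(1-γ))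
        ≤ (c₀ * (cγa/4)) * (t^(-sigmaP N α β p) * t^(1-γ)) :=
          mul_le_mul_of_nonneg_right hcle (by positivity)
      _ = (c₀ * t^(-sigmaP N α β p)) * (cγa/4 * t^(1-γ)) := by ring
      _ ≤ (c₀ * t^(-sigmaP N α β p)) * It := by
          exact mul_le_mul_of_nonneg_left hIlow (by positivity)
  · -- case γ = 1
    intro hγ
    refine le_trans (ENNReal.ofReal_le_ofReal ?_) hELP
    have hItlog : It = Real.log (1 + t/2) := by
      rw [hItdef, hγ, ← integral_Ioc_eq_integral_Ioo,
        ← intervalIntegral.integral_of_le (by linarith : (0:ℝ) ≤ t/2)]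
      simp_rw [Real.rpow_neg_one]
      rw [show (∫ s in (0:ℝ)..(t/2), (1+s)⁻¹)
            = ∫ s in (0:ℝ)..(t/2), (fun u : ℝ => u⁻¹) (1 + s) from rfl,
        intervalIntegral.integral_comp_add_left (fun u : ℝ => u⁻¹) 1,
        integral_inv (by rw [Set.uIcc_of_le (by linarith)]; rintro ⟨h0, _⟩; linarith)]
      rw [add_zero, div_one]
    have hIlow : 1/2 * Real.log t ≤ It := by
      have hlog2 : Real.log (t/2) = Real.log t - Real.log 2 :=
        Real.log_div ht0.ne' two_ne_zero
      have h4' : Real.log 4 ≤ Real.log t := Real.log_le_log (by norm_num) ht4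
      have h42 : Real.log 4 = 2 * Real.log 2 := by
        rw [show (4:ℝ) = 2^(2:ℕ) by norm_num, Real.log_pow]; push_cast; ring
      have hmono : Real.log (t/2) ≤ Real.log (1 + t/2) :=
        Real.log_le_log (by linarith) (by linarith)
      rw [hItlog]; linarith
    have hlogt0 : (0:ℝ) ≤ Real.log t := Real.log_nonneg ht1
    have hcle : c ≤ c₀ * (1/2) := by
      rw [hcdef]
      exact mul_le_mul_of_nonneg_left
        (le_trans (min_le_right _ _) (min_le_left _ _)) hc₀0.le
    calc c * t^(-sigmaP N α β p) * Real.log t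
        ≤ (c₀ * (1/2)) * t^(-sigmaP N α β p) * Real.log t := by
          exact mul_le_mul_of_nonneg_right
            (mul_le_mul_of_nonneg_right hcle hX0.le) hlogt0
      _ = (c₀ * t^(-sigmaP N α β p)) * (1/2 * Real.log t) := by ring
      _ ≤ (c₀ * t^(-sigmaP N α β p)) * It :=
          mul_le_mul_of_nonneg_left hIlow (by positivity)
      _ = c₀ * t^(-sigmaP N α β p) * It := by ring
  · -- case 1 < γ
    intro hγ
    refine le_trans (ENNReal.ofReal_le_ofReal ?_) hELP
    have hsub : Ioo (0:ℝ) 1 ⊆ Ioo 0 (t/2) := by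
      rintro s ⟨hs1, hs2⟩; exact ⟨hs1, by linarith⟩
    have h1 : ∫ s in Ioo (0:ℝ) 1, (1+s)^(-γ) ≤ It := by
      apply setIntegral_mono_set hIt_integrable
      · filter_upwards [ae_restrict_mem measurableSet_Ioo] with s hs
        exact (Real.rpow_pos_of_pos (by linarith [hs.1]) _).le
      · exact HasSubset.Subset.eventuallyLE hsub
    have h3 : ∫ _ in Ioo (0:ℝ) 1, ((2:ℝ)^(-γ)) ≤ ∫ s in Ioo (0:ℝ) 1, (1+s)^(-γ) := by
      apply setIntegral_mono_on
      · exact integrableOn_const (by rw [Real.volume_Ioo]; exact ENNReal.ofReal_lt_top.ne)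
      · exact hIt_integrable.mono_set hsub
      · exact measurableSet_Ioo
      · rintro s ⟨hs1, hs2⟩
        exact Real.rpow_le_rpow_of_nonpos (by linarith) (by linarith) (by linarith)
    have h4 : ∫ _ in Ioo (0:ℝ) 1, ((2:ℝ)^(-γ)) = (2:ℝ)^(-γ) := by
      rw [setIntegral_const, measureReal_def, Real.volume_Ioo, ENNReal.toReal_ofReal (by norm_num),
        smul_eq_mul]
      norm_num
    have hIlow : (2:ℝ)^(-γ) ≤ It := le_trans (le_of_eq h4.symm) (le_trans h3 h1)
    have hcle : c ≤ c₀ * ((2:ℝ)^(-γ)) := by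
      rw [hcdef]
      exact mul_le_mul_of_nonneg_left
        (le_trans (min_le_right _ _) (min_le_right _ _)) hc₀0.le
    calc c * t^(-sigmaP N α β p)
        ≤ (c₀ * ((2:ℝ)^(-γ))) * t^(-sigmaP N α β p) :=
          mul_le_mul_of_nonneg_right hcle hX0.le
      _ = (c₀ * t^(-sigmaP N α β p)) * ((2:ℝ)^(-γ)) := by ring
      _ ≤ (c₀ * t^(-sigmaP N α β p)) * It :=
          mul_le_mul_of_nonneg_left hIlow (by positivity)
      _ = c₀ * t^(-sigmaP N α β p) * It := by ring
end
end

section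
/- Suppose N < 2β. Let γ ∈ ℝ, let p ∈ [1,∞] (every such p is subcritical in this regime), and let f be measurable with ∫_{ℝ^N} |f(y,t)| dy ≤ C₀ (1+t)^{-γ} for all t > 0 and some C₀ > 0. Then for every compact set K ⊂ ℝ^N there exist C > 0 and T ≥ 2 such that for all t ≥ T the mild solution u satisfies: ‖u(·,t)‖_{L^p(K)} ≤ C t^{-σ*+1-γ} if γ < 1; ≤ C t^{-σ*} log t if γ = 1; and ≤ C t^{-σ*} if γ > 1. -/
open MeasureTheory Real Set Pointwise
open scoped ENNReal

noncomputable section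

section AuxLemmas
open intervalIntegral

private lemma aux_g2cont (γ : ℝ) (s : Set ℝ) (hs : ∀ x ∈ s, (0:ℝ) ≤ x) :
    ContinuousOn (fun x : ℝ => (1+x) ^ (-γ)) s := by
  apply ContinuousOn.rpow_const
  · exact (continuous_const.add continuous_id).continuousOn
  · intro x hx
    exact Or.inl (by have := hs x hx; positivity)

private lemma aux_gInt (σ γ t a b : ℝ) (hσ : σ < 1) (ht : 0 ≤ t)
    (hab : uIcc a b ⊆ uIcc 0 t) :
    IntervalIntegrable (fun s => (t-s)^(-σ) * (1+s)^(-γ)) volume a b := by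
  have h1 : IntervalIntegrable (fun s : ℝ => (t-s)^(-σ)) volume 0 t := by
    have := (intervalIntegral.intervalIntegrable_rpow' (a := t) (b := 0) (r := -σ)
      (by linarith)).comp_sub_left t
    simpa using this
  refine (h1.mono_set hab).mul_continuousOn ?_
  refine aux_g2cont γ _ ?_
  intro x hx
  have := hab hx
  rw [uIcc_of_le ht] at this
  exact this.1

private lemma aux_halfpow (t σ : ℝ) (ht : 0 < t) : (t/2) ^ (-σ) = 2^σ * t^(-σ) := by
  rw [Real.div_rpow ht.le (by norm_num), Real.rpow_neg (by norm_num : (0:ℝ) ≤ 2)]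
  field_simp

private lemma aux_Jsplit (σ γ t : ℝ) (hσ0 : 0 < σ) (hσ1 : σ < 1) (ht : 3 ≤ t) :
    ∫ s in (0:ℝ)..t, (t-s)^(-σ) * (1+s)^(-γ) ≤
      2^σ * t^(-σ) * (∫ u in (1:ℝ)..(1+t/2), u^(-γ))
        + (2^|γ| * t^(-γ)) * ((t/2)^(1-σ)/(1-σ)) := by
  have ht0 : (0:ℝ) < t := by linarith
  have ht2 : (0:ℝ) < t/2 := by linarith
  have hsub1 : uIcc (0:ℝ) (t/2) ⊆ uIcc 0 t := by
    rw [uIcc_of_le ht0.le, uIcc_of_le ht2.le]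
    exact Icc_subset_Icc le_rfl (by linarith)
  have hsub2 : uIcc (t/2) t ⊆ uIcc 0 t := by
    rw [uIcc_of_le ht0.le, uIcc_of_le (by linarith : t/2 ≤ t)]
    exact Icc_subset_Icc ht2.le le_rfl
  have hint1 := aux_gInt σ γ t 0 (t/2) hσ1 ht0.le hsub1
  have hint2 := aux_gInt σ γ t (t/2) t hσ1 ht0.le hsub2
  rw [← intervalIntegral.integral_add_adjacent_intervals hint1 hint2]
  have piece1 : ∫ s in (0:ℝ)..(t/2), (t-s)^(-σ) * (1+s)^(-γ) ≤
      2^σ * t^(-σ) * (∫ u in (1:ℝ)..(1+t/2), u^(-γ)) := by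
    have step1 : ∫ s in (0:ℝ)..(t/2), (t-s)^(-σ) * (1+s)^(-γ) ≤
        ∫ s in (0:ℝ)..(t/2), (t/2)^(-σ) * (1+s)^(-γ) := by
      apply intervalIntegral.integral_mono_on ht2.le hint1
      · refine IntervalIntegrable.const_mul ?_ _
        exact (aux_g2cont γ _ (by rw [uIcc_of_le ht2.le]; exact fun x hx => hx.1)).intervalIntegrable
      · intro s hs
        have h1 : (t - s)^(-σ) ≤ (t/2)^(-σ) :=
          Real.rpow_le_rpow_of_nonpos ht2 (by linarith [hs.2]) (by linarith)
        have h2 : (0:ℝ) ≤ (1+s)^(-γ) := Real.rpow_nonneg (by linarith [hs.1]) _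
        exact mul_le_mul_of_nonneg_right h1 h2
    have step2 : ∫ s in (0:ℝ)..(t/2), (t/2)^(-σ) * (1+s)^(-γ)
        = 2^σ * t^(-σ) * (∫ u in (1:ℝ)..(1+t/2), u^(-γ)) := by
      rw [intervalIntegral.integral_const_mul, aux_halfpow t σ ht0]
      congr 1
      have := intervalIntegral.integral_comp_add_left (a := 0) (b := t/2)
        (fun u : ℝ => u^(-γ)) 1
      simpa using this
    linarith
  have piece2 : ∫ s in (t/2)..t, (t-s)^(-σ) * (1+s)^(-γ) ≤
      (2^|γ| * t^(-γ)) * ((t/2)^(1-σ)/(1-σ)) := by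
    have hg1int : IntervalIntegrable (fun s : ℝ => (t-s)^(-σ)) volume (t/2) t := by
      have := (intervalIntegral.intervalIntegrable_rpow' (a := t/2) (b := 0) (r := -σ)
        (by linarith)).comp_sub_left t
      simpa [show t - t/2 = t/2 by ring] using this
    have hB : ∀ s ∈ Icc (t/2) t, (1+s)^(-γ) ≤ 2^|γ| * t^(-γ) := by
      intro s hs
      rcases le_or_gt γ 0 with hγ | hγ
      · rw [abs_of_nonpos hγ]
        calc (1+s)^(-γ) ≤ (2*t)^(-γ) :=
              Real.rpow_le_rpow (by linarith [hs.1]) (by linarith [hs.2]) (by linarith)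
          _ = 2^(-γ) * t^(-γ) := Real.mul_rpow (by norm_num) ht0.le
      · rw [abs_of_pos hγ]
        calc (1+s)^(-γ) ≤ (t/2)^(-γ) :=
              Real.rpow_le_rpow_of_nonpos ht2 (by linarith [hs.1]) (by linarith)
          _ = 2^γ * t^(-γ) := aux_halfpow t γ ht0
    have step1 : ∫ s in (t/2)..t, (t-s)^(-σ) * (1+s)^(-γ) ≤
        ∫ s in (t/2)..t, (2^|γ| * t^(-γ)) * (t-s)^(-σ) := by
      apply intervalIntegral.integral_mono_on (by linarith) hint2
        (hg1int.const_mul _)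
      intro s hs
      have h1 : (0:ℝ) ≤ (t-s)^(-σ) := Real.rpow_nonneg (by linarith [hs.2]) _
      calc (t-s)^(-σ) * (1+s)^(-γ) ≤ (t-s)^(-σ) * (2^|γ| * t^(-γ)) :=
            mul_le_mul_of_nonneg_left (hB s hs) h1
        _ = (2^|γ| * t^(-γ)) * (t-s)^(-σ) := by ring
    have step2 : ∫ s in (t/2)..t, (2^|γ| * t^(-γ)) * (t-s)^(-σ)
        = (2^|γ| * t^(-γ)) * ((t/2)^(1-σ)/(1-σ)) := by
      rw [intervalIntegral.integral_const_mul]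
      congr 1
      have hcmp := intervalIntegral.integral_comp_sub_left (a := t/2) (b := t)
        (fun u : ℝ => u^(-σ)) t
      have h0 : t - t = 0 := by ring
      have h2 : t - t/2 = t/2 := by ring
      rw [h0, h2] at hcmp
      rw [hcmp, integral_rpow (Or.inl (by linarith))]
      rw [Real.zero_rpow (by linarith : -σ + 1 ≠ 0)]
      rw [show -σ + 1 = 1 - σ by ring]
      ring
    linarith
  linarith

private lemma aux_Jlt (σ γ t : ℝ) (hσ0 : 0 < σ) (hσ1 : σ < 1) (hγ : γ < 1) (ht : 3 ≤ t) :
    ∫ s in (0:ℝ)..t, (t-s)^(-σ) * (1+s)^(-γ) ≤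
      (2^σ/(1-γ) + 2^|γ|/(1-σ)) * t^(-σ+1-γ) := by
  have ht0 : (0:ℝ) < t := by linarith
  have hI : ∫ u in (1:ℝ)..(1+t/2), u^(-γ) ≤ t^(1-γ)/(1-γ) := by
    rw [integral_rpow (Or.inl (by linarith)), Real.one_rpow]
    rw [show -γ+1 = 1-γ by ring]
    rw [div_le_div_iff_of_pos_right (by linarith)]
    have hA : (1+t/2)^(1-γ) ≤ t^(1-γ) :=
      Real.rpow_le_rpow (by linarith) (by linarith) (by linarith)
    linarith
  have h2 : (t/2)^(1-σ) ≤ t^(1-σ) :=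
    Real.rpow_le_rpow (by linarith) (by linarith) (by linarith)
  have hpσ : (0:ℝ) < t^(-σ) := Real.rpow_pos_of_pos ht0 _
  have hpγ : (0:ℝ) < t^(-γ) := Real.rpow_pos_of_pos ht0 _
  have h2σ : (0:ℝ) < (2:ℝ)^σ := Real.rpow_pos_of_pos (by norm_num) _
  have h2γ : (0:ℝ) < (2:ℝ)^|γ| := Real.rpow_pos_of_pos (by norm_num) _
  have hswap : t^(-γ) * t^(1-σ) = t^(-σ) * t^(1-γ) := by
    rw [← Real.rpow_add ht0, ← Real.rpow_add ht0]; ring_nf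
  calc ∫ s in (0:ℝ)..t, (t-s)^(-σ) * (1+s)^(-γ)
      ≤ 2^σ * t^(-σ) * (∫ u in (1:ℝ)..(1+t/2), u^(-γ))
        + (2^|γ| * t^(-γ)) * ((t/2)^(1-σ)/(1-σ)) := aux_Jsplit σ γ t hσ0 hσ1 ht
    _ ≤ 2^σ * t^(-σ) * (t^(1-γ)/(1-γ)) + (2^|γ| * t^(-γ)) * (t^(1-σ)/(1-σ)) := by
        gcongr <;> linarith
    _ = 2^σ/(1-γ) * (t^(-σ)*t^(1-γ)) + 2^|γ|/(1-σ) * (t^(-γ)*t^(1-σ)) := by ring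
    _ = (2^σ/(1-γ) + 2^|γ|/(1-σ)) * t^(-σ+1-γ) := by
        rw [hswap, show -σ+1-γ = -σ + (1-γ) by ring, Real.rpow_add ht0]
        ring

private lemma aux_Jeq (σ t : ℝ) (hσ0 : 0 < σ) (hσ1 : σ < 1) (ht : 3 ≤ t) :
    ∫ s in (0:ℝ)..t, (t-s)^(-σ) * (1+s)^(-(1:ℝ)) ≤
      (2^σ + 2/(1-σ)) * (t^(-σ) * Real.log t) := by
  have ht0 : (0:ℝ) < t := by linarith
  have hlog1 : (1:ℝ) ≤ Real.log t := by
    rw [Real.le_log_iff_exp_le ht0]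
    calc Real.exp 1 ≤ 2.7182818286 := (Real.exp_one_lt_d9).le
      _ ≤ t := by linarith
  have hI : ∫ u in (1:ℝ)..(1+t/2), u^(-(1:ℝ)) ≤ Real.log t := by
    rw [intervalIntegral.integral_congr (g := fun u : ℝ => u⁻¹)
      (fun u _ => Real.rpow_neg_one u)]
    rw [integral_inv (by rw [uIcc_of_le (by linarith)]; intro h; linarith [h.1])]
    rw [div_one]
    exact Real.log_le_log (by linarith) (by linarith)
  have h2 : (t/2)^(1-σ) ≤ t^(1-σ) :=
    Real.rpow_le_rpow (by linarith) (by linarith) (by linarith)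
  have hpσ : (0:ℝ) < t^(-σ) := Real.rpow_pos_of_pos ht0 _
  have h2σ : (0:ℝ) < (2:ℝ)^σ := Real.rpow_pos_of_pos (by norm_num) _
  have hkey : t^(-(1:ℝ)) * t^(1-σ) = t^(-σ) := by
    rw [← Real.rpow_add ht0]; congr 1; ring
  have hp1 : (0:ℝ) < t^(-(1:ℝ)) := Real.rpow_pos_of_pos ht0 _
  calc ∫ s in (0:ℝ)..t, (t-s)^(-σ) * (1+s)^(-(1:ℝ))
      ≤ 2^σ * t^(-σ) * (∫ u in (1:ℝ)..(1+t/2), u^(-(1:ℝ)))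
        + (2^|(1:ℝ)| * t^(-(1:ℝ))) * ((t/2)^(1-σ)/(1-σ)) := aux_Jsplit σ 1 t hσ0 hσ1 ht
    _ ≤ 2^σ * t^(-σ) * Real.log t
        + (2^|(1:ℝ)| * t^(-(1:ℝ))) * (t^(1-σ)/(1-σ)) := by
        gcongr <;> linarith
    _ = 2^σ * (t^(-σ) * Real.log t) + (2/(1-σ)) * t^(-σ) := by
        rw [abs_one]
        rw [show (2:ℝ)^(1:ℝ) * t^(-(1:ℝ)) * (t^(1-σ)/(1-σ))
          = ((2:ℝ)^(1:ℝ)/(1-σ)) * (t^(-(1:ℝ)) * t^(1-σ)) by ring, hkey,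
          Real.rpow_one]
        ring
    _ ≤ (2^σ + 2/(1-σ)) * (t^(-σ) * Real.log t) := by
        have h1 : (0:ℝ) < 2/(1-σ) := div_pos (by norm_num) (by linarith)
        have h3 : t^(-σ) ≤ t^(-σ) * Real.log t := by nlinarith
        nlinarith

private lemma aux_Jgt (σ γ t : ℝ) (hσ0 : 0 < σ) (hσ1 : σ < 1) (hγ : 1 < γ) (ht : 3 ≤ t) :
    ∫ s in (0:ℝ)..t, (t-s)^(-σ) * (1+s)^(-γ) ≤
      (2^σ/(γ-1) + 2^|γ|/(1-σ)) * t^(-σ) := by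
  have ht0 : (0:ℝ) < t := by linarith
  have hI : ∫ u in (1:ℝ)..(1+t/2), u^(-γ) ≤ 1/(γ-1) := by
    rw [integral_rpow (Or.inr ⟨by intro h; have := neg_injective h; linarith,
      by rw [uIcc_of_le (by linarith)]; intro h; linarith [h.1]⟩), Real.one_rpow]
    have hA0 : (0:ℝ) < (1+t/2)^(-γ+1) := Real.rpow_pos_of_pos (by linarith) _
    rw [show ((1+t/2)^(-γ+1) - 1)/(-γ+1) = (1 - (1+t/2)^(-γ+1))/(γ-1) by
      rw [show -γ+1 = -(γ-1) by ring, div_neg, ← neg_div]; ring_nf]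
    gcongr
    · linarith
  have h2 : (t/2)^(1-σ) ≤ t^(1-σ) :=
    Real.rpow_le_rpow (by linarith) (by linarith) (by linarith)
  have hpσ : (0:ℝ) < t^(-σ) := Real.rpow_pos_of_pos ht0 _
  have hpγ : (0:ℝ) < t^(-γ) := Real.rpow_pos_of_pos ht0 _
  have h2σ : (0:ℝ) < (2:ℝ)^σ := Real.rpow_pos_of_pos (by norm_num) _
  have h2γ : (0:ℝ) < (2:ℝ)^|γ| := Real.rpow_pos_of_pos (by norm_num) _
  have hswap : t^(-γ) * t^(1-σ) = t^(-σ) * t^(1-γ) := by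
    rw [← Real.rpow_add ht0, ← Real.rpow_add ht0]; ring_nf
  have h1γ : t^(1-γ) ≤ 1 := Real.rpow_le_one_of_one_le_of_nonpos (by linarith) (by linarith)
  calc ∫ s in (0:ℝ)..t, (t-s)^(-σ) * (1+s)^(-γ)
      ≤ 2^σ * t^(-σ) * (∫ u in (1:ℝ)..(1+t/2), u^(-γ))
        + (2^|γ| * t^(-γ)) * ((t/2)^(1-σ)/(1-σ)) := aux_Jsplit σ γ t hσ0 hσ1 ht
    _ ≤ 2^σ * t^(-σ) * (1/(γ-1)) + (2^|γ| * t^(-γ)) * (t^(1-σ)/(1-σ)) := by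
        gcongr <;> linarith
    _ = 2^σ/(γ-1) * t^(-σ) + 2^|γ|/(1-σ) * (t^(-γ) * t^(1-σ)) := by ring
    _ ≤ (2^σ/(γ-1) + 2^|γ|/(1-σ)) * t^(-σ) := by
        rw [hswap]
        have h4 : t^(-σ) * t^(1-γ) ≤ t^(-σ) * 1 :=
          mul_le_mul_of_nonneg_left h1γ hpσ.le
        have h5 : (0:ℝ) < 2^|γ|/(1-σ) := div_pos h2γ (by linarith)
        nlinarith

private lemma aux_hfL1 (N : ℕ) (γ : ℝ) (f : Euc N → ℝ → ℝ)
    (hfm : Measurable (Function.uncurry f)) (C₀ : ℝ) (hC₀ : 0 < C₀)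
    (hf1 : ∀ t : ℝ, 0 < t →
      (∫⁻ y, ENNReal.ofReal |f y t|) ≤ ENNReal.ofReal (C₀ * (1 + t) ^ (-γ)))
    (s : ℝ) (hs : 0 < s) : ∫ y, |f y s| ≤ C₀ * (1+s)^(-γ) := by
  have hfmeas : Measurable (fun y => f y s) := hfm.comp (measurable_id.prodMk measurable_const)
  rw [integral_eq_lintegral_of_nonneg_ae (Filter.Eventually.of_forall fun y => abs_nonneg _)
    hfmeas.abs.aestronglyMeasurable]
  have hb := hf1 s hs
  have h2 : (∫⁻ y, ENNReal.ofReal |f y s|).toReal ≤ (ENNReal.ofReal (C₀*(1+s)^(-γ))).toReal :=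
    ENNReal.toReal_mono ENNReal.ofReal_ne_top hb
  rwa [ENNReal.toReal_ofReal (mul_nonneg hC₀.le (Real.rpow_nonneg (by linarith) _))] at h2

private lemma aux_hfint (N : ℕ) (γ : ℝ) (f : Euc N → ℝ → ℝ)
    (hfm : Measurable (Function.uncurry f)) (C₀ : ℝ)
    (hf1 : ∀ t : ℝ, 0 < t →
      (∫⁻ y, ENNReal.ofReal |f y t|) ≤ ENNReal.ofReal (C₀ * (1 + t) ^ (-γ)))
    (s : ℝ) (hs : 0 < s) : Integrable (fun y => f y s) := by
  have hfmeas : Measurable (fun y => f y s) := hfm.comp (measurable_id.prodMk measurable_const)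
  refine ⟨hfmeas.aestronglyMeasurable, ?_⟩
  rw [hasFiniteIntegral_iff_norm]
  simp only [Real.norm_eq_abs]
  exact lt_of_le_of_lt (hf1 s hs) ENNReal.ofReal_lt_top

private lemma aux_hinner (N : ℕ) (hN : 1 ≤ N) (α β : ℝ)
    (G : Euc N → ℝ) (C₁ : ℝ) (hC₁ : 0 < C₁)
    (hGpos : ∀ ξ : Euc N, ξ ≠ 0 → 0 < G ξ)
    (γ : ℝ) (f : Euc N → ℝ → ℝ) (hfm : Measurable (Function.uncurry f))
    (C₀ : ℝ) (hC₀ : 0 < C₀)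
    (hf1 : ∀ t : ℝ, 0 < t →
      (∫⁻ y, ENNReal.ofReal |f y t|) ≤ ENNReal.ofReal (C₀ * (1 + t) ^ (-γ)))
    (hGbd : ∀ ξ : Euc N, ξ ≠ 0 → G ξ ≤ C₁) (x : Euc N) (s t : ℝ)
    (hs : 0 < s) (hst : s < t) :
    ‖∫ y, kernelY N α β G (x-y) (t-s) * f y s‖ ≤
      C₁ * C₀ * ((t-s)^(-(sigmaStar N α β)) * (1+s)^(-γ)) := by
  have hts : 0 < t - s := by linarith
  have hrp : (0:ℝ) < (t-s)^(-(sigmaStar N α β)) := Real.rpow_pos_of_pos hts _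
  have haeb : ∀ᵐ y : Euc N ∂volume, ‖kernelY N α β G (x-y) (t-s) * f y s‖ ≤
      (C₁*(t-s)^(-(sigmaStar N α β))) * |f y s| := by
    have hx : ∀ᵐ y : Euc N ∂volume, y ≠ x := by
      haveI : Nonempty (Fin N) := ⟨⟨0, hN⟩⟩
      refine (ae_iff).mpr ?_
      have hset : {y : Euc N | ¬ y ≠ x} = {x} := by ext y; simp
      rw [hset]
      exact measure_singleton x
    filter_upwards [hx] with y hy
    have hxy : x - y ≠ 0 := sub_ne_zero.mpr (Ne.symm hy)
    have hξ : ((t-s)^(-(thetaV α β))) • (x - y) ≠ 0 :=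
      smul_ne_zero (ne_of_gt (Real.rpow_pos_of_pos hts _)) hxy
    rw [norm_mul, Real.norm_eq_abs, Real.norm_eq_abs]
    refine mul_le_mul_of_nonneg_right ?_ (abs_nonneg _)
    simp only [kernelY]
    rw [abs_mul, abs_of_pos hrp, abs_of_pos (hGpos _ hξ)]
    calc (t-s)^(-(sigmaStar N α β)) * G (((t-s)^(-(thetaV α β))) • (x-y))
        ≤ (t-s)^(-(sigmaStar N α β)) * C₁ :=
          mul_le_mul_of_nonneg_left (hGbd _ hξ) hrp.le
      _ = C₁ * (t-s)^(-(sigmaStar N α β)) := mul_comm _ _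
  have hgint : Integrable (fun y : Euc N => (C₁*(t-s)^(-(sigmaStar N α β))) * |f y s|) volume :=
    ((aux_hfint N γ f hfm C₀ hf1 s hs).abs.const_mul _)
  calc ‖∫ y, kernelY N α β G (x-y) (t-s) * f y s‖
      ≤ ∫ y, (C₁*(t-s)^(-(sigmaStar N α β))) * |f y s| :=
        norm_integral_le_of_norm_le hgint haeb
    _ = (C₁*(t-s)^(-(sigmaStar N α β))) * ∫ y, |f y s| := integral_const_mul _ _
    _ ≤ (C₁*(t-s)^(-(sigmaStar N α β))) * (C₀*(1+s)^(-γ)) :=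
        mul_le_mul_of_nonneg_left (aux_hfL1 N γ f hfm C₀ hC₀ hf1 s hs)
          (mul_nonneg hC₁.le hrp.le)
    _ = C₁*C₀*((t-s)^(-(sigmaStar N α β))*(1+s)^(-γ)) := by ring

private lemma aux_hptwise (N : ℕ) (hN : 1 ≤ N) (α β : ℝ)
    (G : Euc N → ℝ) (C₁ : ℝ) (hC₁ : 0 < C₁)
    (hGpos : ∀ ξ : Euc N, ξ ≠ 0 → 0 < G ξ)
    (γ : ℝ) (f : Euc N → ℝ → ℝ) (hfm : Measurable (Function.uncurry f))
    (C₀ : ℝ) (hC₀ : 0 < C₀)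
    (hf1 : ∀ t : ℝ, 0 < t →
      (∫⁻ y, ENNReal.ofReal |f y t|) ≤ ENNReal.ofReal (C₀ * (1 + t) ^ (-γ)))
    (hGbd : ∀ ξ : Euc N, ξ ≠ 0 → G ξ ≤ C₁)
    (hσ1 : sigmaStar N α β < 1) (x : Euc N) (t : ℝ) (ht : 3 ≤ t) :
    ‖mildSol N α β G f x t‖ ≤
      C₁ * C₀ * ∫ s in (0:ℝ)..t, (t-s)^(-(sigmaStar N α β)) * (1+s)^(-γ) := by
  have ht0 : (0:ℝ) < t := by linarith
  have hJint : IntervalIntegrable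
      (fun s => (t-s)^(-(sigmaStar N α β))*(1+s)^(-γ)) volume 0 t :=
    aux_gInt _ γ t 0 t hσ1 ht0.le subset_rfl
  have hJint' : IntegrableOn
      (fun s => C₁*C₀*((t-s)^(-(sigmaStar N α β))*(1+s)^(-γ))) (Ioo 0 t) volume :=
    (hJint.1.mono_set Ioo_subset_Ioc_self).const_mul _
  rw [mildSol]
  calc ‖∫ s in Ioo (0:ℝ) t, ∫ y, kernelY N α β G (x - y) (t - s) * f y s‖
      ≤ ∫ s in Ioo (0:ℝ) t, C₁*C₀*((t-s)^(-(sigmaStar N α β))*(1+s)^(-γ)) := by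
        apply MeasureTheory.norm_integral_le_of_norm_le hJint'
        refine (ae_restrict_iff' measurableSet_Ioo).mpr (Filter.Eventually.of_forall ?_)
        intro s hs
        exact aux_hinner N hN α β G C₁ hC₁ hGpos γ f hfm C₀ hC₀ hf1 hGbd x s t hs.1 hs.2
    _ = C₁*C₀ * ∫ s in Ioo (0:ℝ) t, (t-s)^(-(sigmaStar N α β))*(1+s)^(-γ) :=
        integral_const_mul _ _
    _ = C₁*C₀ * ∫ s in (0:ℝ)..t, (t-s)^(-(sigmaStar N α β))*(1+s)^(-γ) := by
        rw [intervalIntegral.integral_of_le ht0.le, integral_Ioc_eq_integral_Ioo]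

end AuxLemmas

theorem compact_upper_N_lt_2beta
    (N : ℕ) (hN : 1 ≤ N) (α β : ℝ) (hα0 : 0 < α) (hα1 : α < 1)
    (hβ0 : 0 < β) (hβ1 : β ≤ 1) (hNβ : (N : ℝ) ≤ 4 * β)
    (G : Euc N → ℝ) (C₁ : ℝ) (hC₁ : 0 < C₁)
    (hGcont : ContinuousOn G {(0 : Euc N)}ᶜ)
    (hGpos : ∀ ξ : Euc N, ξ ≠ 0 → 0 < G ξ)
    (hGin₁ : (N : ℝ) < 4 * β → ∀ ξ : Euc N, ξ ≠ 0 → ‖ξ‖ ≤ 1 → G ξ ≤ C₁)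
    (hGin₂ : (N : ℝ) = 4 * β → ∀ ξ : Euc N, ξ ≠ 0 → ‖ξ‖ ≤ 1 →
      G ξ ≤ C₁ * (1 + |Real.log ‖ξ‖|))
    (hGout : ∀ ξ : Euc N, 1 ≤ ‖ξ‖ → G ξ ≤ C₁ * ‖ξ‖ ^ (-((N : ℝ) + 2 * β)))
    (γ : ℝ) (f : Euc N → ℝ → ℝ) (hfm : Measurable (Function.uncurry f))
    (C₀ : ℝ) (hC₀ : 0 < C₀)
    (hf1 : ∀ t : ℝ, 0 < t →
      (∫⁻ y, ENNReal.ofReal |f y t|) ≤ ENNReal.ofReal (C₀ * (1 + t) ^ (-γ)))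
    (p : ℝ≥0∞) (hp1 : 1 ≤ p)
    (h2β : (N : ℝ) < 2 * β) :
    ∀ K : Set (Euc N), IsCompact K → ∃ C T : ℝ, 0 < C ∧ 2 ≤ T ∧ ∀ t : ℝ, T ≤ t →
      (γ < 1 → eLpNorm (fun x => mildSol N α β G f x t) p (volume.restrict K) ≤ ENNReal.ofReal (C * t ^ (-sigmaStar N α β + 1 - γ))) ∧
      (γ = 1 → eLpNorm (fun x => mildSol N α β G f x t) p (volume.restrict K) ≤ ENNReal.ofReal (C * t ^ (-sigmaStar N α β) * Real.log t)) ∧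
      (1 < γ → eLpNorm (fun x => mildSol N α β G f x t) p (volume.restrict K) ≤ ENNReal.ofReal (C * t ^ (-sigmaStar N α β))) := by
  intro K hK
  have h4β : (N : ℝ) < 4 * β := by linarith
  have hGbd : ∀ ξ : Euc N, ξ ≠ 0 → G ξ ≤ C₁ := by
    intro ξ hξ
    rcases le_or_gt ‖ξ‖ 1 with h | h
    · exact hGin₁ h4β ξ hξ h
    · have hNn : (0:ℝ) ≤ (N : ℝ) := Nat.cast_nonneg N
      calc G ξ ≤ C₁ * ‖ξ‖ ^ (-((N : ℝ) + 2 * β)) := hGout ξ h.le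
        _ ≤ C₁ * 1 := mul_le_mul_of_nonneg_left
            (Real.rpow_le_one_of_one_le_of_nonpos h.le (by linarith)) hC₁.le
        _ = C₁ := mul_one _
  have hθ : 0 < thetaV α β := div_pos hα0 (by linarith)
  have hσ0 : 0 < sigmaStar N α β := by
    have h1 : 0 ≤ (N : ℝ) * thetaV α β := mul_nonneg (Nat.cast_nonneg N) hθ.le
    unfold sigmaStar; linarith
  have hσ1 : sigmaStar N α β < 1 := by
    have h1 : (N : ℝ) * thetaV α β < 2 * β * thetaV α β :=
      mul_lt_mul_of_pos_right h2β hθ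
    have h2 : 2 * β * thetaV α β = α := by
      unfold thetaV; field_simp
    unfold sigmaStar; linarith
  have hKfin : volume K ≠ ⊤ := hK.measure_lt_top.ne
  set Vr : ℝ := (volume K).toReal + 1 with hVrdef
  have hVr : 0 < Vr := by positivity
  have hpow : (volume K) ^ (p.toReal)⁻¹ ≤ ENNReal.ofReal Vr := by
    have he0 : (0:ℝ) ≤ (p.toReal)⁻¹ := by positivity
    have he1 : (p.toReal)⁻¹ ≤ 1 := by
      rcases eq_or_ne p ∞ with hp | hp
      · simp [hp]
      · have h1 : (1 : ℝ≥0∞).toReal ≤ p.toReal := ENNReal.toReal_mono hp hp1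
        simp only [ENNReal.toReal_one] at h1
        exact inv_le_one_of_one_le₀ h1
    rcases le_or_gt (volume K) 1 with h | h
    · refine le_trans (ENNReal.rpow_le_one h he0) ?_
      rw [show (1 : ℝ≥0∞) = ENNReal.ofReal 1 by simp]
      exact ENNReal.ofReal_le_ofReal (by
        have : (0:ℝ) ≤ (volume K).toReal := ENNReal.toReal_nonneg
        linarith)
    · calc (volume K) ^ (p.toReal)⁻¹ ≤ (volume K) ^ (1:ℝ) :=
            ENNReal.rpow_le_rpow_of_exponent_le h.le he1
        _ = volume K := ENNReal.rpow_one _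
        _ = ENNReal.ofReal ((volume K).toReal) := (ENNReal.ofReal_toReal hKfin).symm
        _ ≤ ENNReal.ofReal Vr := ENNReal.ofReal_le_ofReal (by linarith)
  have help : ∀ (A rate t : ℝ), 0 < A → 3 ≤ t →
      (∀ x : Euc N, ‖mildSol N α β G f x t‖ ≤ C₁ * C₀ * (A * rate)) →
      eLpNorm (fun x => mildSol N α β G f x t) p (volume.restrict K) ≤
        ENNReal.ofReal ((Vr * (C₁ * C₀ * A)) * rate) := by
    intro A rate t hA ht hbd
    calc eLpNorm (fun x => mildSol N α β G f x t) p (volume.restrict K)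
        ≤ (volume.restrict K) univ ^ (p.toReal)⁻¹ *
            ENNReal.ofReal (C₁ * C₀ * (A * rate)) :=
          eLpNorm_le_of_ae_bound (Filter.Eventually.of_forall hbd)
      _ = (volume K) ^ (p.toReal)⁻¹ * ENNReal.ofReal (C₁ * C₀ * (A * rate)) := by
          rw [Measure.restrict_apply_univ]
      _ ≤ ENNReal.ofReal Vr * ENNReal.ofReal (C₁ * C₀ * (A * rate)) :=
          mul_le_mul_left hpow _
      _ = ENNReal.ofReal (Vr * (C₁ * C₀ * (A * rate))) :=
          (ENNReal.ofReal_mul hVr.le).symm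
      _ = ENNReal.ofReal ((Vr * (C₁ * C₀ * A)) * rate) := by ring_nf
  rcases lt_trichotomy γ 1 with hγ | hγ | hγ
  · -- γ < 1
    set A : ℝ := 2^(sigmaStar N α β)/(1-γ) + 2^|γ|/(1-(sigmaStar N α β)) with hAdef
    have hA : 0 < A :=
      add_pos (div_pos (Real.rpow_pos_of_pos (by norm_num) _) (by linarith))
        (div_pos (Real.rpow_pos_of_pos (by norm_num) _) (by linarith))
    refine ⟨Vr * (C₁ * C₀ * A), 3, mul_pos hVr (mul_pos (mul_pos hC₁ hC₀) hA), by norm_num, ?_⟩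
    intro t ht
    refine ⟨fun _ => ?_, fun h => absurd h (ne_of_lt hγ), fun h => absurd h (not_lt.mpr hγ.le)⟩
    refine help A (t ^ (-(sigmaStar N α β) + 1 - γ)) t hA ht ?_
    intro x
    refine le_trans (aux_hptwise N hN α β G C₁ hC₁ hGpos γ f hfm C₀ hC₀ hf1 hGbd hσ1 x t ht) ?_
    have := aux_Jlt (sigmaStar N α β) γ t hσ0 hσ1 hγ ht
    exact mul_le_mul_of_nonneg_left this (mul_nonneg hC₁.le hC₀.le)
  · -- γ = 1
    subst hγ
    set A : ℝ := 2^(sigmaStar N α β) + 2/(1-(sigmaStar N α β)) with hAdef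
    have hA : 0 < A :=
      add_pos (Real.rpow_pos_of_pos (by norm_num) _)
        (div_pos (by norm_num) (by linarith))
    refine ⟨Vr * (C₁ * C₀ * A), 3, mul_pos hVr (mul_pos (mul_pos hC₁ hC₀) hA), by norm_num, ?_⟩
    intro t ht
    refine ⟨fun h => absurd h (lt_irrefl 1), fun _ => ?_, fun h => absurd h (lt_irrefl 1)⟩
    have hgoal : eLpNorm (fun x => mildSol N α β G f x t) p (volume.restrict K) ≤
        ENNReal.ofReal ((Vr * (C₁ * C₀ * A)) * (t ^ (-(sigmaStar N α β)) * Real.log t)) := by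
      refine help A (t ^ (-(sigmaStar N α β)) * Real.log t) t hA ht ?_
      intro x
      refine le_trans (aux_hptwise N hN α β G C₁ hC₁ hGpos 1 f hfm C₀ hC₀ hf1 hGbd hσ1 x t ht) ?_
      have := aux_Jeq (sigmaStar N α β) t hσ0 hσ1 ht
      exact mul_le_mul_of_nonneg_left this (mul_nonneg hC₁.le hC₀.le)
    calc eLpNorm (fun x => mildSol N α β G f x t) p (volume.restrict K)
        ≤ ENNReal.ofReal ((Vr * (C₁ * C₀ * A)) * (t ^ (-(sigmaStar N α β)) * Real.log t)) := hgoal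
      _ = ENNReal.ofReal ((Vr * (C₁ * C₀ * A)) * t ^ (-(sigmaStar N α β)) * Real.log t) := by
          congr 1; ring
  · -- γ > 1
    set A : ℝ := 2^(sigmaStar N α β)/(γ-1) + 2^|γ|/(1-(sigmaStar N α β)) with hAdef
    have hA : 0 < A :=
      add_pos (div_pos (Real.rpow_pos_of_pos (by norm_num) _) (by linarith))
        (div_pos (Real.rpow_pos_of_pos (by norm_num) _) (by linarith))
    refine ⟨Vr * (C₁ * C₀ * A), 3, mul_pos hVr (mul_pos (mul_pos hC₁ hC₀) hA), by norm_num, ?_⟩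
    intro t ht
    refine ⟨fun h => absurd h (not_lt.mpr hγ.le), fun h => absurd h (ne_of_gt hγ), fun _ => ?_⟩
    refine help A (t ^ (-(sigmaStar N α β))) t hA ht ?_
    intro x
    refine le_trans (aux_hptwise N hN α β G C₁ hC₁ hGpos γ f hfm C₀ hC₀ hf1 hGbd hσ1 x t ht) ?_
    have := aux_Jgt (sigmaStar N α β) γ t hσ0 hσ1 hγ ht
    exact mul_le_mul_of_nonneg_left this (mul_nonneg hC₁.le hC₀.le)
end
end

section
/- Let K ⊂ ℝ^N be a compact set, let γ ∈ ℝ, and take the specific forcing term f(x,t) := (1+t)^{-γ} 𝟙_{K+B_1(0)}(x). Then there exist c > 0 and T ≥ 2 such that for all t ≥ T and all x ∈ K the mild solution u satisfies u(x,t) ≥ c ρ(t), where ρ(t) is given by: if N < 2β, ρ(t) = t^{-σ*+1-γ} for γ < 1, t^{-σ*} log t for γ = 1, t^{-σ*} for γ > 1; if N = 2β, ρ(t) = t^{-γ} log t for γ ≤ 1, t^{-1} for γ > 1; if 2β < N < 4β, ρ(t) = t^{-γ} for γ < σ*, t^{-σ*} for γ ≥ σ*; if N = 4β, ρ(t) =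 t^{-γ} for γ < 1 + α, t^{-(1+α)} log t for γ ≥ 1 + α. (This shows the compact-set upper estimates are sharp.) -/
open MeasureTheory Real Set Pointwise
open scoped ENNReal

noncomputable section

section AuxG

variable {N : ℕ}

/-- integrability of a function with controlled log-singularity at 0 and power decay. -/
lemma integrableG (hN : 1 ≤ N) {G : Euc N → ℝ} (hGmeas : Measurable G)
    (hGnn : ∀ ξ : Euc N, ξ ≠ 0 → 0 ≤ G ξ)
    {C₁ ρ : ℝ} (hC₁ : 0 < C₁) (hρ : (N : ℝ) < ρ)
    (hGb : ∀ ξ : Euc N, ξ ≠ 0 → ‖ξ‖ ≤ 1 → G ξ ≤ C₁ * (1 + |Real.log ‖ξ‖|))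
    (hGout : ∀ ξ : Euc N, 1 ≤ ‖ξ‖ → G ξ ≤ C₁ * ‖ξ‖ ^ (-ρ)) :
    Integrable G (volume : Measure (Euc N)) := by
  haveI : NeZero N := ⟨by omega⟩
  have hGaesm : AEStronglyMeasurable G (volume : Measure (Euc N)) := hGmeas.aestronglyMeasurable
  set S : ℕ → Set (Euc N) :=
    fun k => Metric.closedBall 0 ((2:ℝ)⁻¹ ^ k) \ Metric.closedBall 0 ((2:ℝ)⁻¹ ^ (k+1)) with hS
  have hSmeas : ∀ k, MeasurableSet (S k) := fun k =>
    measurableSet_closedBall.diff measurableSet_closedBall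
  have hSmem : ∀ k, ∀ ξ ∈ S k, (2:ℝ)⁻¹ ^ (k+1) < ‖ξ‖ ∧ ‖ξ‖ ≤ (2:ℝ)⁻¹ ^ k := by
    intro k ξ hξ
    obtain ⟨h1, h2⟩ := hξ
    simp only [Metric.mem_closedBall, dist_zero_right, not_le] at h1 h2
    exact ⟨h2, h1⟩
  have hSbound : ∀ k : ℕ, ∀ ξ ∈ S k, ‖G ξ‖ ≤ C₁ * ((k : ℝ) + 2) := by
    intro k ξ hξ
    obtain ⟨hlo, hhi⟩ := hSmem k ξ hξ
    have hξ0 : ξ ≠ 0 := by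
      intro h
      rw [h, norm_zero] at hlo
      exact absurd hlo (not_lt.2 (by positivity))
    have hξ1 : ‖ξ‖ ≤ 1 := hhi.trans (pow_le_one₀ (by norm_num) (by norm_num))
    have hnpos : 0 < ‖ξ‖ := lt_of_le_of_lt (by positivity) hlo
    have hlog : |Real.log ‖ξ‖| ≤ (k : ℝ) + 1 := by
      have h1 : Real.log ‖ξ‖ ≤ 0 := Real.log_nonpos hnpos.le hξ1
      have h2 : Real.log ((2:ℝ)⁻¹ ^ (k+1)) ≤ Real.log ‖ξ‖ :=
        Real.log_le_log (by positivity) hlo.le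
      have h3 : Real.log ((2:ℝ)⁻¹ ^ (k+1)) = -(((k:ℝ)+1) * Real.log 2) := by
        rw [Real.log_pow, Real.log_inv]
        push_cast; ring
      have h4 : Real.log 2 ≤ 1 := by
        have := Real.log_le_sub_one_of_pos (by norm_num : (0:ℝ) < 2); linarith
      have h5 : 0 ≤ Real.log 2 := Real.log_nonneg one_le_two
      rw [abs_of_nonpos h1]
      rw [h3] at h2
      have h6 : ((k:ℝ)+1) * Real.log 2 ≤ ((k:ℝ)+1) * 1 :=
        mul_le_mul_of_nonneg_left h4 (by positivity)
      linarith
    rw [Real.norm_eq_abs, abs_of_nonneg (hGnn ξ hξ0)]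
    calc G ξ ≤ C₁ * (1 + |Real.log ‖ξ‖|) := hGb ξ hξ0 hξ1
      _ ≤ C₁ * ((k:ℝ) + 2) := by nlinarith
  have hSfin : ∀ k : ℕ, volume (S k) ≠ ⊤ := fun k =>
    (lt_of_le_of_lt (measure_mono diff_subset) measure_closedBall_lt_top).ne
  have hSint : ∀ k, IntegrableOn G (S k) := by
    intro k
    apply Measure.integrableOn_of_bounded (hSfin k) hGaesm
    rw [ae_restrict_iff' (hSmeas k)]
    exact Filter.Eventually.of_forall (hSbound k)
  set Vb : ℝ := (volume (Metric.ball (0:Euc N) 1)).toReal with hVb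
  have hVbnn : 0 ≤ Vb := ENNReal.toReal_nonneg
  have hSvol : ∀ k : ℕ, (volume (S k)).toReal ≤ (2:ℝ)⁻¹ ^ k * Vb := by
    intro k
    have h1 : volume (S k) ≤ volume (Metric.closedBall (0:Euc N) ((2:ℝ)⁻¹ ^ k)) :=
      measure_mono diff_subset
    have h2 : volume (Metric.closedBall (0:Euc N) ((2:ℝ)⁻¹ ^ k))
        = ENNReal.ofReal (((2:ℝ)⁻¹ ^ k) ^ Module.finrank ℝ (Euc N)) * volume (Metric.ball (0:Euc N) 1) :=
      Measure.addHaar_closedBall volume 0 (by positivity)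
    have h3 : (volume (S k)).toReal ≤ (volume (Metric.closedBall (0:Euc N) ((2:ℝ)⁻¹ ^ k))).toReal := by
      apply ENNReal.toReal_mono _ h1
      rw [h2]
      exact (ENNReal.mul_lt_top ENNReal.ofReal_lt_top measure_ball_lt_top).ne
    refine h3.trans ?_
    rw [h2, ENNReal.toReal_mul, ENNReal.toReal_ofReal (by positivity)]
    have h4 : ((2:ℝ)⁻¹ ^ k) ^ Module.finrank ℝ (Euc N) ≤ (2:ℝ)⁻¹ ^ k := by
      have h5 : ((2:ℝ)⁻¹ ^ k) ^ Module.finrank ℝ (Euc N) ≤ ((2:ℝ)⁻¹ ^ k) ^ 1 := by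
        apply pow_le_pow_of_le_one (by positivity) (pow_le_one₀ (by norm_num) (by norm_num))
        rw [finrank_euclideanSpace_fin]; omega
      simpa using h5
    exact mul_le_mul_of_nonneg_right h4 hVbnn
  have hSsum : Summable fun k : ℕ => ∫ ξ in S k, ‖G ξ‖ := by
    have hmaj : Summable fun k : ℕ => (C₁ * ((k:ℝ)+2)) * ((2:ℝ)⁻¹ ^ k * Vb) := by
      have hs1 : Summable fun k : ℕ => (k:ℝ) * (2:ℝ)⁻¹ ^ k := by
        simpa using summable_pow_mul_geometric_of_norm_lt_one (R := ℝ) 1 (r := (2:ℝ)⁻¹)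
          (by rw [Real.norm_eq_abs, abs_of_pos (by norm_num : (0:ℝ) < 2⁻¹)]; norm_num)
      have hs2 : Summable fun k : ℕ => ((2:ℝ)⁻¹) ^ k :=
        summable_geometric_of_lt_one (by norm_num) (by norm_num)
      have := ((hs1.mul_left (C₁ * Vb)).add (hs2.mul_left (2 * C₁ * Vb)))
      exact this.congr (fun k => by ring)
    apply Summable.of_nonneg_of_le (fun k => integral_nonneg fun ξ => norm_nonneg _) _ hmaj
    intro k
    have h1 : ‖∫ ξ in S k, ‖G ξ‖‖ ≤ (C₁ * ((k:ℝ)+2)) * (volume (S k)).toReal := by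
      apply norm_setIntegral_le_of_norm_le_const (lt_top_iff_ne_top.2 (hSfin k))
      · intro ξ hξ
        rw [norm_norm]
        exact hSbound k ξ hξ
    calc ∫ ξ in S k, ‖G ξ‖ ≤ ‖∫ ξ in S k, ‖G ξ‖‖ := le_abs_self _
      _ ≤ (C₁ * ((k:ℝ)+2)) * (volume (S k)).toReal := h1
      _ ≤ (C₁ * ((k:ℝ)+2)) * ((2:ℝ)⁻¹ ^ k * Vb) :=
          mul_le_mul_of_nonneg_left (hSvol k) (by positivity)
  have hUnion : Metric.closedBall (0:Euc N) 1 \ {0} ⊆ ⋃ k, S k := by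
    intro ξ hξ
    obtain ⟨hξ1, hξ0⟩ := hξ
    have hr : 0 < ‖ξ‖ := norm_pos_iff.2 hξ0
    have hr1 : ‖ξ‖ ≤ 1 := by
      simpa [Metric.mem_closedBall, dist_zero_right] using hξ1
    have hex : ∃ n : ℕ, (2:ℝ)⁻¹ ^ n < ‖ξ‖ := exists_pow_lt_of_lt_one hr (by norm_num)
    classical
    have hP : (2:ℝ)⁻¹ ^ (Nat.find hex) < ‖ξ‖ := Nat.find_spec hex
    have hn₀pos : Nat.find hex ≠ 0 := by
      intro h
      rw [h, pow_zero] at hP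
      exact absurd hr1 (not_le.2 hP)
    obtain ⟨k, hk⟩ := Nat.exists_eq_succ_of_ne_zero hn₀pos
    have hkk : ¬((2:ℝ)⁻¹ ^ k < ‖ξ‖) := Nat.find_min hex (by omega)
    rw [hk] at hP
    refine mem_iUnion.2 ⟨k, ?_, ?_⟩
    · simpa [Metric.mem_closedBall, dist_zero_right] using not_lt.1 hkk
    · simp only [Metric.mem_closedBall, dist_zero_right, not_le]
      exact hP
  have hInner : IntegrableOn G (Metric.closedBall (0:Euc N) 1) := by
    have h1 : IntegrableOn G (⋃ k, S k) :=
      integrableOn_iUnion_of_summable_integral_norm hSint hSsum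
    have h0 : IntegrableOn G ({0} : Set (Euc N)) := by
      rw [IntegrableOn, Measure.restrict_eq_zero.2 (measure_singleton 0)]
      exact integrable_zero_measure
    refine (h1.union h0).mono_set (fun ξ hξ => ?_)
    by_cases h : ξ = 0
    · exact Or.inr (by simp [h])
    · exact Or.inl (hUnion ⟨hξ, h⟩)
  have hρ0 : 0 < ρ := lt_of_le_of_lt (by positivity) hρ
  have hOuter : IntegrableOn G (Metric.closedBall (0:Euc N) 1)ᶜ := by
    have hρ' : (Module.finrank ℝ (Euc N) : ℝ) < ρ := by
      rw [finrank_euclideanSpace_fin]; exact hρ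
    have hmaj : Integrable (fun ξ : Euc N => (C₁ * 2 ^ ρ) * (1+‖ξ‖) ^ (-ρ)) :=
      (integrable_one_add_norm hρ').const_mul _
    refine Integrable.mono' hmaj.integrableOn hGaesm.restrict ?_
    rw [ae_restrict_iff' measurableSet_closedBall.compl]
    refine Filter.Eventually.of_forall (fun ξ hξ => ?_)
    have h1 : 1 < ‖ξ‖ := by
      simp only [mem_compl_iff, Metric.mem_closedBall, dist_zero_right, not_le] at hξ
      exact hξ
    have hξ0 : ξ ≠ 0 := by
      intro h; rw [h, norm_zero] at h1; linarith
    rw [Real.norm_eq_abs, abs_of_nonneg (hGnn ξ hξ0)]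
    have h2 := hGout ξ h1.le
    have h4 : (1+‖ξ‖)/2 ≤ ‖ξ‖ := by linarith
    have h5 : ‖ξ‖ ^ (-ρ) ≤ ((1+‖ξ‖)/2) ^ (-ρ) :=
      Real.rpow_le_rpow_of_nonpos (by linarith) h4 (by linarith)
    have h6 : ((1+‖ξ‖)/2) ^ (-ρ) = 2 ^ ρ * (1+‖ξ‖) ^ (-ρ) := by
      rw [Real.div_rpow (by linarith) (by norm_num : (0:ℝ) ≤ 2),
        Real.rpow_neg (by norm_num : (0:ℝ) ≤ 2)]
      field_simp
    calc G ξ ≤ C₁ * ‖ξ‖ ^ (-ρ) := h2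
      _ ≤ C₁ * (2 ^ ρ * (1+‖ξ‖) ^ (-ρ)) := by
          apply mul_le_mul_of_nonneg_left _ hC₁.le
          rw [← h6]; exact h5
      _ = (C₁ * 2 ^ ρ) * (1+‖ξ‖) ^ (-ρ) := by ring
  have : IntegrableOn G (univ : Set (Euc N)) := by
    rw [← Set.union_compl_self (Metric.closedBall (0:Euc N) 1)]
    exact hInner.union hOuter
  rwa [integrableOn_univ] at this

end AuxG

section Core

lemma coreLower (N : ℕ) (hN : 1 ≤ N) (α β : ℝ) (hα0 : 0 < α) (hα1 : α < 1)
    (hβ0 : 0 < β)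
    (G : Euc N → ℝ) (hGmeas : Measurable G)
    (hGnn : ∀ ξ : Euc N, ξ ≠ 0 → 0 ≤ G ξ)
    (hGint : Integrable G (volume : Measure (Euc N)))
    (γ : ℝ) (W : Set (Euc N)) (hWmeas : MeasurableSet W)
    (x : Euc N) (hxW : Metric.ball x 1 ⊆ W)
    (t : ℝ) (ht : 2 ≤ t) (a b : ℝ) (ha : 0 ≤ a) (hab : a ≤ b) (hb : b ≤ t - 1)
    (ψ : ℝ → ℝ) (hψint : IntegrableOn ψ (Ioo a b) volume)
    (hψnn : ∀ s ∈ Ioo a b, 0 ≤ ψ s)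
    (hψle : ∀ s ∈ Ioo a b, ∀ y ∈ Metric.ball x 1, y ≠ x →
      ψ s ≤ (t - s) ^ (-(sigmaStar N α β)) * (1 + s) ^ (-γ)
        * G (((t - s) ^ (-(thetaV α β))) • (x - y))) :
    (volume (Metric.ball (0 : Euc N) 1)).toReal * ∫ s in Ioo a b, ψ s
      ≤ mildSol N α β G (fun y s => W.indicator (fun _ => (1 + s) ^ (-γ)) y) x t := by
  haveI : NeZero N := ⟨by omega⟩
  set σ : ℝ := sigmaStar N α β with hσdef
  set θ : ℝ := thetaV α β with hθdef
  have hθpos : 0 < θ := div_pos hα0 (by linarith)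
  have hσval : σ = 1 - α + (N : ℝ) * θ := rfl
  have hσpos : 0 < σ := by
    have h1 : 0 ≤ (N:ℝ) * θ := by positivity
    rw [hσval]; linarith
  have ht0 : (0:ℝ) < t := by linarith
  set f : Euc N → ℝ → ℝ := fun y s => W.indicator (fun _ => (1 + s) ^ (-γ)) y with hf
  set κ : ℝ → Euc N → ℝ := fun s y => kernelY N α β G (x - y) (t - s) * f y s with hκ
  have hmild : mildSol N α β G f x t = ∫ s in Ioo 0 t, ∫ y, κ s y := rfl
  -- amplitude bound
  set A : ℝ := max 1 ((1 + t) ^ (-γ)) with hA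
  have hApt : ∀ s : ℝ, 0 < s → s < t → (1 + s) ^ (-γ) ≤ A := by
    intro s hs1 hs2
    rcases le_total 0 γ with hγ | hγ
    · exact le_max_of_le_left (Real.rpow_le_one_of_one_le_of_nonpos (by linarith) (by linarith))
    · exact le_max_of_le_right (Real.rpow_le_rpow (by linarith) (by linarith) (by linarith))
  have hAnn : (0:ℝ) ≤ A := le_trans zero_le_one (le_max_left _ _)
  -- measurability in y
  have hκmeas : ∀ s : ℝ, Measurable (κ s) := by
    intro s
    have h1 : Measurable fun y : Euc N => kernelY N α β G (x - y) (t - s) := by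
      simp only [kernelY]
      exact measurable_const.mul (hGmeas.comp
        (Continuous.measurable (by fun_prop)))
    exact h1.mul (measurable_const.indicator hWmeas)
  -- majorant
  set IG : ℝ := ∫ z : Euc N, ‖G z‖ with hIG
  have hmaj_int : ∀ s : ℝ, s < t →
      Integrable (fun y : Euc N => A * ((t - s) ^ (-σ) * ‖G (((t - s) ^ (-θ)) • (x - y))‖))
        (volume : Measure (Euc N)) := by
    intro s hs
    have hc : ((t - s) ^ (-θ)) ≠ 0 := (Real.rpow_pos_of_pos (by linarith) _).ne'
    have h1 : Integrable (fun z : Euc N => ‖G (((t - s) ^ (-θ)) • z)‖) :=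
      (integrable_comp_smul_iff volume (fun z => ‖G z‖) hc).2 hGint.norm
    exact ((h1.comp_sub_left x).const_mul _).const_mul _
  have hκ_le_maj : ∀ s ∈ Ioo (0:ℝ) t, ∀ y : Euc N,
      ‖κ s y‖ ≤ A * ((t - s) ^ (-σ) * ‖G (((t - s) ^ (-θ)) • (x - y))‖) := by
    intro s hs y
    have hts : (0:ℝ) < t - s := by linarith [hs.2]
    have hfA : |f y s| ≤ A := by
      by_cases hy : y ∈ W
      · simp only [hf, Set.indicator_of_mem hy]
        rw [abs_of_nonneg (Real.rpow_nonneg (by linarith [hs.1]) _)]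
        exact hApt s hs.1 hs.2
      · simp only [hf, Set.indicator_of_notMem hy, abs_zero]
        exact hAnn
    have e1 : ‖κ s y‖ = ((t - s) ^ (-σ) * ‖G (((t - s) ^ (-θ)) • (x - y))‖) * |f y s| := by
      simp only [hκ, kernelY, ← hσdef, ← hθdef]
      rw [norm_mul, norm_mul, Real.norm_eq_abs ((t-s) ^ (-σ)),
        abs_of_nonneg (Real.rpow_nonneg hts.le _), Real.norm_eq_abs (f y s)]
    rw [e1]
    calc ((t - s) ^ (-σ) * ‖G (((t - s) ^ (-θ)) • (x - y))‖) * |f y s|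
        ≤ ((t - s) ^ (-σ) * ‖G (((t - s) ^ (-θ)) • (x - y))‖) * A := by
          apply mul_le_mul_of_nonneg_left hfA (by positivity)
      _ = A * ((t - s) ^ (-σ) * ‖G (((t - s) ^ (-θ)) • (x - y))‖) := by ring
  have hκ_int : ∀ s ∈ Ioo (0:ℝ) t, Integrable (κ s) := by
    intro s hs
    exact Integrable.mono' (hmaj_int s hs.2) ((hκmeas s).aestronglyMeasurable)
      (Filter.Eventually.of_forall (hκ_le_maj s hs))
  have hae_ne : ∀ᵐ y : Euc N, y ≠ x := by
    rw [ae_iff]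
    simp only [not_ne_iff, setOf_eq_eq_singleton]
    exact measure_singleton x
  have hκ_nonneg : ∀ s ∈ Ioo (0:ℝ) t, ∀ y : Euc N, y ≠ x → 0 ≤ κ s y := by
    intro s hs y hyx
    have hts : (0:ℝ) < t - s := by linarith [hs.2]
    have hG0 : 0 ≤ G (((t - s) ^ (-θ)) • (x - y)) :=
      hGnn _ (smul_ne_zero (Real.rpow_pos_of_pos hts _).ne' (sub_ne_zero.2 (Ne.symm hyx)))
    have hf0 : 0 ≤ f y s :=
      Set.indicator_nonneg (fun _ _ => Real.rpow_nonneg (by linarith [hs.1]) _) y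
    simp only [hκ, kernelY, ← hσdef, ← hθdef]
    exact mul_nonneg (mul_nonneg (Real.rpow_nonneg hts.le _) hG0) hf0
  set F : ℝ → ℝ := fun s => ∫ y, κ s y with hF
  have hFnn : ∀ s ∈ Ioo (0:ℝ) t, 0 ≤ F s := by
    intro s hs
    apply integral_nonneg_of_ae
    filter_upwards [hae_ne] with y hy using hκ_nonneg s hs y hy
  have hFmeas : AEStronglyMeasurable F (volume.restrict (Ioo 0 t)) := by
    have hmrpow : ∀ e : ℝ, Measurable fun u : ℝ => u ^ e := fun e =>
      measurable_of_continuousOn_compl_singleton 0 (fun u hu =>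
        (Real.continuousAt_rpow_const u e (Or.inl hu)).continuousWithinAt)
    have m0 : Measurable fun p : ℝ × Euc N => ((t - p.1) ^ (-θ)) • (x - p.2) := by
      have h1 : Measurable fun p : ℝ × Euc N => (((t - p.1) ^ (-θ)), (x - p.2)) :=
        (((hmrpow (-θ)).comp (measurable_const.sub measurable_fst)).prodMk
          (measurable_const.sub measurable_snd))
      exact continuous_smul.measurable.comp h1
    have m1 : Measurable fun p : ℝ × Euc N => (t - p.1) ^ (-σ) :=
      (hmrpow (-σ)).comp (measurable_const.sub measurable_fst)
    have m2 : Measurable fun p : ℝ × Euc N => G (((t - p.1) ^ (-θ)) • (x - p.2)) :=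
      hGmeas.comp m0
    have m3 : Measurable fun p : ℝ × Euc N => f p.2 p.1 := by
      have e : (fun p : ℝ × Euc N => f p.2 p.1)
          = fun p => ((1 + p.1) ^ (-γ)) * W.indicator (fun _ => (1:ℝ)) p.2 := by
        funext p
        by_cases h : p.2 ∈ W <;>
          simp [hf, Set.indicator_of_mem, Set.indicator_of_notMem, h]
      rw [e]
      exact ((hmrpow (-γ)).comp (measurable_const.add measurable_fst)).mul
        ((measurable_const.indicator hWmeas).comp measurable_snd)
    have hΦ : StronglyMeasurable fun p : ℝ × Euc N => κ p.1 p.2 := by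
      apply Measurable.stronglyMeasurable
      simp only [hκ, kernelY, ← hσdef, ← hθdef]
      exact (m1.mul m2).mul m3
    exact hΦ.integral_prod_right'.aestronglyMeasurable.restrict
  have hFle : ∀ s ∈ Ioo (0:ℝ) t, F s ≤ (A * IG) * (t - s) ^ (α - 1) := by
    intro s hs
    have hts : (0:ℝ) < t - s := by linarith [hs.2]
    have h1 : F s ≤ ∫ y, A * ((t - s) ^ (-σ) * ‖G (((t - s) ^ (-θ)) • (x - y))‖) := by
      apply integral_mono (hκ_int s hs) (hmaj_int s hs.2)
      intro y
      refine le_trans (le_abs_self _) ?_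
      rw [← Real.norm_eq_abs]
      exact hκ_le_maj s hs y
    have h2 : (∫ y, A * ((t - s) ^ (-σ) * ‖G (((t - s) ^ (-θ)) • (x - y))‖))
        = A * ((t - s) ^ (-σ) * ((t - s) ^ (θ * (N:ℝ)) * IG)) := by
      rw [integral_const_mul]
      congr 1
      rw [integral_const_mul]
      congr 1
      have e1 : (∫ y : Euc N, ‖G (((t - s) ^ (-θ)) • (x - y))‖)
          = ∫ z : Euc N, ‖G (((t - s) ^ (-θ)) • z)‖ :=
        integral_sub_left_eq_self (fun z : Euc N => ‖G (((t - s) ^ (-θ)) • z)‖) volume x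
      rw [e1, Measure.integral_comp_smul volume (fun z => ‖G z‖) ((t - s) ^ (-θ)),
        finrank_euclideanSpace_fin, smul_eq_mul, ← hIG]
      congr 1
      rw [← Real.rpow_natCast ((t - s) ^ (-θ)) N, ← Real.rpow_mul hts.le,
        ← Real.rpow_neg hts.le, abs_of_nonneg (Real.rpow_nonneg hts.le _)]
      congr 1
      ring
    have h4 : (t-s) ^ (-σ) * (t-s) ^ (θ * (N:ℝ)) = (t-s) ^ (α-1) := by
      rw [← Real.rpow_add hts]
      congr 1
      rw [hσval]; ring
    calc F s ≤ _ := h1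
      _ = A * ((t - s) ^ (-σ) * ((t - s) ^ (θ * (N:ℝ)) * IG)) := h2
      _ = (A * IG) * ((t-s)^(-σ) * (t-s)^(θ * (N:ℝ))) := by ring
      _ = (A * IG) * (t - s) ^ (α - 1) := by rw [h4]
  have hbound_int : IntegrableOn (fun s => (A * IG) * (t - s) ^ (α - 1)) (Ioo 0 t) volume := by
    have h1 : IntervalIntegrable (fun τ : ℝ => τ ^ (α - 1)) volume 0 t :=
      intervalIntegral.intervalIntegrable_rpow' (by linarith)
    have h2 := (h1.comp_sub_left t).const_mul (A * IG)
    rw [sub_zero, sub_self] at h2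
    have h3 := h2.symm
    rw [intervalIntegrable_iff, uIoc_of_le ht0.le] at h3
    exact h3.mono_set Ioo_subset_Ioc_self
  have hFint : IntegrableOn F (Ioo 0 t) volume := by
    apply Integrable.mono' hbound_int hFmeas
    rw [ae_restrict_iff' measurableSet_Ioo]
    refine Filter.Eventually.of_forall (fun s hs => ?_)
    rw [Real.norm_eq_abs, abs_of_nonneg (hFnn s hs)]
    exact hFle s hs
  have hsub : Ioo a b ⊆ Ioo 0 t := fun s hs =>
    ⟨lt_of_le_of_lt ha hs.1, lt_of_lt_of_le hs.2 (by linarith)⟩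
  have step1 : ∫ s in Ioo a b, F s ≤ ∫ s in Ioo 0 t, F s := by
    apply setIntegral_mono_set hFint
    · rw [Filter.EventuallyLE, ae_restrict_iff' measurableSet_Ioo]
      exact Filter.Eventually.of_forall (fun s hs => hFnn s hs)
    · exact HasSubset.Subset.eventuallyLE hsub
  have step2 : ∀ s ∈ Ioo a b, (volume (Metric.ball (0:Euc N) 1)).toReal * ψ s ≤ F s := by
    intro s hs
    have hsIoo : s ∈ Ioo (0:ℝ) t := hsub hs
    have hle : ∀ y : Euc N, y ≠ x →
        (Metric.ball x 1).indicator (fun _ => ψ s) y ≤ κ s y := by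
      intro y hyx
      by_cases hy : y ∈ Metric.ball x 1
      · rw [Set.indicator_of_mem hy]
        have h1 := hψle s hs y hy hyx
        have e : κ s y = (t - s) ^ (-σ) * (1 + s) ^ (-γ)
            * G (((t - s) ^ (-θ)) • (x - y)) := by
          simp only [hκ, kernelY, ← hσdef, ← hθdef, hf]
          rw [Set.indicator_of_mem (hxW hy)]
          ring
        rw [e]
        exact h1
      · rw [Set.indicator_of_notMem hy]
        exact hκ_nonneg s hsIoo y hyx
    have h2 : (∫ y, (Metric.ball x 1).indicator (fun _ => ψ s) y) ≤ ∫ y, κ s y := by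
      apply integral_mono_ae
      · exact (integrable_indicator_iff measurableSet_ball).2
          (integrableOn_const measure_ball_lt_top.ne)
      · exact hκ_int s hsIoo
      · filter_upwards [hae_ne] with y hy using hle y hy
    have h3 : (∫ y, (Metric.ball x 1).indicator (fun _ => ψ s) y)
        = (volume (Metric.ball (0:Euc N) 1)).toReal * ψ s := by
      rw [integral_indicator_const (ψ s) measurableSet_ball, measureReal_def,
        Measure.addHaar_ball_center volume x 1, smul_eq_mul]
    rw [← h3]
    exact h2
  have step3 : ∫ s in Ioo a b, (volume (Metric.ball (0:Euc N) 1)).toReal * ψ s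
      ≤ ∫ s in Ioo a b, F s :=
    setIntegral_mono_on (hψint.const_mul _) (hFint.mono_set hsub) measurableSet_Ioo step2
  calc (volume (Metric.ball (0:Euc N) 1)).toReal * ∫ s in Ioo a b, ψ s
      = ∫ s in Ioo a b, (volume (Metric.ball (0:Euc N) 1)).toReal * ψ s :=
        (integral_const_mul _ _).symm
    _ ≤ ∫ s in Ioo a b, F s := step3
    _ ≤ ∫ s in Ioo 0 t, F s := step1
    _ = mildSol N α β G f x t := hmild.symm

end Core


set_option maxHeartbeats 1000000 in
theorem compact_lower_optimal
    (N : ℕ) (hN : 1 ≤ N) (α β : ℝ) (hα0 : 0 < α) (hα1 : α < 1)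
    (hβ0 : 0 < β) (hβ1 : β ≤ 1) (hNβ : (N : ℝ) ≤ 4 * β)
    (G : Euc N → ℝ) (C₁ : ℝ) (hC₁ : 0 < C₁)
    (hGcont : ContinuousOn G {(0 : Euc N)}ᶜ)
    (hGpos : ∀ ξ : Euc N, ξ ≠ 0 → 0 < G ξ)
    (hGin₁ : (N : ℝ) < 4 * β → ∀ ξ : Euc N, ξ ≠ 0 → ‖ξ‖ ≤ 1 → G ξ ≤ C₁)
    (hGin₂ : (N : ℝ) = 4 * β → ∀ ξ : Euc N, ξ ≠ 0 → ‖ξ‖ ≤ 1 →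
      G ξ ≤ C₁ * (1 + |Real.log ‖ξ‖|))
    (hGout : ∀ ξ : Euc N, 1 ≤ ‖ξ‖ → G ξ ≤ C₁ * ‖ξ‖ ^ (-((N : ℝ) + 2 * β)))
    (c₁ : ℝ) (hc₁ : 0 < c₁)
    (hGlow₁ : (N : ℝ) < 4 * β → ∀ ξ : Euc N, ξ ≠ 0 → ‖ξ‖ ≤ 1 → c₁ ≤ G ξ)
    (hGlow₂ : (N : ℝ) = 4 * β → ∀ ξ : Euc N, ξ ≠ 0 → ‖ξ‖ ≤ 1 →
      c₁ * (1 + |Real.log ‖ξ‖|) ≤ G ξ)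
    (γ : ℝ) :
    ∀ K : Set (Euc N), IsCompact K → ∃ c T : ℝ, 0 < c ∧ 2 ≤ T ∧
      ∀ t : ℝ, T ≤ t → ∀ x ∈ K,
      ((N : ℝ) < 2 * β →
        (γ < 1 → c * t ^ (-sigmaStar N α β + 1 - γ) ≤ mildSol N α β G (fun (y : Euc N) (s : ℝ) => Set.indicator (K + Metric.ball (0 : Euc N) 1) (fun _ => (1 + s) ^ (-γ)) y) x t) ∧
        (γ = 1 → c * t ^ (-sigmaStar N α β) * Real.log t ≤ mildSol N α β G (fun (y : Euc N) (s : ℝ) => Set.indicator (K + Metric.ball (0 : Euc N) 1) (fun _ => (1 + s) ^ (-γ)) y) x t) ∧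
        (1 < γ → c * t ^ (-sigmaStar N α β) ≤ mildSol N α β G (fun (y : Euc N) (s : ℝ) => Set.indicator (K + Metric.ball (0 : Euc N) 1) (fun _ => (1 + s) ^ (-γ)) y) x t)) ∧
      ((N : ℝ) = 2 * β →
        (γ ≤ 1 → c * t ^ (-γ) * Real.log t ≤ mildSol N α β G (fun (y : Euc N) (s : ℝ) => Set.indicator (K + Metric.ball (0 : Euc N) 1) (fun _ => (1 + s) ^ (-γ)) y) x t) ∧
        (1 < γ → c * t ^ (-1 : ℝ) ≤ mildSol N α β G (fun (y : Euc N) (s : ℝ) => Set.indicator (K + Metric.ball (0 : Euc N) 1) (fun _ => (1 + s) ^ (-γ)) y) x t)) ∧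
      (2 * β < (N : ℝ) ∧ (N : ℝ) < 4 * β →
        (γ < sigmaStar N α β → c * t ^ (-γ) ≤ mildSol N α β G (fun (y : Euc N) (s : ℝ) => Set.indicator (K + Metric.ball (0 : Euc N) 1) (fun _ => (1 + s) ^ (-γ)) y) x t) ∧
        (sigmaStar N α β ≤ γ → c * t ^ (-sigmaStar N α β) ≤ mildSol N α β G (fun (y : Euc N) (s : ℝ) => Set.indicator (K + Metric.ball (0 : Euc N) 1) (fun _ => (1 + s) ^ (-γ)) y) x t)) ∧
      ((N : ℝ) = 4 * β →
        (γ < 1 + α → c * t ^ (-γ) ≤ mildSol N α β G (fun (y : Euc N) (s : ℝ) => Set.indicator (K + Metric.ball (0 : Euc N) 1) (fun _ => (1 + s) ^ (-γ)) y) x t) ∧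
        (1 + α ≤ γ → c * t ^ (-(1 + α)) * Real.log t ≤ mildSol N α β G (fun (y : Euc N) (s : ℝ) => Set.indicator (K + Metric.ball (0 : Euc N) 1) (fun _ => (1 + s) ^ (-γ)) y) x t)) := by
  intro K hK
  haveI : NeZero N := ⟨by omega⟩
  have hβ2 : (0:ℝ) < 2 * β := by linarith
  have hθval : thetaV α β = α / (2 * β) := rfl
  have hθpos : 0 < thetaV α β := div_pos hα0 hβ2
  have hσval : sigmaStar N α β = 1 - α + (N : ℝ) * thetaV α β := rfl
  have hNθnn : 0 ≤ (N : ℝ) * thetaV α β := by positivity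
  have hσpos : 0 < sigmaStar N α β := by rw [hσval]; linarith
  -- G facts
  have hGmeas : Measurable G := measurable_of_continuousOn_compl_singleton 0 hGcont
  have hGnn : ∀ ξ : Euc N, ξ ≠ 0 → 0 ≤ G ξ := fun ξ h => (hGpos ξ h).le
  have hGb : ∀ ξ : Euc N, ξ ≠ 0 → ‖ξ‖ ≤ 1 → G ξ ≤ C₁ * (1 + |Real.log ‖ξ‖|) := by
    rcases lt_or_eq_of_le hNβ with h | h
    · intro ξ h0 h1
      have h2 : (1:ℝ) ≤ 1 + |Real.log ‖ξ‖| := by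
        have := abs_nonneg (Real.log ‖ξ‖); linarith
      exact (hGin₁ h ξ h0 h1).trans (le_mul_of_one_le_right hC₁.le h2)
    · exact hGin₂ h
  have hGint : Integrable G (volume : Measure (Euc N)) :=
    integrableG hN hGmeas hGnn hC₁ (by linarith : (N:ℝ) < (N:ℝ) + 2 * β) hGb hGout
  have hGlb : ∀ ξ : Euc N, ξ ≠ 0 → ‖ξ‖ ≤ 1 → c₁ ≤ G ξ := by
    rcases lt_or_eq_of_le hNβ with h | h
    · exact hGlow₁ h
    · intro ξ h0 h1
      refine le_trans ?_ (hGlow₂ h ξ h0 h1)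
      nlinarith [abs_nonneg (Real.log ‖ξ‖)]
  -- the support set
  set W : Set (Euc N) := K + Metric.ball (0:Euc N) 1 with hW
  have hWmeas : MeasurableSet W := (IsOpen.add_left Metric.isOpen_ball).measurableSet
  have hballW : ∀ x ∈ K, Metric.ball x 1 ⊆ W := by
    intro x hx y hy
    have h1 : y - x ∈ Metric.ball (0:Euc N) 1 := by
      rw [Metric.mem_ball, dist_zero_right, ← dist_eq_norm]
      rw [Metric.mem_ball] at hy
      exact hy
    have h2 := Set.add_mem_add hx h1
    have h3 : x + (y - x) = y := by abel
    rw [h3] at h2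
    exact h2
  set V : ℝ := (volume (Metric.ball (0:Euc N) 1)).toReal with hV
  have hVpos : 0 < V :=
    ENNReal.toReal_pos (Metric.measure_ball_pos volume 0 one_pos).ne' measure_ball_lt_top.ne
  -- the core lower bound
  have core : ∀ x ∈ K, ∀ t : ℝ, 2 ≤ t → ∀ a b : ℝ, 0 ≤ a → a ≤ b → b ≤ t - 1 →
      ∀ ψ : ℝ → ℝ, IntegrableOn ψ (Ioo a b) volume →
      (∀ s ∈ Ioo a b, 0 ≤ ψ s) →
      (∀ s ∈ Ioo a b, ∀ y ∈ Metric.ball x 1, y ≠ x →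
        ψ s ≤ (t - s) ^ (-(sigmaStar N α β)) * (1 + s) ^ (-γ)
          * G (((t - s) ^ (-(thetaV α β))) • (x - y))) →
      V * ∫ s in Ioo a b, ψ s
        ≤ mildSol N α β G (fun y s => W.indicator (fun _ => (1 + s) ^ (-γ)) y) x t :=
    fun x hx t ht a b ha hab hb ψ h1 h2 h3 =>
      coreLower N hN α β hα0 hα1 hβ0 G hGmeas hGnn hGint γ W hWmeas x (hballW x hx)
        t ht a b ha hab hb ψ h1 h2 h3
  -- helpers
  have rpow_min_le : ∀ p q u e : ℝ, 0 < p → p ≤ u → u ≤ q → min (p ^ e) (q ^ e) ≤ u ^ e := by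
    intro p q u e hp hpu huq
    rcases le_total 0 e with he | he
    · exact le_trans (min_le_left _ _) (Real.rpow_le_rpow hp.le hpu he)
    · exact le_trans (min_le_right _ _) (Real.rpow_le_rpow_of_nonpos (hp.trans_le hpu) huq he)
  have min_mul : ∀ a b c : ℝ, 0 ≤ c → min a b * c ≤ min (a * c) (b * c) := fun a b c hc =>
    le_min (mul_le_mul_of_nonneg_right (min_le_left _ _) hc)
      (mul_le_mul_of_nonneg_right (min_le_right _ _) hc)
  have hξfacts : ∀ t s : ℝ, 1 ≤ t - s → ∀ x y : Euc N, y ∈ Metric.ball x 1 → y ≠ x →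
      ((t - s) ^ (-(thetaV α β))) • (x - y) ≠ 0
        ∧ ‖((t - s) ^ (-(thetaV α β))) • (x - y)‖ ≤ 1 := by
    intro t s hts x y hy hyx
    have h0 : (0:ℝ) < t - s := by linarith
    have hc : (0:ℝ) < (t - s) ^ (-(thetaV α β)) := Real.rpow_pos_of_pos h0 _
    have hxy : ‖x - y‖ < 1 := by
      rw [← dist_eq_norm, dist_comm]
      exact Metric.mem_ball.1 hy
    refine ⟨smul_ne_zero hc.ne' (sub_ne_zero.2 (Ne.symm hyx)), ?_⟩
    rw [norm_smul, Real.norm_eq_abs, abs_of_pos hc]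
    have h1 : (t - s) ^ (-(thetaV α β)) ≤ 1 :=
      Real.rpow_le_one_of_one_le_of_nonpos hts (by linarith)
    nlinarith [norm_nonneg (x - y)]
  have constCase : ∀ t : ℝ, 2 ≤ t → ∀ x ∈ K, ∀ a b : ℝ, 0 ≤ a → a ≤ b → b ≤ t - 1 →
      ∀ ψ0 : ℝ, 0 ≤ ψ0 →
      (∀ s ∈ Ioo a b, ∀ y ∈ Metric.ball x 1, y ≠ x →
        ψ0 ≤ (t - s) ^ (-(sigmaStar N α β)) * (1 + s) ^ (-γ)
          * G (((t - s) ^ (-(thetaV α β))) • (x - y))) →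
      V * ((b - a) * ψ0)
        ≤ mildSol N α β G (fun y s => W.indicator (fun _ => (1 + s) ^ (-γ)) y) x t := by
    intro t ht x hx a b ha hab hb ψ0 hψ0 hle
    have h := core x hx t ht a b ha hab hb (fun _ => ψ0)
      (integrableOn_const (by rw [Real.volume_Ioo]; exact ENNReal.ofReal_ne_top))
      (fun s _ => hψ0) hle
    rwa [setIntegral_const, measureReal_def, Real.volume_Ioo, ENNReal.toReal_ofReal (by linarith), smul_eq_mul] at h
  have hlog_half : ∀ t : ℝ, 4 ≤ t → Real.log t / 2 ≤ Real.log (t / 2) := by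
    intro t ht
    have ht0 : (0:ℝ) < t := by linarith
    rw [Real.log_div ht0.ne' (by norm_num : (2:ℝ) ≠ 0)]
    have h4 : Real.log 4 ≤ Real.log t := Real.log_le_log (by norm_num) ht
    have h5 : Real.log 4 = 2 * Real.log 2 := by
      rw [show (4:ℝ) = 2 ^ 2 by norm_num, Real.log_pow]
      push_cast; ring
    linarith
  have hm₁pos : 0 < min ((2:ℝ) ^ (-γ)) ((3:ℝ) ^ (-γ)) :=
    lt_min (Real.rpow_pos_of_pos two_pos _) (Real.rpow_pos_of_pos (by norm_num) _)
  -- lower bound via s ∈ (1,2)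
  have smallS : ∀ t : ℝ, 4 ≤ t → ∀ x ∈ K,
      (V * (min ((2:ℝ) ^ (-γ)) ((3:ℝ) ^ (-γ)) * c₁)) * t ^ (-(sigmaStar N α β))
        ≤ mildSol N α β G (fun y s => W.indicator (fun _ => (1 + s) ^ (-γ)) y) x t := by
    intro t ht x hx
    have ht0 : (0:ℝ) < t := by linarith
    have hle : ∀ s ∈ Ioo (1:ℝ) 2, ∀ y ∈ Metric.ball x 1, y ≠ x →
        t ^ (-(sigmaStar N α β)) * min ((2:ℝ) ^ (-γ)) ((3:ℝ) ^ (-γ)) * c₁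
          ≤ (t - s) ^ (-(sigmaStar N α β)) * (1 + s) ^ (-γ)
            * G (((t - s) ^ (-(thetaV α β))) • (x - y)) := by
      intro s hs y hy hyx
      have hts1 : 1 ≤ t - s := by linarith [hs.2]
      have hts0 : (0:ℝ) < t - s := by linarith
      obtain ⟨hξ0, hξ1⟩ := hξfacts t s hts1 x y hy hyx
      have hG := hGlb _ hξ0 hξ1
      have e1 : t ^ (-(sigmaStar N α β)) ≤ (t - s) ^ (-(sigmaStar N α β)) :=
        Real.rpow_le_rpow_of_nonpos hts0 (by linarith [hs.1]) (by linarith)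
      have e2 : min ((2:ℝ) ^ (-γ)) ((3:ℝ) ^ (-γ)) ≤ (1 + s) ^ (-γ) :=
        rpow_min_le 2 3 (1+s) (-γ) two_pos (by linarith [hs.1]) (by linarith [hs.2])
      exact mul_le_mul (mul_le_mul e1 e2 hm₁pos.le (Real.rpow_nonneg hts0.le _)) hG hc₁.le
        (mul_nonneg (Real.rpow_nonneg hts0.le _)
          (Real.rpow_nonneg (by linarith [hs.1] : (0:ℝ) ≤ 1 + s) _))
    have h := constCase t (by linarith) x hx 1 2 (by norm_num) (by norm_num) (by linarith)
      (t ^ (-(sigmaStar N α β)) * min ((2:ℝ) ^ (-γ)) ((3:ℝ) ^ (-γ)) * c₁)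
      (mul_nonneg (mul_nonneg (Real.rpow_nonneg ht0.le _) hm₁pos.le) hc₁.le) hle
    refine le_trans (le_of_eq ?_) h
    ring
  -- lower bound via s ∈ (t-2, t-1)
  have hmγpos : 0 < min ((2:ℝ) ^ γ) 1 := lt_min (Real.rpow_pos_of_pos two_pos _) one_pos
  have hm₂pos : 0 < min ((1:ℝ) ^ (-(sigmaStar N α β))) ((2:ℝ) ^ (-(sigmaStar N α β))) :=
    lt_min (Real.rpow_pos_of_pos one_pos _) (Real.rpow_pos_of_pos two_pos _)
  have lateS : ∀ t : ℝ, 4 ≤ t → ∀ x ∈ K,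
      (V * (min ((1:ℝ) ^ (-(sigmaStar N α β))) ((2:ℝ) ^ (-(sigmaStar N α β)))
        * (min ((2:ℝ) ^ γ) 1) * c₁)) * t ^ (-γ)
        ≤ mildSol N α β G (fun y s => W.indicator (fun _ => (1 + s) ^ (-γ)) y) x t := by
    intro t ht x hx
    have ht0 : (0:ℝ) < t := by linarith
    have hle : ∀ s ∈ Ioo (t-2) (t-1), ∀ y ∈ Metric.ball x 1, y ≠ x →
        min ((1:ℝ) ^ (-(sigmaStar N α β))) ((2:ℝ) ^ (-(sigmaStar N α β)))
            * (min ((2:ℝ) ^ γ) 1 * t ^ (-γ)) * c₁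
          ≤ (t - s) ^ (-(sigmaStar N α β)) * (1 + s) ^ (-γ)
            * G (((t - s) ^ (-(thetaV α β))) • (x - y)) := by
      intro s hs y hy hyx
      have hts1 : 1 ≤ t - s := by linarith [hs.2]
      have hts0 : (0:ℝ) < t - s := by linarith
      obtain ⟨hξ0, hξ1⟩ := hξfacts t s hts1 x y hy hyx
      have hG := hGlb _ hξ0 hξ1
      have e1 : min ((1:ℝ) ^ (-(sigmaStar N α β))) ((2:ℝ) ^ (-(sigmaStar N α β)))
          ≤ (t - s) ^ (-(sigmaStar N α β)) :=
        rpow_min_le 1 2 (t-s) (-(sigmaStar N α β)) one_pos hts1 (by linarith [hs.1])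
      have e2 : min ((2:ℝ) ^ γ) 1 * t ^ (-γ) ≤ (1 + s) ^ (-γ) := by
        have h1 : t/2 ≤ 1 + s := by linarith [hs.1]
        have h2 : 1 + s ≤ t := by linarith [hs.2]
        have h3 := rpow_min_le (t/2) t (1+s) (-γ) (by linarith) h1 h2
        have e3 : (t/2) ^ (-γ) = (2:ℝ) ^ γ * t ^ (-γ) := by
          rw [Real.div_rpow ht0.le (by norm_num : (0:ℝ) ≤ 2),
            Real.rpow_neg (by norm_num : (0:ℝ) ≤ 2), div_eq_mul_inv, inv_inv, mul_comm]
        calc min ((2:ℝ)^γ) 1 * t ^ (-γ)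
            ≤ min ((2:ℝ)^γ * t ^ (-γ)) (1 * t ^ (-γ)) :=
              min_mul ((2:ℝ)^γ) 1 (t ^ (-γ)) (Real.rpow_nonneg ht0.le _)
          _ = min ((t/2) ^ (-γ)) (t ^ (-γ)) := by rw [one_mul, e3]
          _ ≤ (1+s) ^ (-γ) := h3
      exact mul_le_mul (mul_le_mul e1 e2
        (mul_nonneg hmγpos.le (Real.rpow_nonneg ht0.le _)) (Real.rpow_nonneg hts0.le _))
        hG hc₁.le (mul_nonneg (Real.rpow_nonneg hts0.le _) (Real.rpow_nonneg (by linarith [hs.1] : (0:ℝ) ≤ 1 + s) _))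
    have h := constCase t (by linarith) x hx (t-2) (t-1) (by linarith) (by linarith) (by linarith)
      (min ((1:ℝ) ^ (-(sigmaStar N α β))) ((2:ℝ) ^ (-(sigmaStar N α β)))
        * (min ((2:ℝ) ^ γ) 1 * t ^ (-γ)) * c₁)
      (mul_nonneg (mul_nonneg hm₂pos.le (mul_nonneg hmγpos.le (Real.rpow_nonneg ht0.le _)))
        hc₁.le) hle
    refine le_trans (le_of_eq ?_) h
    ring
  -- regimes
  rcases lt_trichotomy ((N:ℝ)) (2*β) with hR1 | hR2 | hR3
  · -- Regime 1 : N < 2β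
    rcases lt_trichotomy γ 1 with hγ | hγ | hγ
    · -- γ < 1 : lower bound c t^{-σ*+1-γ} via s ∈ (t/4, t/2)
      refine ⟨V * (min ((4:ℝ) ^ γ) 1 * c₁) / 4, 4, ?_, by norm_num, ?_⟩
      · have hm : 0 < min ((4:ℝ) ^ γ) 1 :=
          lt_min (Real.rpow_pos_of_pos (by norm_num) _) one_pos
        have := mul_pos hVpos (mul_pos hm hc₁)
        linarith
      intro t ht x hx
      have ht0 : (0:ℝ) < t := by linarith
      refine ⟨?_, ?_, ?_, ?_⟩
      · intro _
        refine ⟨fun _ => ?_, fun h => absurd h (ne_of_lt hγ), fun h => absurd h (not_lt.2 hγ.le)⟩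
        have hle : ∀ s ∈ Ioo (t/4) (t/2), ∀ y ∈ Metric.ball x 1, y ≠ x →
            t ^ (-(sigmaStar N α β)) * (min ((4:ℝ) ^ γ) 1 * t ^ (-γ)) * c₁
              ≤ (t - s) ^ (-(sigmaStar N α β)) * (1 + s) ^ (-γ)
                * G (((t - s) ^ (-(thetaV α β))) • (x - y)) := by
          intro s hs y hy hyx
          have hts1 : 1 ≤ t - s := by linarith [hs.2]
          have hts0 : (0:ℝ) < t - s := by linarith
          obtain ⟨hξ0, hξ1⟩ := hξfacts t s hts1 x y hy hyx
          have hG := hGlb _ hξ0 hξ1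
          have e1 : t ^ (-(sigmaStar N α β)) ≤ (t - s) ^ (-(sigmaStar N α β)) :=
            Real.rpow_le_rpow_of_nonpos hts0 (by linarith [hs.1]) (by linarith)
          have e2 : min ((4:ℝ) ^ γ) 1 * t ^ (-γ) ≤ (1 + s) ^ (-γ) := by
            have h1 : t/4 ≤ 1 + s := by linarith [hs.1]
            have h2 : 1 + s ≤ t := by linarith [hs.2]
            have h3 := rpow_min_le (t/4) t (1+s) (-γ) (by linarith) h1 h2
            have e3 : (t/4) ^ (-γ) = (4:ℝ) ^ γ * t ^ (-γ) := by
              rw [Real.div_rpow ht0.le (by norm_num : (0:ℝ) ≤ 4),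
                Real.rpow_neg (by norm_num : (0:ℝ) ≤ 4), div_eq_mul_inv, inv_inv, mul_comm]
            calc min ((4:ℝ)^γ) 1 * t ^ (-γ)
                ≤ min ((4:ℝ)^γ * t ^ (-γ)) (1 * t ^ (-γ)) :=
                  min_mul ((4:ℝ)^γ) 1 (t ^ (-γ)) (Real.rpow_nonneg ht0.le _)
              _ = min ((t/4) ^ (-γ)) (t ^ (-γ)) := by rw [one_mul, e3]
              _ ≤ (1+s) ^ (-γ) := h3
          have hm4 : (0:ℝ) < min ((4:ℝ) ^ γ) 1 :=
            lt_min (Real.rpow_pos_of_pos (by norm_num) _) one_pos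
          exact mul_le_mul (mul_le_mul e1 e2
            (mul_nonneg hm4.le (Real.rpow_nonneg ht0.le _)) (Real.rpow_nonneg hts0.le _))
            hG hc₁.le (mul_nonneg (Real.rpow_nonneg hts0.le _) (Real.rpow_nonneg (by linarith [hs.1] : (0:ℝ) ≤ 1 + s) _))
        have hm4 : (0:ℝ) < min ((4:ℝ) ^ γ) 1 :=
          lt_min (Real.rpow_pos_of_pos (by norm_num) _) one_pos
        have h := constCase t (by linarith) x hx (t/4) (t/2) (by linarith) (by linarith)
          (by linarith) (t ^ (-(sigmaStar N α β)) * (min ((4:ℝ) ^ γ) 1 * t ^ (-γ)) * c₁)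
          (mul_nonneg (mul_nonneg (Real.rpow_nonneg ht0.le _)
            (mul_nonneg hm4.le (Real.rpow_nonneg ht0.le _))) hc₁.le) hle
        refine le_trans (le_of_eq ?_) h
        have hexp : t ^ (-sigmaStar N α β + 1 - γ) = t ^ (-(sigmaStar N α β)) * t ^ (-γ) * t := by
          rw [show -sigmaStar N α β + 1 - γ = (-(sigmaStar N α β)) + (-γ) + 1 by ring,
            Real.rpow_add ht0, Real.rpow_add ht0, Real.rpow_one]
        rw [hexp]; ring
      · intro h; exact absurd h (ne_of_lt hR1)
      · rintro ⟨h1, -⟩; exact absurd h1 (not_lt.2 hR1.le)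
      · intro h; rw [h] at hR1; linarith
    · -- γ = 1 : lower bound c t^{-σ*} log t via s ∈ (1, t/2)
      subst hγ
      refine ⟨V * c₁ / 4, 4, by positivity, by norm_num, ?_⟩
      intro t ht x hx
      have ht0 : (0:ℝ) < t := by linarith
      refine ⟨?_, ?_, ?_, ?_⟩
      · intro _
        refine ⟨fun h => absurd h (lt_irrefl _), fun _ => ?_, fun h => absurd h (lt_irrefl _)⟩
        have hle : ∀ s ∈ Ioo (1:ℝ) (t/2), ∀ y ∈ Metric.ball x 1, y ≠ x →
            (t ^ (-(sigmaStar N α β)) * c₁ / 2) * s⁻¹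
              ≤ (t - s) ^ (-(sigmaStar N α β)) * (1 + s) ^ (-(1:ℝ))
                * G (((t - s) ^ (-(thetaV α β))) • (x - y)) := by
          intro s hs y hy hyx
          have hs1 : (1:ℝ) < s := hs.1
          have hts1 : 1 ≤ t - s := by linarith [hs.2]
          have hts0 : (0:ℝ) < t - s := by linarith
          obtain ⟨hξ0, hξ1⟩ := hξfacts t s hts1 x y hy hyx
          have hG := hGlb _ hξ0 hξ1
          have e1 : t ^ (-(sigmaStar N α β)) ≤ (t - s) ^ (-(sigmaStar N α β)) :=
            Real.rpow_le_rpow_of_nonpos hts0 (by linarith) (by linarith)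
          have e2 : s⁻¹ / 2 ≤ (1 + s) ^ (-(1:ℝ)) := by
            rw [Real.rpow_neg_one]
            have h2 : (2*s)⁻¹ ≤ (1+s)⁻¹ := by
              apply inv_anti₀ (by linarith) (by linarith)
            calc s⁻¹/2 = (2*s)⁻¹ := by rw [mul_inv]; ring
              _ ≤ (1+s)⁻¹ := h2
          calc (t ^ (-(sigmaStar N α β)) * c₁ / 2) * s⁻¹
              = t ^ (-(sigmaStar N α β)) * (s⁻¹/2) * c₁ := by ring
            _ ≤ (t - s) ^ (-(sigmaStar N α β)) * (1 + s) ^ (-(1:ℝ))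
                * G (((t - s) ^ (-(thetaV α β))) • (x - y)) := by
                apply mul_le_mul (mul_le_mul e1 e2 (by positivity)
                  (Real.rpow_nonneg hts0.le _)) hG hc₁.le (mul_nonneg (Real.rpow_nonneg hts0.le _) (Real.rpow_nonneg (by linarith [hs.1] : (0:ℝ) ≤ 1 + s) _))
        have hψint : IntegrableOn (fun s : ℝ => (t ^ (-(sigmaStar N α β)) * c₁ / 2) * s⁻¹)
            (Ioo 1 (t/2)) volume := by
          apply (ContinuousOn.integrableOn_Icc ?_).mono_set Ioo_subset_Icc_self
          apply continuousOn_const.mul (ContinuousOn.inv₀ continuousOn_id ?_)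
          intro z hz
          have : (1:ℝ) ≤ z := hz.1
          exact (by linarith : (0:ℝ) < z).ne'
        have hψnn : ∀ s ∈ Ioo (1:ℝ) (t/2), 0 ≤ (t ^ (-(sigmaStar N α β)) * c₁ / 2) * s⁻¹ := by
          intro s hs
          have : (0:ℝ) < s := by linarith [hs.1]
          positivity
        have h := core x hx t (by linarith) 1 (t/2) (by norm_num) (by linarith) (by linarith)
          _ hψint hψnn hle
        have hval : (∫ s in Ioo (1:ℝ) (t/2), (t ^ (-(sigmaStar N α β)) * c₁ / 2) * s⁻¹)
            = (t ^ (-(sigmaStar N α β)) * c₁ / 2) * Real.log (t/2) := by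
          rw [integral_const_mul]
          congr 1
          rw [← integral_Ioc_eq_integral_Ioo,
            ← intervalIntegral.integral_of_le (by linarith : (1:ℝ) ≤ t/2)]
          rw [integral_inv (by
            rw [Set.uIcc_of_le (by linarith : (1:ℝ) ≤ t/2)]
            rintro ⟨h0, -⟩
            linarith), div_one]
        rw [hval] at h
        refine le_trans ?_ h
        have hh := hlog_half t (by linarith)
        have hlogt : 0 ≤ Real.log t := Real.log_nonneg (by linarith)
        calc (V * c₁ / 4) * t ^ (-sigmaStar N α β) * Real.log t
            = V * ((t ^ (-(sigmaStar N α β)) * c₁ / 2) * (Real.log t / 2)) := by ring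
          _ ≤ V * ((t ^ (-(sigmaStar N α β)) * c₁ / 2) * Real.log (t/2)) := by
              apply mul_le_mul_of_nonneg_left
                (mul_le_mul_of_nonneg_left hh (by positivity)) hVpos.le
      · intro h; exact absurd h (ne_of_lt hR1)
      · rintro ⟨h1, -⟩; exact absurd h1 (not_lt.2 hR1.le)
      · intro h; rw [h] at hR1; linarith
    · -- γ > 1 : lower bound c t^{-σ*} via s ∈ (1,2)
      refine ⟨V * (min ((2:ℝ) ^ (-γ)) ((3:ℝ) ^ (-γ)) * c₁), 4, ?_, by norm_num, ?_⟩
      · exact mul_pos hVpos (mul_pos hm₁pos hc₁)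
      intro t ht x hx
      refine ⟨?_, ?_, ?_, ?_⟩
      · intro _
        exact ⟨fun h => absurd h (not_lt.2 hγ.le), fun h => absurd h (ne_of_gt hγ),
          fun _ => smallS t ht x hx⟩
      · intro h; exact absurd h (ne_of_lt hR1)
      · rintro ⟨h1, -⟩; exact absurd h1 (not_lt.2 hR1.le)
      · intro h; rw [h] at hR1; linarith
  · -- Regime 2 : N = 2β
    have hkey : (2*β) * (α/(2*β)) = α := by
      rw [mul_comm ((2:ℝ)*β) (α/(2*β)), div_mul_cancel₀ _ hβ2.ne']
    have hσ1 : sigmaStar N α β = 1 := by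
      rw [hσval, hθval, hR2, hkey]
      ring
    rcases le_or_gt γ 1 with hγ | hγ
    · -- γ ≤ 1 : c t^{-γ} log t via s ∈ (t/2, t-1)
      refine ⟨V * (min ((2:ℝ) ^ γ) 1 * c₁) / 2, 4, ?_, by norm_num, ?_⟩
      · have := mul_pos hVpos (mul_pos hmγpos hc₁)
        linarith
      intro t ht x hx
      have ht0 : (0:ℝ) < t := by linarith
      refine ⟨?_, ?_, ?_, ?_⟩
      · intro h; rw [hR2] at h; exact absurd h (lt_irrefl _)
      · intro _
        refine ⟨fun _ => ?_, fun h => absurd h (not_lt.2 hγ)⟩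
        have hle : ∀ s ∈ Ioo (t/2) (t-1), ∀ y ∈ Metric.ball x 1, y ≠ x →
            (min ((2:ℝ) ^ γ) 1 * t ^ (-γ) * c₁) * (t - s)⁻¹
              ≤ (t - s) ^ (-(sigmaStar N α β)) * (1 + s) ^ (-γ)
                * G (((t - s) ^ (-(thetaV α β))) • (x - y)) := by
          intro s hs y hy hyx
          have hts1 : 1 ≤ t - s := by linarith [hs.2]
          have hts0 : (0:ℝ) < t - s := by linarith
          obtain ⟨hξ0, hξ1⟩ := hξfacts t s hts1 x y hy hyx
          have hG := hGlb _ hξ0 hξ1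
          have e1 : (t - s) ^ (-(sigmaStar N α β)) = (t-s)⁻¹ := by
            rw [hσ1, Real.rpow_neg_one]
          have e2 : min ((2:ℝ) ^ γ) 1 * t ^ (-γ) ≤ (1 + s) ^ (-γ) := by
            have h1 : t/2 ≤ 1 + s := by linarith [hs.1]
            have h2 : 1 + s ≤ t := by linarith [hs.2]
            have h3 := rpow_min_le (t/2) t (1+s) (-γ) (by linarith) h1 h2
            have e3 : (t/2) ^ (-γ) = (2:ℝ) ^ γ * t ^ (-γ) := by
              rw [Real.div_rpow ht0.le (by norm_num : (0:ℝ) ≤ 2),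
                Real.rpow_neg (by norm_num : (0:ℝ) ≤ 2), div_eq_mul_inv, inv_inv, mul_comm]
            calc min ((2:ℝ)^γ) 1 * t ^ (-γ)
                ≤ min ((2:ℝ)^γ * t ^ (-γ)) (1 * t ^ (-γ)) :=
                  min_mul ((2:ℝ)^γ) 1 (t ^ (-γ)) (Real.rpow_nonneg ht0.le _)
              _ = min ((t/2) ^ (-γ)) (t ^ (-γ)) := by rw [one_mul, e3]
              _ ≤ (1+s) ^ (-γ) := h3
          calc (min ((2:ℝ) ^ γ) 1 * t ^ (-γ) * c₁) * (t - s)⁻¹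
              = (t-s)⁻¹ * (min ((2:ℝ) ^ γ) 1 * t ^ (-γ)) * c₁ := by ring
            _ ≤ (t-s)⁻¹ * (1 + s) ^ (-γ) * G (((t - s) ^ (-(thetaV α β))) • (x - y)) := by
                apply mul_le_mul (mul_le_mul le_rfl e2
                  (mul_nonneg hmγpos.le (Real.rpow_nonneg ht0.le _)) (inv_nonneg.2 hts0.le))
                  hG hc₁.le (mul_nonneg (inv_nonneg.2 hts0.le)
                    (Real.rpow_nonneg (by linarith [hs.1] : (0:ℝ) ≤ 1 + s) _))
            _ = (t - s) ^ (-(sigmaStar N α β)) * (1 + s) ^ (-γ)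
                * G (((t - s) ^ (-(thetaV α β))) • (x - y)) := by rw [e1]
        have hψint : IntegrableOn
            (fun s : ℝ => (min ((2:ℝ) ^ γ) 1 * t ^ (-γ) * c₁) * (t - s)⁻¹)
            (Ioo (t/2) (t-1)) volume := by
          apply (ContinuousOn.integrableOn_Icc ?_).mono_set Ioo_subset_Icc_self
          apply continuousOn_const.mul
            (ContinuousOn.inv₀ (continuousOn_const.sub continuousOn_id) ?_)
          intro z hz
          have : z ≤ t - 1 := hz.2
          exact (by linarith : (0:ℝ) < t - z).ne'
        have hψnn : ∀ s ∈ Ioo (t/2) (t-1),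
            0 ≤ (min ((2:ℝ) ^ γ) 1 * t ^ (-γ) * c₁) * (t - s)⁻¹ := by
          intro s hs
          have : (0:ℝ) < t - s := by linarith [hs.2]
          positivity
        have h := core x hx t (by linarith) (t/2) (t-1) (by linarith) (by linarith)
          (by linarith) _ hψint hψnn hle
        have hval : (∫ s in Ioo (t/2) (t-1), (min ((2:ℝ) ^ γ) 1 * t ^ (-γ) * c₁) * (t - s)⁻¹)
            = (min ((2:ℝ) ^ γ) 1 * t ^ (-γ) * c₁) * Real.log (t/2) := by
          rw [integral_const_mul]
          congr 1
          rw [← integral_Ioc_eq_integral_Ioo,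
            ← intervalIntegral.integral_of_le (by linarith : t/2 ≤ t-1)]
          rw [intervalIntegral.integral_comp_sub_left (fun z : ℝ => z⁻¹) t]
          rw [show t - (t-1) = (1:ℝ) by ring, show t - t/2 = t/2 by ring]
          rw [integral_inv (by
            rw [Set.uIcc_of_le (by linarith : (1:ℝ) ≤ t/2)]
            rintro ⟨h0, -⟩
            linarith), div_one]
        rw [hval] at h
        refine le_trans ?_ h
        have hh := hlog_half t (by linarith)
        have hlogt : 0 ≤ Real.log t := Real.log_nonneg (by linarith)
        calc (V * (min ((2:ℝ) ^ γ) 1 * c₁) / 2) * t ^ (-γ) * Real.log t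
            = V * ((min ((2:ℝ) ^ γ) 1 * t ^ (-γ) * c₁) * (Real.log t / 2)) := by ring
          _ ≤ V * ((min ((2:ℝ) ^ γ) 1 * t ^ (-γ) * c₁) * Real.log (t/2)) := by
              apply mul_le_mul_of_nonneg_left
                (mul_le_mul_of_nonneg_left hh (by positivity)) hVpos.le
      · rintro ⟨h1, -⟩; rw [hR2] at h1; exact absurd h1 (lt_irrefl _)
      · intro h; rw [h] at hR2; linarith
    · -- γ > 1 : c t^{-1} via s ∈ (1,2)
      refine ⟨V * (min ((2:ℝ) ^ (-γ)) ((3:ℝ) ^ (-γ)) * c₁), 4, ?_, by norm_num, ?_⟩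
      · exact mul_pos hVpos (mul_pos hm₁pos hc₁)
      intro t ht x hx
      refine ⟨?_, ?_, ?_, ?_⟩
      · intro h; rw [hR2] at h; exact absurd h (lt_irrefl _)
      · intro _
        refine ⟨fun h => absurd h (not_le.2 hγ), fun _ => ?_⟩
        have h := smallS t ht x hx
        rwa [hσ1] at h
      · rintro ⟨h1, -⟩; rw [hR2] at h1; exact absurd h1 (lt_irrefl _)
      · intro h; rw [h] at hR2; linarith
  · -- N > 2β
    rcases lt_or_eq_of_le hNβ with hR4 | hR4
    · -- Regime 3 : 2β < N < 4β
      refine ⟨min (V * (min ((2:ℝ) ^ (-γ)) ((3:ℝ) ^ (-γ)) * c₁))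
        (V * (min ((1:ℝ) ^ (-(sigmaStar N α β))) ((2:ℝ) ^ (-(sigmaStar N α β)))
          * (min ((2:ℝ) ^ γ) 1) * c₁)), 4, ?_, by norm_num, ?_⟩
      · exact lt_min (mul_pos hVpos (mul_pos hm₁pos hc₁))
          (mul_pos hVpos (mul_pos (mul_pos hm₂pos hmγpos) hc₁))
      intro t ht x hx
      have ht0 : (0:ℝ) < t := by linarith
      refine ⟨?_, ?_, ?_, ?_⟩
      · intro h; exact absurd h (not_lt.2 hR3.le)
      · intro h; exact absurd h.symm (ne_of_lt hR3)
      · intro _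
        constructor
        · intro _
          refine le_trans ?_ (lateS t ht x hx)
          exact mul_le_mul_of_nonneg_right (min_le_right _ _) (Real.rpow_nonneg ht0.le _)
        · intro _
          refine le_trans ?_ (smallS t ht x hx)
          exact mul_le_mul_of_nonneg_right (min_le_left _ _) (Real.rpow_nonneg ht0.le _)
      · intro h; rw [h] at hR4; exact absurd hR4 (lt_irrefl _)
    · -- Regime 4 : N = 4β
      have hkey : (2*β) * (α/(2*β)) = α := by
        rw [mul_comm ((2:ℝ)*β) (α/(2*β)), div_mul_cancel₀ _ hβ2.ne']
      have hσ4 : sigmaStar N α β = 1 + α := by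
        rw [hσval, hθval, hR4, show (4:ℝ)*β = 2*(2*β) by ring, mul_assoc, hkey]
        ring
      refine ⟨min (V * (min ((1:ℝ) ^ (-(sigmaStar N α β))) ((2:ℝ) ^ (-(sigmaStar N α β)))
          * (min ((2:ℝ) ^ γ) 1) * c₁))
        (V * (min ((2:ℝ) ^ (-γ)) ((3:ℝ) ^ (-γ)) * (c₁ * thetaV α β / 2))), 4, ?_, by norm_num, ?_⟩
      · refine lt_min (mul_pos hVpos (mul_pos (mul_pos hm₂pos hmγpos) hc₁))
          (mul_pos hVpos (mul_pos hm₁pos (by positivity)))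
      intro t ht x hx
      have ht0 : (0:ℝ) < t := by linarith
      have hlogt : 0 ≤ Real.log t := Real.log_nonneg (by linarith)
      refine ⟨?_, ?_, ?_, ?_⟩
      · intro h; exact absurd h (not_lt.2 hR3.le)
      · intro h; rw [h] at hR3; exact absurd hR3 (lt_irrefl _)
      · rintro ⟨-, h2⟩; rw [hR4] at h2; exact absurd h2 (lt_irrefl _)
      · intro _
        constructor
        · intro _
          refine le_trans ?_ (lateS t ht x hx)
          exact mul_le_mul_of_nonneg_right (min_le_left _ _) (Real.rpow_nonneg ht0.le _)
        · intro _
          have hle : ∀ s ∈ Ioo (1:ℝ) 2, ∀ y ∈ Metric.ball x 1, y ≠ x →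
              t ^ (-(sigmaStar N α β)) * min ((2:ℝ) ^ (-γ)) ((3:ℝ) ^ (-γ))
                  * (c₁ * (thetaV α β * (Real.log t / 2)))
                ≤ (t - s) ^ (-(sigmaStar N α β)) * (1 + s) ^ (-γ)
                  * G (((t - s) ^ (-(thetaV α β))) • (x - y)) := by
            intro s hs y hy hyx
            have hts1 : 1 ≤ t - s := by linarith [hs.2]
            have hts0 : (0:ℝ) < t - s := by linarith
            obtain ⟨hξ0, hξ1⟩ := hξfacts t s hts1 x y hy hyx
            have hxy0 : (0:ℝ) < ‖x - y‖ := norm_pos_iff.2 (sub_ne_zero.2 (Ne.symm hyx))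
            have hxy1 : ‖x - y‖ < 1 := by
              rw [← dist_eq_norm, dist_comm]
              exact Metric.mem_ball.1 hy
            have hc : (0:ℝ) < (t - s) ^ (-(thetaV α β)) := Real.rpow_pos_of_pos hts0 _
            have hnval : ‖((t - s) ^ (-(thetaV α β))) • (x - y)‖
                = (t - s) ^ (-(thetaV α β)) * ‖x - y‖ := by
              rw [norm_smul, Real.norm_eq_abs, abs_of_pos hc]
            have hlog1 : Real.log ‖((t - s) ^ (-(thetaV α β))) • (x - y)‖
                ≤ -(thetaV α β * Real.log (t - s)) := by
              rw [hnval, Real.log_mul hc.ne' hxy0.ne', Real.log_rpow hts0]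
              have h7 : Real.log ‖x - y‖ ≤ 0 := Real.log_nonpos hxy0.le hxy1.le
              linarith
            have hlog2 : thetaV α β * Real.log (t - s)
                ≤ |Real.log ‖((t - s) ^ (-(thetaV α β))) • (x - y)‖| := by
              have h8 := neg_le_abs (Real.log ‖((t - s) ^ (-(thetaV α β))) • (x - y)‖)
              linarith
            have hlog3 : Real.log t / 2 ≤ Real.log (t - s) := by
              have h9 : (t/2:ℝ) ≤ t - s := by linarith [hs.2]
              exact le_trans (hlog_half t (by linarith)) (Real.log_le_log (by linarith) h9)
            have hGlog : c₁ * (thetaV α β * (Real.log t / 2))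
                ≤ G (((t - s) ^ (-(thetaV α β))) • (x - y)) := by
              refine le_trans ?_ (hGlow₂ hR4 _ hξ0 hξ1)
              refine mul_le_mul_of_nonneg_left ?_ hc₁.le
              have h11 : thetaV α β * (Real.log t / 2) ≤ thetaV α β * Real.log (t - s) :=
                mul_le_mul_of_nonneg_left hlog3 hθpos.le
              linarith [hlog2]
            have e1 : t ^ (-(sigmaStar N α β)) ≤ (t - s) ^ (-(sigmaStar N α β)) :=
              Real.rpow_le_rpow_of_nonpos hts0 (by linarith [hs.1]) (by linarith)
            have e2 : min ((2:ℝ) ^ (-γ)) ((3:ℝ) ^ (-γ)) ≤ (1 + s) ^ (-γ) :=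
              rpow_min_le 2 3 (1+s) (-γ) two_pos (by linarith [hs.1]) (by linarith [hs.2])
            have hnn : 0 ≤ c₁ * (thetaV α β * (Real.log t / 2)) :=
              mul_nonneg hc₁.le (mul_nonneg hθpos.le (by linarith))
            exact mul_le_mul (mul_le_mul e1 e2 hm₁pos.le (Real.rpow_nonneg hts0.le _))
              hGlog hnn (mul_nonneg (Real.rpow_nonneg hts0.le _) (Real.rpow_nonneg (by linarith [hs.1] : (0:ℝ) ≤ 1 + s) _))
          have hψ0nn : 0 ≤ t ^ (-(sigmaStar N α β)) * min ((2:ℝ) ^ (-γ)) ((3:ℝ) ^ (-γ))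
              * (c₁ * (thetaV α β * (Real.log t / 2))) :=
            mul_nonneg (mul_nonneg (Real.rpow_nonneg ht0.le _) hm₁pos.le)
              (mul_nonneg hc₁.le (mul_nonneg hθpos.le (by linarith)))
          have h := constCase t (by linarith) x hx 1 2 (by norm_num) (by norm_num) (by linarith)
            _ hψ0nn hle
          refine le_trans ?_ h
          have key : (V * (min ((2:ℝ) ^ (-γ)) ((3:ℝ) ^ (-γ)) * (c₁ * thetaV α β / 2)))
              * t ^ (-(1+α)) * Real.log t
              = V * ((2 - 1) * (t ^ (-(sigmaStar N α β)) * min ((2:ℝ) ^ (-γ)) ((3:ℝ) ^ (-γ))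
                * (c₁ * (thetaV α β * (Real.log t / 2))))) := by
            rw [hσ4]
            ring
          rw [← key]
          apply mul_le_mul_of_nonneg_right
            (mul_le_mul_of_nonneg_right (min_le_right _ _) (Real.rpow_nonneg ht0.le _)) hlogt
end
end

section
/- Suppose N < 2β. Let γ ∈ ℝ, let p ∈ [1,∞], let f be measurable with ∫_{ℝ^N} |f(y,t)| dy ≤ C₀ (1+t)^{-γ} for all t > 0, and let g : (0,∞) → (0,∞) be measurable with g(t) → ∞ and g(t)/t^θ → 0 as t → ∞. Then for all 0 < ν < μ < ∞ there exist C > 0 and T ≥ 2 such that for all t ≥ T the mild solution u satisfies: ‖u(·,t)‖_{L^p({x : ν g(t) < |x| < μ g(t)})} ≤ C g(t)^{N/p} R(t), where R(t) = t^{-σ*+1-γ} if γ < 1, R(t) = t^{-σ*} log t if γ = 1, and R(t) = t^{-σ*} if γ > 1 (with g(t)^{N/p} := 1 when p = ∞). -/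
open MeasureTheory Real Set Pointwise
open scoped ENNReal

noncomputable section

lemma aux_int_base (σ t : ℝ) (hσ1 : σ < 1) (ht : 0 < t) :
    IntegrableOn (fun s => (t - s) ^ (-σ)) (Ioc 0 t) volume := by
  have h1 : IntervalIntegrable (fun x : ℝ => x ^ (-σ)) volume 0 t :=
    intervalIntegral.intervalIntegrable_rpow' (by linarith)
  have h2 := h1.comp_sub_left t
  rw [intervalIntegrable_iff] at h2
  simp only [sub_zero, sub_self] at h2
  rwa [Set.uIoc_comm, uIoc_of_le ht.le] at h2

lemma aux_integrableOn (σ γ t : ℝ) (hσ1 : σ < 1) (ht : 0 < t) :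
    IntegrableOn (fun s => (t - s) ^ (-σ) * (1 + s) ^ (-γ)) (Ioc 0 t) volume := by
  rw [integrableOn_Ioc_iff_integrableOn_Ioo]
  have hmeas : AEStronglyMeasurable (fun s => (t - s) ^ (-σ) * (1 + s) ^ (-γ))
      (volume.restrict (Ioo 0 t)) := by
    apply ContinuousOn.aestronglyMeasurable _ measurableSet_Ioo
    apply ContinuousOn.mul
    · exact ((continuous_const.sub continuous_id).continuousOn).rpow_const
        (fun s hs => Or.inl (by simp only [mem_Ioo] at hs; simp only [Pi.sub_apply, id_eq]; intro h; nlinarith))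
    · exact ((continuous_const.add continuous_id).continuousOn).rpow_const
        (fun s hs => Or.inl (by simp only [mem_Ioo] at hs; simp only [Pi.add_apply, id_eq]; intro h; nlinarith))
  have hbase : IntegrableOn (fun s => (t - s) ^ (-σ)) (Ioo 0 t) volume :=
    (aux_int_base σ t hσ1 ht).mono_set Ioo_subset_Ioc_self
  set K := max 1 ((1 + t) ^ (-γ)) with hK
  have hK0 : 0 ≤ K := le_trans zero_le_one (le_max_left _ _)
  apply Integrable.mono (hbase.const_mul K) hmeas
  rw [ae_restrict_iff' measurableSet_Ioo]
  refine Filter.Eventually.of_forall (fun s hs => ?_)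
  obtain ⟨hs0, hst⟩ := hs
  have h1s : (1:ℝ) ≤ 1 + s := by linarith
  have hts : 0 < t - s := by linarith
  rw [Real.norm_eq_abs, Real.norm_eq_abs, abs_mul,
    abs_of_nonneg (rpow_nonneg hts.le _), abs_of_nonneg (rpow_nonneg (by linarith : (0:ℝ) ≤ 1+s) _),
    abs_of_nonneg (mul_nonneg hK0 (rpow_nonneg hts.le _))]
  rw [mul_comm K _]
  apply mul_le_mul_of_nonneg_left _ (rpow_nonneg hts.le _)
  rcases le_or_gt 0 γ with hγ | hγ
  · exact le_trans (rpow_le_one_of_one_le_of_nonpos h1s (by linarith)) (le_max_left _ _)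
  · exact le_trans (rpow_le_rpow (by linarith) (by linarith) (by linarith)) (le_max_right _ _)

lemma aux_weight (γ t s : ℝ) (ht : 3 ≤ t) (hs1 : t/2 < s) (hs2 : s ≤ t) :
    (1 + s) ^ (-γ) ≤ 2 ^ |γ| * t ^ (-γ) := by
  have ht0 : (0:ℝ) < t := by linarith
  have hs0 : (0:ℝ) < s := by linarith
  rcases le_or_gt 0 γ with hγ | hγ
  · have h1 : (1 + s) ^ (-γ) ≤ (t/2) ^ (-γ) :=
      rpow_le_rpow_of_nonpos (by linarith) (by linarith) (by linarith)
    have h2 : (t/2) ^ (-γ) = t ^ (-γ) * 2 ^ γ := by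
      rw [div_eq_mul_inv, Real.mul_rpow ht0.le (by norm_num),
        Real.inv_rpow (by norm_num), ← Real.rpow_neg (by norm_num), neg_neg]
    rw [abs_of_nonneg hγ]
    rw [h2] at h1
    linarith [h1]
  · have h1 : (1 + s) ^ (-γ) ≤ (2*t) ^ (-γ) :=
      rpow_le_rpow (by linarith) (by linarith) (by linarith)
    have h2 : (2*t) ^ (-γ) = 2 ^ (-γ) * t ^ (-γ) := by
      rw [Real.mul_rpow (by norm_num) ht0.le]
    rw [abs_of_neg hγ]
    rw [h2] at h1
    linarith [h1]

set_option maxHeartbeats 1000000 in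
lemma aux_J_bound (σ γ : ℝ) (hσ0 : 0 < σ) (hσ1 : σ < 1) :
    ∃ A : ℝ, 0 < A ∧ ∀ t : ℝ, 3 ≤ t →
      (∫ s in Ioo (0:ℝ) t, (t - s) ^ (-σ) * (1 + s) ^ (-γ)) ≤
        A * (if γ < 1 then t ^ (-σ + 1 - γ) else if γ = 1 then t ^ (-σ) * Real.log t
          else t ^ (-σ)) := by
  set K : ℝ := 2 ^ |γ| with hKdef
  have hKpos : 0 < K := rpow_pos_of_pos (by norm_num) _
  refine ⟨2 ^ σ * (1/|1-γ| + 1) + K * 2 ^ (σ-1) / (1-σ), ?_, fun t ht => ?_⟩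
  · apply add_pos_of_pos_of_nonneg
    · exact mul_pos (rpow_pos_of_pos (by norm_num) σ) (by positivity)
    · apply div_nonneg (by positivity) (by linarith)
  have ht0 : (0:ℝ) < t := by linarith
  have ht2 : (0:ℝ) < t/2 := by linarith
  have ht2t : t/2 ≤ t := by linarith
  set h : ℝ → ℝ := fun s => (t - s) ^ (-σ) * (1 + s) ^ (-γ) with hh
  have hI := aux_integrableOn σ γ t hσ1 ht0
  have hI1 : IntegrableOn h (Ioc 0 (t/2)) volume := hI.mono_set (Ioc_subset_Ioc_right ht2t)
  have hI2 : IntegrableOn h (Ioc (t/2) t) volume := hI.mono_set (Ioc_subset_Ioc_left ht2.le)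
  -- splitting
  have hhalfpow : ∀ e : ℝ, (t/2) ^ e = t ^ e * 2 ^ (-e) := by
    intro e
    rw [div_eq_mul_inv, Real.mul_rpow ht0.le (by norm_num),
      Real.inv_rpow (by norm_num), ← Real.rpow_neg (by norm_num)]
  have hsplit : (∫ s in Ioo (0:ℝ) t, h s) ≤
      (∫ s in Ioc (0:ℝ) (t/2), h s) + ∫ s in Ioc (t/2) t, h s := by
    have h1 : (∫ s in Ioo (0:ℝ) t, h s) ≤ ∫ s in Ioc (0:ℝ) t, h s := by
      apply setIntegral_mono_set hI
      · have : ∀ᵐ s ∂(volume.restrict (Ioc (0:ℝ) t)), 0 ≤ h s :=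
          (ae_restrict_iff' measurableSet_Ioc).2 (Filter.Eventually.of_forall (fun s hs =>
            mul_nonneg (rpow_nonneg (by linarith [hs.2]) _)
              (rpow_nonneg (by linarith [hs.1]) _)))
        exact this
      · exact HasSubset.Subset.eventuallyLE Ioo_subset_Ioc_self
    calc (∫ s in Ioo (0:ℝ) t, h s) ≤ ∫ s in Ioc (0:ℝ) t, h s := h1
      _ = (∫ s in Ioc (0:ℝ) (t/2), h s) + ∫ s in Ioc (t/2) t, h s := by
          rw [← Ioc_union_Ioc_eq_Ioc ht2.le ht2t,
            setIntegral_union (Set.Ioc_disjoint_Ioc_of_le le_rfl) measurableSet_Ioc hI1 hI2]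
  -- first piece
  have hg1 : IntegrableOn (fun s => (t/2) ^ (-σ) * (1 + s) ^ (-γ)) (Ioc 0 (t/2)) volume := by
    apply Integrable.const_mul
    apply (ContinuousOn.integrableOn_Icc ?_).mono_set Ioc_subset_Icc_self
    exact ((continuous_const.add continuous_id).continuousOn).rpow_const
      (fun s hs => Or.inl (by simp only [mem_Icc] at hs; simp only [Pi.add_apply, id_eq]; intro hc; nlinarith))
  have hmono1 : (∫ s in Ioc (0:ℝ) (t/2), h s) ≤
      ∫ s in Ioc (0:ℝ) (t/2), (t/2) ^ (-σ) * (1 + s) ^ (-γ) := by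
    apply setIntegral_mono_on hI1 hg1 measurableSet_Ioc
    intro s hs
    exact mul_le_mul_of_nonneg_right
      (rpow_le_rpow_of_nonpos ht2 (by linarith [hs.2]) (by linarith))
      (rpow_nonneg (by linarith [hs.1]) _)
  have hval1 : (∫ s in Ioc (0:ℝ) (t/2), (t/2) ^ (-σ) * (1 + s) ^ (-γ))
      = (t/2) ^ (-σ) * ∫ s in (0:ℝ)..(t/2), (1 + s) ^ (-γ) := by
    rw [MeasureTheory.integral_const_mul, intervalIntegral.integral_of_le ht2.le]
  -- second piece
  have hg2 : IntegrableOn (fun s => K * t ^ (-γ) * (t - s) ^ (-σ)) (Ioc (t/2) t) volume :=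
    ((aux_int_base σ t hσ1 ht0).mono_set (Ioc_subset_Ioc_left ht2.le)).const_mul _
  have hmono2 : (∫ s in Ioc (t/2) t, h s) ≤
      ∫ s in Ioc (t/2) t, K * t ^ (-γ) * (t - s) ^ (-σ) := by
    apply setIntegral_mono_on hI2 hg2 measurableSet_Ioc
    intro s hs
    have hw := aux_weight γ t s ht hs.1 hs.2
    calc h s = (1 + s) ^ (-γ) * (t - s) ^ (-σ) := by rw [hh]; ring
      _ ≤ K * t ^ (-γ) * (t - s) ^ (-σ) :=
        mul_le_mul_of_nonneg_right hw (rpow_nonneg (by linarith [hs.2]) _)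
  have hD : (∫ s in (t/2)..t, (t - s) ^ (-σ)) = (t/2) ^ (-σ+1) / (-σ+1) := by
    have hcomp := intervalIntegral.integral_comp_sub_left (a := t/2) (b := t)
      (fun x : ℝ => x ^ (-σ)) t
    rw [sub_self, sub_half] at hcomp
    rw [hcomp, integral_rpow (Or.inl (by linarith)),
      Real.zero_rpow (by linarith : -σ+1 ≠ 0), sub_zero]
  have hval2 : (∫ s in Ioc (t/2) t, K * t ^ (-γ) * (t - s) ^ (-σ))
      = K * t ^ (-γ) * ((t/2) ^ (-σ+1) / (-σ+1)) := by
    rw [MeasureTheory.integral_const_mul, ← intervalIntegral.integral_of_le ht2t, hD]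
  -- the interval integral of (1+s)^(-γ)
  have hJle : (∫ s in Ioo (0:ℝ) t, h s) ≤
      (t/2) ^ (-σ) * (∫ s in (0:ℝ)..(t/2), (1 + s) ^ (-γ))
      + K * t ^ (-γ) * ((t/2) ^ (-σ+1) / (-σ+1)) := by
    calc (∫ s in Ioo (0:ℝ) t, h s)
        ≤ (∫ s in Ioc (0:ℝ) (t/2), h s) + ∫ s in Ioc (t/2) t, h s := hsplit
      _ ≤ _ := by
          rw [← hval1, ← hval2]; exact add_le_add hmono1 hmono2
  -- shift the (1+s) integral
  have hshift : (∫ s in (0:ℝ)..(t/2), (1 + s) ^ (-γ))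
      = ∫ x in (1:ℝ)..(1+t/2), x ^ (-γ) := by
    have := intervalIntegral.integral_comp_add_left (a := (0:ℝ)) (b := t/2)
      (fun x : ℝ => x ^ (-γ)) 1
    simpa using this
  have h2σpos : (0:ℝ) < 2 ^ σ := rpow_pos_of_pos (by norm_num) σ
  have hhalf1 : (t/2) ^ (-σ) = t ^ (-σ) * 2 ^ σ := by rw [hhalfpow, neg_neg]
  have hhalf2 : (t/2) ^ (-σ+1) = t ^ (-σ+1) * 2 ^ (σ-1) := by
    rw [hhalfpow, show -(-σ+1) = σ-1 from by ring]
  have htσ : (0:ℝ) ≤ t ^ (-σ) := rpow_nonneg ht0.le _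
  by_cases hγ1 : γ < 1
  · rw [if_pos hγ1]
    have hE : (∫ s in (0:ℝ)..(t/2), (1 + s) ^ (-γ)) ≤ t ^ (-γ+1) / (-γ+1) := by
      rw [hshift, integral_rpow (Or.inl (by linarith : (-1:ℝ) < -γ)), Real.one_rpow]
      have hnum : (1 + t/2) ^ (-γ+1) ≤ t ^ (-γ+1) :=
        rpow_le_rpow (by linarith) (by linarith) (by linarith)
      exact (div_le_div_iff_of_pos_right (by linarith)).2 (by linarith)
    have hrp1 : t ^ (-σ) * t ^ (-γ+1) = t ^ (-σ+1-γ) := by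
      rw [← Real.rpow_add ht0]; congr 1; ring
    have hrp2 : t ^ (-γ) * t ^ (-σ+1) = t ^ (-σ+1-γ) := by
      rw [← Real.rpow_add ht0]; congr 1; ring
    calc (∫ s in Ioo (0:ℝ) t, h s)
        ≤ (t/2) ^ (-σ) * (∫ s in (0:ℝ)..(t/2), (1 + s) ^ (-γ))
          + K * t ^ (-γ) * ((t/2) ^ (-σ+1) / (-σ+1)) := hJle
      _ ≤ (t/2) ^ (-σ) * (t ^ (-γ+1) / (-γ+1))
          + K * t ^ (-γ) * ((t/2) ^ (-σ+1) / (-σ+1)) := by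
          have := mul_le_mul_of_nonneg_left hE (rpow_nonneg ht2.le (-σ))
          linarith
      _ = (2 ^ σ / (-γ+1)) * (t ^ (-σ) * t ^ (-γ+1))
          + (K * 2 ^ (σ-1) / (-σ+1)) * (t ^ (-γ) * t ^ (-σ+1)) := by
          rw [hhalf1, hhalf2]; ring
      _ = (2 ^ σ / (-γ+1) + K * 2 ^ (σ-1) / (-σ+1)) * t ^ (-σ+1-γ) := by
          rw [hrp1, hrp2]; ring
      _ ≤ (2 ^ σ * (1/|1-γ| + 1) + K * 2 ^ (σ-1) / (1-σ)) * t ^ (-σ+1-γ) := by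
          apply mul_le_mul_of_nonneg_right _ (rpow_nonneg ht0.le _)
          rw [abs_of_pos (by linarith : (0:ℝ) < 1-γ),
            show -γ+1 = 1-γ from by ring, show -σ+1 = 1-σ from by ring]
          have : 2 ^ σ * (1/(1-γ) + 1) = 2 ^ σ / (1-γ) + 2 ^ σ := by ring
          linarith
  · by_cases hγe : γ = 1
    · subst hγe
      rw [if_neg (by norm_num), if_pos rfl]
      have hK2 : K = 2 := by rw [hKdef, abs_one, Real.rpow_one]
      have hE : (∫ s in (0:ℝ)..(t/2), (1 + s) ^ (-(1:ℝ))) ≤ Real.log t := by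
        rw [hshift]
        have hiv : (∫ x in (1:ℝ)..(1+t/2), x ^ (-(1:ℝ))) = ∫ x in (1:ℝ)..(1+t/2), x⁻¹ := by
          apply intervalIntegral.integral_congr
          intro x hx
          exact Real.rpow_neg_one x
        rw [hiv, integral_inv (by
          rw [uIcc_of_le (by linarith : (1:ℝ) ≤ 1+t/2)]
          simp only [mem_Icc, not_and]
          intro hc; linarith), div_one]
        apply Real.log_le_log (by linarith) (by linarith)
      have hlog1 : 1 ≤ Real.log t := by
        rw [Real.le_log_iff_exp_le ht0]
        have := Real.exp_one_lt_d9
        linarith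
      have hrp2 : t ^ (-(1:ℝ)) * t ^ (-σ+1) = t ^ (-σ) := by
        rw [← Real.rpow_add ht0]; congr 1; ring
      have h2s : (2:ℝ) * 2 ^ (σ-1) = 2 ^ σ := by
        rw [show (2:ℝ) * 2 ^ (σ-1) = 2 ^ (1:ℝ) * 2 ^ (σ-1) from by rw [Real.rpow_one],
          ← Real.rpow_add (by norm_num)]
        congr 1; ring
      calc (∫ s in Ioo (0:ℝ) t, h s)
          ≤ (t/2) ^ (-σ) * (∫ s in (0:ℝ)..(t/2), (1 + s) ^ (-(1:ℝ)))
            + K * t ^ (-(1:ℝ)) * ((t/2) ^ (-σ+1) / (-σ+1)) := hJle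
        _ ≤ (t/2) ^ (-σ) * Real.log t + K * t ^ (-(1:ℝ)) * ((t/2) ^ (-σ+1) / (-σ+1)) := by
            have := mul_le_mul_of_nonneg_left hE (rpow_nonneg ht2.le (-σ))
            linarith
        _ = (2 ^ σ) * (t ^ (-σ) * Real.log t)
            + (2 ^ σ / (-σ+1)) * t ^ (-σ) := by
            rw [hhalf1, hhalf2, hK2, ← hrp2, ← h2s]; ring
        _ ≤ (2 ^ σ) * (t ^ (-σ) * Real.log t)
            + (2 ^ σ / (-σ+1)) * (t ^ (-σ) * Real.log t) := by
            have hc : (0:ℝ) ≤ 2 ^ σ / (-σ+1) := div_nonneg h2σpos.le (by linarith)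
            have h3 : 0 ≤ (2 ^ σ / (-σ+1) * t ^ (-σ)) * (Real.log t - 1) :=
              mul_nonneg (mul_nonneg hc htσ) (by linarith)
            nlinarith [h3]
        _ ≤ (2 ^ σ * (1/|1-(1:ℝ)| + 1) + K * 2 ^ (σ-1) / (1-σ)) * (t ^ (-σ) * Real.log t) := by
            have hX : 0 ≤ t ^ (-σ) * Real.log t := mul_nonneg htσ (by linarith)
            have hcoef : 2 ^ σ + 2 ^ σ / (-σ+1)
                ≤ 2 ^ σ * (1/|1-(1:ℝ)| + 1) + K * 2 ^ (σ-1) / (1-σ) := by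
              rw [hK2, show (1:ℝ)-1 = 0 from by norm_num, abs_zero, div_zero, h2s,
                show -σ+1 = 1-σ from by ring]
              apply le_of_eq; ring
            calc 2 ^ σ * (t ^ (-σ) * Real.log t) + 2 ^ σ / (-σ+1) * (t ^ (-σ) * Real.log t)
                = (2 ^ σ + 2 ^ σ / (-σ+1)) * (t ^ (-σ) * Real.log t) := by ring
              _ ≤ _ := mul_le_mul_of_nonneg_right hcoef hX
    · have hγ : 1 < γ := lt_of_le_of_ne (not_lt.1 hγ1) (Ne.symm hγe)
      rw [if_neg hγ1, if_neg hγe]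
      have hE : (∫ s in (0:ℝ)..(t/2), (1 + s) ^ (-γ)) ≤ 1 / (γ-1) := by
        rw [hshift, integral_rpow (Or.inr ⟨by intro hc; apply hγe; linarith,
          by rw [uIcc_of_le (by linarith : (1:ℝ) ≤ 1+t/2)]
             simp only [mem_Icc, not_and]; intro hc; linarith⟩), Real.one_rpow]
        have : ((1 + t/2) ^ (-γ+1) - 1) / (-γ+1) = (1 - (1 + t/2) ^ (-γ+1)) / (γ-1) := by
          rw [div_eq_div_iff (by linarith) (by linarith)]; ring
        rw [this]
        exact (div_le_div_iff_of_pos_right (by linarith)).2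
          (by linarith [rpow_nonneg (by linarith : (0:ℝ) ≤ 1+t/2) (-γ+1)])
      have hrp2 : t ^ (-γ) * t ^ (-σ+1) = t ^ (-σ) * t ^ (-γ+1) := by
        rw [← Real.rpow_add ht0, ← Real.rpow_add ht0]; congr 1; ring
      have hsm : t ^ (-γ+1) ≤ 1 :=
        rpow_le_one_of_one_le_of_nonpos (by linarith) (by linarith)
      calc (∫ s in Ioo (0:ℝ) t, h s)
          ≤ (t/2) ^ (-σ) * (∫ s in (0:ℝ)..(t/2), (1 + s) ^ (-γ))
            + K * t ^ (-γ) * ((t/2) ^ (-σ+1) / (-σ+1)) := hJle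
        _ ≤ (t/2) ^ (-σ) * (1/(γ-1)) + K * t ^ (-γ) * ((t/2) ^ (-σ+1) / (-σ+1)) := by
            have := mul_le_mul_of_nonneg_left hE (rpow_nonneg ht2.le (-σ))
            linarith
        _ = (2 ^ σ * (1/(γ-1))) * t ^ (-σ)
            + (K * 2 ^ (σ-1) / (-σ+1)) * (t ^ (-σ) * t ^ (-γ+1)) := by
            rw [hhalf1, hhalf2, ← hrp2]; ring
        _ ≤ (2 ^ σ * (1/(γ-1))) * t ^ (-σ)
            + (K * 2 ^ (σ-1) / (-σ+1)) * (t ^ (-σ) * 1) := by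
            have hc : (0:ℝ) ≤ K * 2 ^ (σ-1) / (-σ+1) :=
              div_nonneg (mul_nonneg hKpos.le (rpow_nonneg (by norm_num) _)) (by linarith)
            have h4 := mul_le_mul_of_nonneg_left (mul_le_mul_of_nonneg_left hsm htσ) hc
            linarith
        _ ≤ (2 ^ σ * (1/|1-γ| + 1) + K * 2 ^ (σ-1) / (1-σ)) * t ^ (-σ) := by
            have hcoef : 2 ^ σ * (1/(γ-1)) + K * 2 ^ (σ-1) / (-σ+1)
                ≤ 2 ^ σ * (1/|1-γ| + 1) + K * 2 ^ (σ-1) / (1-σ) := by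
              rw [abs_of_neg (by linarith : (1:ℝ)-γ < 0),
                show -((1:ℝ)-γ) = γ-1 from by ring, show -σ+1 = 1-σ from by ring]
              have hexp : 2 ^ σ * (1/(γ-1) + 1) = 2 ^ σ * (1/(γ-1)) + 2 ^ σ := by ring
              linarith
            calc (2 ^ σ * (1/(γ-1))) * t ^ (-σ)
                  + (K * 2 ^ (σ-1) / (-σ+1)) * (t ^ (-σ) * 1)
                = (2 ^ σ * (1/(γ-1)) + K * 2 ^ (σ-1) / (-σ+1)) * t ^ (-σ) := by ring
              _ ≤ _ := mul_le_mul_of_nonneg_right hcoef htσ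

lemma aux_pointwise (N : ℕ) (hN : 1 ≤ N) (α β : ℝ) (G : Euc N → ℝ) (C₁ : ℝ) (hC₁ : 0 < C₁)
    (hGB : ∀ ξ : Euc N, ξ ≠ 0 → G ξ ≤ C₁) (hGpos : ∀ ξ : Euc N, ξ ≠ 0 → 0 < G ξ)
    (γ : ℝ) (f : Euc N → ℝ → ℝ) (hfm : Measurable (Function.uncurry f))
    (C₀ : ℝ) (hC₀ : 0 < C₀)
    (hf1 : ∀ t : ℝ, 0 < t →
      (∫⁻ y, ENNReal.ofReal |f y t|) ≤ ENNReal.ofReal (C₀ * (1 + t) ^ (-γ)))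
    (t : ℝ) (ht : 0 < t) (hσ1 : sigmaStar N α β < 1) (x : Euc N) :
    |mildSol N α β G f x t| ≤ (C₁ * C₀) *
      ∫ s in Ioo (0:ℝ) t, (t - s) ^ (-(sigmaStar N α β)) * (1 + s) ^ (-γ) := by
  haveI : Nonempty (Fin N) := ⟨⟨0, hN⟩⟩
  set σ := sigmaStar N α β with hσ
  set θ := thetaV α β with hθ
  rw [mildSol, ← Real.norm_eq_abs]
  have hJint : IntegrableOn (fun s => (C₁ * C₀) * ((t - s) ^ (-σ) * (1 + s) ^ (-γ)))
      (Ioo 0 t) volume :=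
    ((aux_integrableOn σ γ t hσ1 ht).mono_set Ioo_subset_Ioc_self).const_mul _
  have key : ∀ s ∈ Ioo (0:ℝ) t,
      ‖∫ y, kernelY N α β G (x - y) (t - s) * f y s‖
        ≤ (C₁ * C₀) * ((t - s) ^ (-σ) * (1 + s) ^ (-γ)) := by
    intro s hs
    obtain ⟨hs0, hst⟩ := hs
    have hts : (0:ℝ) < t - s := by linarith
    -- integrability of f(·,s)
    have hfsm : Measurable (fun y => f y s) :=
      hfm.comp (measurable_id.prodMk measurable_const)
    have hfsint : Integrable (fun y => f y s) volume := by
      refine ⟨hfsm.aestronglyMeasurable, ?_⟩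
      rw [HasFiniteIntegral]
      have heq : (∫⁻ y, ‖f y s‖ₑ) = ∫⁻ y, ENNReal.ofReal |f y s| := by
        apply lintegral_congr
        intro y
        rw [← Real.norm_eq_abs, ofReal_norm_eq_enorm]
      rw [heq]
      exact lt_of_le_of_lt (hf1 s hs0) ENNReal.ofReal_lt_top
    have hbd : (∫ y, |f y s|) ≤ C₀ * (1 + s) ^ (-γ) := by
      rw [integral_eq_lintegral_of_nonneg_ae
        (Filter.Eventually.of_forall (fun y => abs_nonneg _))
        (hfsm.abs.aestronglyMeasurable)]
      exact ENNReal.toReal_le_of_le_ofReal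
        (mul_nonneg hC₀.le (rpow_nonneg (by linarith) _)) (hf1 s hs0)
    have hgin : Integrable (fun y => (C₁ * (t - s) ^ (-σ)) * |f y s|) volume :=
      hfsint.abs.const_mul _
    have hae : ∀ᵐ y : Euc N, ‖kernelY N α β G (x - y) (t - s) * f y s‖
        ≤ (C₁ * (t - s) ^ (-σ)) * |f y s| := by
      have hxae : ∀ᵐ y : Euc N, y ≠ x := by
        rw [ae_iff]
        have : {y : Euc N | ¬y ≠ x} = {x} := by ext y; simp
        rw [this]
        exact measure_singleton x
      filter_upwards [hxae] with y hy
      have hxy : x - y ≠ 0 := sub_ne_zero.2 (Ne.symm hy)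
      have hξ : ((t - s) ^ (-θ)) • (x - y) ≠ 0 :=
        smul_ne_zero (ne_of_gt (rpow_pos_of_pos hts _)) hxy
      rw [Real.norm_eq_abs, abs_mul, kernelY]
      apply mul_le_mul_of_nonneg_right _ (abs_nonneg _)
      rw [abs_mul, abs_of_nonneg (rpow_nonneg hts.le _),
        abs_of_nonneg (hGpos _ hξ).le, mul_comm C₁ _]
      exact mul_le_mul_of_nonneg_left (hGB _ hξ) (rpow_nonneg hts.le _)
    calc ‖∫ y, kernelY N α β G (x - y) (t - s) * f y s‖
        ≤ ∫ y, (C₁ * (t - s) ^ (-σ)) * |f y s| := norm_integral_le_of_norm_le hgin hae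
      _ = (C₁ * (t - s) ^ (-σ)) * ∫ y, |f y s| := MeasureTheory.integral_const_mul _ _
      _ ≤ (C₁ * (t - s) ^ (-σ)) * (C₀ * (1 + s) ^ (-γ)) :=
          mul_le_mul_of_nonneg_left hbd
            (mul_nonneg hC₁.le (rpow_nonneg hts.le _))
      _ = (C₁ * C₀) * ((t - s) ^ (-σ) * (1 + s) ^ (-γ)) := by ring
  calc ‖∫ s in Ioo (0:ℝ) t, ∫ y, kernelY N α β G (x - y) (t - s) * f y s‖
      ≤ ∫ s in Ioo (0:ℝ) t, (C₁ * C₀) * ((t - s) ^ (-σ) * (1 + s) ^ (-γ)) := by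
        apply norm_integral_le_of_norm_le hJint
        rw [ae_restrict_iff' measurableSet_Ioo]
        exact Filter.Eventually.of_forall key
    _ = (C₁ * C₀) * ∫ s in Ioo (0:ℝ) t, (t - s) ^ (-σ) * (1 + s) ^ (-γ) :=
        MeasureTheory.integral_const_mul _ _

set_option maxHeartbeats 1000000 in
theorem intermediate_upper_N_lt_2beta
    (N : ℕ) (hN : 1 ≤ N) (α β : ℝ) (hα0 : 0 < α) (hα1 : α < 1)
    (hβ0 : 0 < β) (hβ1 : β ≤ 1) (hNβ : (N : ℝ) ≤ 4 * β)
    (G : Euc N → ℝ) (C₁ : ℝ) (hC₁ : 0 < C₁)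
    (hGcont : ContinuousOn G {(0 : Euc N)}ᶜ)
    (hGpos : ∀ ξ : Euc N, ξ ≠ 0 → 0 < G ξ)
    (hGin₁ : (N : ℝ) < 4 * β → ∀ ξ : Euc N, ξ ≠ 0 → ‖ξ‖ ≤ 1 → G ξ ≤ C₁)
    (hGin₂ : (N : ℝ) = 4 * β → ∀ ξ : Euc N, ξ ≠ 0 → ‖ξ‖ ≤ 1 →
      G ξ ≤ C₁ * (1 + |Real.log ‖ξ‖|))
    (hGout : ∀ ξ : Euc N, 1 ≤ ‖ξ‖ → G ξ ≤ C₁ * ‖ξ‖ ^ (-((N : ℝ) + 2 * β)))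
    (γ : ℝ) (f : Euc N → ℝ → ℝ) (hfm : Measurable (Function.uncurry f))
    (C₀ : ℝ) (hC₀ : 0 < C₀)
    (hf1 : ∀ t : ℝ, 0 < t →
      (∫⁻ y, ENNReal.ofReal |f y t|) ≤ ENNReal.ofReal (C₀ * (1 + t) ^ (-γ)))
    (p : ℝ≥0∞) (hp1 : 1 ≤ p)
    (g : ℝ → ℝ) (hgm : Measurable g) (hgpos : ∀ t : ℝ, 0 < t → 0 < g t)
    (hgtop : Filter.Tendsto g Filter.atTop Filter.atTop)
    (hgo : Filter.Tendsto (fun t => g t / t ^ thetaV α β) Filter.atTop (nhds 0))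
    (h2β : (N : ℝ) < 2 * β) :
    ∀ ν μ : ℝ, 0 < ν → ν < μ → ∃ C T : ℝ, 0 < C ∧ 2 ≤ T ∧ ∀ t : ℝ, T ≤ t →
      (γ < 1 → eLpNorm (fun x => mildSol N α β G f x t) p
          (volume.restrict {x : Euc N | ν * g t < ‖x‖ ∧ ‖x‖ < μ * g t}) ≤ ENNReal.ofReal (C * g t ^ ((N : ℝ) / p.toReal) * (t ^ (-sigmaStar N α β + 1 - γ)))) ∧
      (γ = 1 → eLpNorm (fun x => mildSol N α β G f x t) p
          (volume.restrict {x : Euc N | ν * g t < ‖x‖ ∧ ‖x‖ < μ * g t}) ≤ ENNReal.ofReal (C * g t ^ ((N : ℝ) / p.toReal) * (t ^ (-sigmaStar N α β) * Real.log t))) ∧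
      (1 < γ → eLpNorm (fun x => mildSol N α β G f x t) p
          (volume.restrict {x : Euc N | ν * g t < ‖x‖ ∧ ‖x‖ < μ * g t}) ≤ ENNReal.ofReal (C * g t ^ ((N : ℝ) / p.toReal) * (t ^ (-sigmaStar N α β)))) := by
  haveI : Nonempty (Fin N) := ⟨⟨0, hN⟩⟩
  haveI : Nontrivial (Euc N) := inferInstance
  intro ν μv hν hνμ
  have hμ0 : 0 < μv := lt_trans hν hνμ
  set σ := sigmaStar N α β with hσdef
  -- basic exponent facts
  have h2b : (0:ℝ) < 2 * β := by linarith
  have hθpos : 0 < thetaV α β := div_pos hα0 h2b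
  have hNθ : (N:ℝ) * thetaV α β < α := by
    rw [thetaV, mul_div_assoc']
    rw [div_lt_iff₀ h2b]
    have hN0 : (0:ℝ) < N := by exact_mod_cast hN
    nlinarith
  have hσ0 : 0 < σ := by
    rw [hσdef, sigmaStar]
    have : 0 ≤ (N:ℝ) * thetaV α β := mul_nonneg (Nat.cast_nonneg N) hθpos.le
    linarith
  have hσ1 : σ < 1 := by
    rw [hσdef, sigmaStar]; linarith
  -- uniform bound on G
  have hGB : ∀ ξ : Euc N, ξ ≠ 0 → G ξ ≤ C₁ := by
    intro ξ hξ
    rcases le_or_gt ‖ξ‖ 1 with hle | hgt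
    · exact hGin₁ (by linarith) ξ hξ hle
    · calc G ξ ≤ C₁ * ‖ξ‖ ^ (-((N:ℝ) + 2*β)) := hGout ξ hgt.le
        _ ≤ C₁ * 1 := by
            apply mul_le_mul_of_nonneg_left _ hC₁.le
            apply rpow_le_one_of_one_le_of_nonpos hgt.le
            have : (0:ℝ) ≤ (N:ℝ) := Nat.cast_nonneg N
            linarith
        _ = C₁ := mul_one _
  -- geometry constants
  set q := p.toReal⁻¹ with hqdef
  have hq0 : 0 ≤ q := inv_nonneg.2 ENNReal.toReal_nonneg
  set B := volume (Metric.ball (0 : Euc N) 1) with hBdef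
  have hB0 : B ≠ 0 := (Metric.measure_ball_pos volume 0 one_pos).ne'
  have hBt : B ≠ ⊤ := measure_ball_lt_top.ne
  have hBqt : B ^ q ≠ ⊤ := ENNReal.rpow_ne_top_of_nonneg hq0 hBt
  have hBq0 : B ^ q ≠ 0 := (ENNReal.rpow_pos (pos_iff_ne_zero.2 hB0) hBt).ne'
  set D := (B ^ q).toReal with hDdef
  have hD0 : 0 < D := ENNReal.toReal_pos hBq0 hBqt
  have hBq : B ^ q = ENNReal.ofReal D := (ENNReal.ofReal_toReal hBqt).symm
  -- J bound
  obtain ⟨A, hA0, hJA⟩ := aux_J_bound σ γ hσ0 hσ1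
  refine ⟨μv ^ ((N:ℝ) * q) * D * (C₁ * C₀ * A), 3,
    mul_pos (mul_pos (rpow_pos_of_pos hμ0 _) hD0)
      (mul_pos (mul_pos hC₁ hC₀) hA0), by norm_num, fun t ht => ?_⟩
  have ht0 : (0:ℝ) < t := by linarith
  have hg : 0 < g t := hgpos t ht0
  set C : ℝ := μv ^ ((N:ℝ) * q) * D * (C₁ * C₀ * A) with hCdef
  set S := {x : Euc N | ν * g t < ‖x‖ ∧ ‖x‖ < μv * g t} with hSdef
  set Jt := ∫ s in Ioo (0:ℝ) t, (t - s) ^ (-σ) * (1 + s) ^ (-γ) with hJtdef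
  set Rt : ℝ := if γ < 1 then t ^ (-σ + 1 - γ) else if γ = 1 then t ^ (-σ) * Real.log t
    else t ^ (-σ) with hRtdef
  have hJle : Jt ≤ A * Rt := hJA t ht
  have hvol : volume S ≤ ENNReal.ofReal ((μv * g t) ^ N) * B := by
    have hSsub : S ⊆ Metric.ball (0 : Euc N) (μv * g t) := by
      intro x hx
      rw [mem_ball_zero_iff]
      exact hx.2
    calc volume S ≤ volume (Metric.ball (0 : Euc N) (μv * g t)) := measure_mono hSsub
      _ = ENNReal.ofReal ((μv * g t) ^ (Module.finrank ℝ (Euc N))) * volume (Metric.ball (0:Euc N) 1) :=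
          Measure.addHaar_ball volume 0 (mul_pos hμ0 hg).le
      _ = ENNReal.ofReal ((μv * g t) ^ N) * B := by rw [finrank_euclideanSpace_fin]
  set M : ℝ := (C₁ * C₀) * Jt with hMdef
  have hptw : ∀ᵐ x ∂(volume.restrict S), ‖mildSol N α β G f x t‖ ≤ M := by
    refine Filter.Eventually.of_forall (fun x => ?_)
    rw [Real.norm_eq_abs]
    exact aux_pointwise N hN α β G C₁ hC₁ hGB hGpos γ f hfm C₀ hC₀ hf1 t ht0 hσ1 x
  have h1 : eLpNorm (fun x => mildSol N α β G f x t) p (volume.restrict S)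
      ≤ (volume S) ^ q * ENNReal.ofReal M := by
    have := eLpNorm_le_of_ae_bound (μ := volume.restrict S) (p := p) hptw
    rwa [Measure.restrict_apply_univ] at this
  set r : ℝ := (μv * g t) ^ N with hrdef
  have hr0 : 0 < r := pow_pos (mul_pos hμ0 hg) N
  have hrq : r ^ q = μv ^ ((N:ℝ) * q) * (g t) ^ ((N:ℝ) * q) := by
    rw [hrdef, ← Real.rpow_natCast (μv * g t) N, ← Real.rpow_mul (mul_pos hμ0 hg).le,
      Real.mul_rpow hμ0.le hg.le]
  have hJ0 : 0 ≤ Jt := by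
    rw [hJtdef]
    apply setIntegral_nonneg measurableSet_Ioo
    intro s hs
    exact mul_nonneg (rpow_nonneg (by linarith [hs.2]) _) (rpow_nonneg (by linarith [hs.1]) _)
  have key : eLpNorm (fun x => mildSol N α β G f x t) p (volume.restrict S)
      ≤ ENNReal.ofReal (C * g t ^ ((N:ℝ) / p.toReal) * Rt) := by
    calc eLpNorm (fun x => mildSol N α β G f x t) p (volume.restrict S)
        ≤ (volume S) ^ q * ENNReal.ofReal M := h1
      _ ≤ (ENNReal.ofReal r * B) ^ q * ENNReal.ofReal M :=
          mul_le_mul_left (ENNReal.rpow_le_rpow hvol hq0) _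
      _ = ENNReal.ofReal (r ^ q) * (ENNReal.ofReal D * ENNReal.ofReal M) := by
          rw [ENNReal.mul_rpow_of_nonneg _ _ hq0, ENNReal.ofReal_rpow_of_pos hr0, hBq,
            mul_assoc]
      _ = ENNReal.ofReal (r ^ q * (D * M)) := by
          rw [← ENNReal.ofReal_mul hD0.le, ← ENNReal.ofReal_mul (rpow_nonneg hr0.le _)]
      _ ≤ ENNReal.ofReal (C * g t ^ ((N:ℝ) / p.toReal) * Rt) := by
          apply ENNReal.ofReal_le_ofReal
          rw [hrq, div_eq_mul_inv, ← hqdef]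
          have hP0 : (0:ℝ) ≤ μv ^ ((N:ℝ) * q) * (g t) ^ ((N:ℝ) * q) * D * (C₁ * C₀) :=
            mul_nonneg (mul_nonneg (mul_nonneg (rpow_nonneg hμ0.le _)
              (rpow_nonneg hg.le _)) hD0.le) (mul_nonneg hC₁.le hC₀.le)
          calc μv ^ ((N:ℝ) * q) * (g t) ^ ((N:ℝ) * q) * (D * M)
              = (μv ^ ((N:ℝ) * q) * (g t) ^ ((N:ℝ) * q) * D * (C₁ * C₀)) * Jt := by
                rw [hMdef]; ring
            _ ≤ (μv ^ ((N:ℝ) * q) * (g t) ^ ((N:ℝ) * q) * D * (C₁ * C₀)) * (A * Rt) :=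
                mul_le_mul_of_nonneg_left hJle hP0
            _ = C * (g t) ^ ((N:ℝ) * q) * Rt := by rw [hCdef]; ring
  refine ⟨fun hγ => ?_, fun hγ => ?_, fun hγ => ?_⟩
  · rwa [hRtdef, if_pos hγ] at key
  · rw [hRtdef, if_neg (by rw [hγ]; exact lt_irrefl 1), if_pos hγ] at key
    exact key
  · rw [hRtdef, if_neg (not_lt.2 hγ.le), if_neg (by linarith)] at key
    exact key
end
end
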